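/- arXiv:2304.09624 — 8 statements merged into one kernel-verified Lean document; each statement's English description precedes it below -/
import Mathlib

section
/- Let (E, d) be a Polish metric space with d ≤ 1 (or replace d by min(d,1)). Let x^n (n ∈ ℕ) and x be Borel measurable paths from [0,∞) to E. Then the associated pseudo-path measures μ_{x^n} converge weakly to μ_x as probability measures on E × [0,∞) if and only if ∫_0^∞ min(d(x^n(t), x(t)), 1) e^{-t} dt → 0 as n → ∞. -/
open MeasureTheory Topology Filter
open scoped ENNReal NNReal

/-- The exponential measure `e^{-t} dt` on `[0,∞)`. -/
noncomputable def expMeasure : Measure ℝ :=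
  (volume.restrict (Set.Ici (0 : ℝ))).withDensity fun t => ENNReal.ofReal (Real.exp (-t))

/-- The pseudo-path measure associated with a measurable path `x : ℝ → E`. -/
noncomputable def pseudoPath {E : Type*} [MeasurableSpace E] (x : ℝ → E) :
    Measure (E × ℝ) :=
  Measure.map (fun t => (x t, t)) expMeasure

lemma expMeasure_integrableOn : IntegrableOn (fun t => Real.exp (-t)) (Set.Ici (0:ℝ)) := by
  rw [integrableOn_Ici_iff_integrableOn_Ioi]
  simpa using exp_neg_integrableOn_Ioi 0 one_pos

instance : IsFiniteMeasure expMeasure := by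
  constructor
  rw [expMeasure, withDensity_apply _ MeasurableSet.univ, setLIntegral_univ,
    ← ofReal_integral_eq_lintegral_ofReal expMeasure_integrableOn
      (Filter.Eventually.of_forall fun t => (Real.exp_pos _).le)]
  exact ENNReal.ofReal_lt_top

lemma min_dist_triangle {X : Type*} [PseudoMetricSpace X] (a b c : X) :
    min (dist a c) 1 ≤ min (dist a b) 1 + min (dist b c) 1 := by
  have h1 : (0:ℝ) ≤ min (dist a b) 1 := le_min dist_nonneg zero_le_one
  have h2 : (0:ℝ) ≤ min (dist b c) 1 := le_min dist_nonneg zero_le_one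
  rcases le_or_gt 1 (dist a b) with h | h
  · calc min (dist a c) 1 ≤ 1 := min_le_right _ _
      _ = min (dist a b) 1 + 0 := by rw [min_eq_right h, add_zero]
      _ ≤ _ := by gcongr
  rcases le_or_gt 1 (dist b c) with h' | h'
  · calc min (dist a c) 1 ≤ 1 := min_le_right _ _
      _ = 0 + min (dist b c) 1 := by rw [min_eq_right h', zero_add]
      _ ≤ _ := by gcongr
  · rw [min_eq_left h.le, min_eq_left h'.le]
    exact le_trans (min_le_left _ _) (dist_triangle a b c)

section helpers

variable {E : Type*} [MetricSpace E] [PolishSpace E] [MeasurableSpace E] [BorelSpace E]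

set_option linter.unusedSectionVars false

lemma integrable_bdd {h : ℝ → ℝ} (hm : AEStronglyMeasurable h expMeasure) (C : ℝ)
    (hb : ∀ t, ‖h t‖ ≤ C) : Integrable h expMeasure :=
  ⟨hm, HasFiniteIntegral.of_bounded (Filter.Eventually.of_forall hb)⟩

lemma integral_pseudoPath (x : ℝ → E) (hx : Measurable x) (g : E × ℝ → ℝ)
    (hg : Continuous g) :
    ∫ p, g p ∂(pseudoPath x) = ∫ t, g (x t, t) ∂expMeasure := by
  exact integral_map (φ := fun t => (x t, t)) (hx.prodMk measurable_id).aemeasurable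
    hg.aestronglyMeasurable

lemma meas_min_dist {x y : ℝ → E} (hx : Measurable x) (hy : Measurable y) :
    Measurable fun t => min (dist (x t) (y t)) 1 :=
  (hx.dist hy).min measurable_const

lemma integrable_min_dist {x y : ℝ → E} (hx : Measurable x) (hy : Measurable y) :
    Integrable (fun t => min (dist (x t) (y t)) 1) expMeasure :=
  integrable_bdd (meas_min_dist hx hy).aestronglyMeasurable 1 fun t => by
    rw [Real.norm_eq_abs, abs_of_nonneg (le_min dist_nonneg zero_le_one)]
    exact min_le_right _ _

lemma forward (x : ℕ → ℝ → E) (y : ℝ → E) (hx : ∀ n, Measurable (x n)) (hy : Measurable y)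
    (H : ∀ f : BoundedContinuousFunction (E × ℝ) ℝ,
        Tendsto (fun n => ∫ p, f p ∂(pseudoPath (x n))) atTop
          (𝓝 (∫ p, f p ∂(pseudoPath y)))) :
    Tendsto (fun n => ∫ t, min (dist (x n t) (y t)) 1 ∂expMeasure) atTop (𝓝 0) := by
  haveI : Nonempty E := ⟨y 0⟩
  rw [Metric.tendsto_atTop]
  intro ε hε
  set δ : ℝ := ε / 5 with hδdef
  have hδ : 0 < δ := by positivity
  -- Step 1 : approximate `y` by a simple function `s`
  set F := fun k => SimpleFunc.approxOn y hy Set.univ (y 0) (Set.mem_univ _) k with hF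
  have hFt : ∀ t : ℝ, Tendsto (fun k => ⇑(F k) t) atTop (𝓝 (y t)) := fun t =>
    SimpleFunc.tendsto_approxOn hy (Set.mem_univ _) (by simp)
  have hdct : Tendsto (fun k => ∫ t, min (dist (F k t) (y t)) 1 ∂expMeasure) atTop (𝓝 0) := by
    have h0 : (0:ℝ) = ∫ (_ : ℝ), (0:ℝ) ∂expMeasure := by simp
    rw [h0]
    apply tendsto_integral_of_dominated_convergence (fun _ => (1:ℝ))
    · exact fun k => (meas_min_dist (F k).measurable hy).aestronglyMeasurable
    · exact integrable_const _
    · refine fun k => Filter.Eventually.of_forall fun t => ?_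
      rw [Real.norm_eq_abs, abs_of_nonneg (le_min dist_nonneg zero_le_one)]
      exact min_le_right _ _
    · refine Filter.Eventually.of_forall fun t => ?_
      have h1 : Tendsto (fun k => dist (F k t) (y t)) atTop (𝓝 0) := by
        simpa using (hFt t).dist (tendsto_const_nhds (x := y t))
      have h2 := h1.min (tendsto_const_nhds (x := (1:ℝ)))
      simpa using h2
  obtain ⟨k, hk⟩ := (hdct.eventually (gt_mem_nhds hδ)).exists
  set s := F k with hs
  -- Step 2 : Kuratowski embedding
  set ι := kuratowskiEmbedding E with hι
  have ιiso : Isometry ι := kuratowskiEmbedding.isometry E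
  -- Step 3 : continuous approximation of `ι ∘ s`
  have hιs_int : Integrable (fun t => ι (s t)) expMeasure := by
    have h := SimpleFunc.integrable_iff.2
      (fun z (_ : z ≠ 0) => (measure_lt_top expMeasure _ : expMeasure ((s.map ι) ⁻¹' {z}) < ∞))
    simpa [SimpleFunc.coe_map, Function.comp_def] using h
  obtain ⟨z, hz, hzint⟩ := hιs_int.exists_boundedContinuous_integral_sub_le hδ
  -- Step 4 : the test function
  set g : E × ℝ → ℝ := fun p => min (dist (ι p.1) (z p.2)) 1 with hgdef
  have hgc : Continuous g :=
    ((ιiso.continuous.comp continuous_fst).dist (z.continuous.comp continuous_snd)).min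
      continuous_const
  have hg0 : ∀ p, 0 ≤ g p := fun p => le_min dist_nonneg zero_le_one
  have hg1 : ∀ p, g p ≤ 1 := fun p => min_le_right _ _
  set G : BoundedContinuousFunction (E × ℝ) ℝ :=
    BoundedContinuousFunction.mkOfBound ⟨g, hgc⟩ 1 (fun p q => by
      rw [Real.dist_eq, abs_sub_le_iff]
      constructor <;> simp only [ContinuousMap.coe_mk] <;>
        nlinarith [hg0 p, hg1 p, hg0 q, hg1 q]) with hG
  have hGg : ⇑G = g := rfl
  have int_g : ∀ (w : ℝ → E), Measurable w → Integrable (fun t => g (w t, t)) expMeasure := by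
    intro w hw
    refine integrable_bdd (hgc.measurable.comp (hw.prodMk measurable_id)).aestronglyMeasurable
      1 fun t => ?_
    rw [Real.norm_eq_abs, abs_of_nonneg (hg0 _)]
    exact hg1 _
  set b : ℕ → ℝ := fun n => ∫ t, g (x n t, t) ∂expMeasure with hbdef
  set c : ℝ := ∫ t, g (y t, t) ∂expMeasure with hcdef
  -- Step 5 : weak convergence applied to `G`
  have hb : Tendsto b atTop (𝓝 c) := by
    have h := H G
    have e1 : ∀ n, ∫ p, (G : E × ℝ → ℝ) p ∂(pseudoPath (x n)) = b n := fun n => by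
      rw [hGg]; exact integral_pseudoPath _ (hx n) g hgc
    have e2 : ∫ p, (G : E × ℝ → ℝ) p ∂(pseudoPath y) = c := by
      rw [hGg]; exact integral_pseudoPath _ hy g hgc
    simpa only [e1, e2] using h
  -- Step 6 : `c ≤ 2δ`
  have hsy : ∫ t, min (dist (s t) (y t)) 1 ∂expMeasure < δ := hk
  have hzs_int : Integrable (fun t => min (dist (ι (s t)) (z t)) 1) expMeasure :=
    int_g (⇑s) s.measurable
  have hc : c ≤ δ + δ := by
    have step : ∀ t, g (y t, t) ≤ min (dist (s t) (y t)) 1 + min (dist (ι (s t)) (z t)) 1 := by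
      intro t
      have h := min_dist_triangle (ι (y t)) (ι (s t)) (z t)
      have : dist (ι (y t)) (ι (s t)) = dist (s t) (y t) := by
        rw [ιiso.dist_eq, dist_comm]
      rw [this] at h
      exact h
    calc c ≤ ∫ t, (min (dist (s t) (y t)) 1 + min (dist (ι (s t)) (z t)) 1) ∂expMeasure :=
          integral_mono (int_g y hy) ((integrable_min_dist s.measurable hy).add hzs_int) step
      _ = (∫ t, min (dist (s t) (y t)) 1 ∂expMeasure)
          + ∫ t, min (dist (ι (s t)) (z t)) 1 ∂expMeasure :=
          integral_add (integrable_min_dist s.measurable hy) hzs_int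
      _ ≤ δ + δ := by
          refine add_le_add hsy.le ?_
          calc ∫ t, min (dist (ι (s t)) (z t)) 1 ∂expMeasure
              ≤ ∫ t, ‖ι (s t) - z t‖ ∂expMeasure := by
                refine integral_mono hzs_int (hιs_int.sub hzint).norm fun t => ?_
                rw [← dist_eq_norm]
                exact min_le_left _ _
            _ ≤ δ := hz
  -- Step 7 : `a n ≤ b n + c`
  have han : ∀ n, (∫ t, min (dist (x n t) (y t)) 1 ∂expMeasure) ≤ b n + c := by
    intro n
    have step : ∀ t, min (dist (x n t) (y t)) 1 ≤ g (x n t, t) + g (y t, t) := by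
      intro t
      have h := min_dist_triangle (ι (x n t)) (z t) (ι (y t))
      rw [ιiso.dist_eq] at h
      have : dist (z t) (ι (y t)) = dist (ι (y t)) (z t) := dist_comm _ _
      rw [this] at h
      exact h
    calc (∫ t, min (dist (x n t) (y t)) 1 ∂expMeasure)
        ≤ ∫ t, (g (x n t, t) + g (y t, t)) ∂expMeasure :=
          integral_mono (integrable_min_dist (hx n) hy)
            ((int_g _ (hx n)).add (int_g _ hy)) step
      _ = b n + c := integral_add (int_g _ (hx n)) (int_g _ hy)
  -- Conclusion
  have hev : ∀ᶠ n in atTop, b n < c + δ := hb.eventually (gt_mem_nhds (lt_add_of_pos_right c hδ))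
  obtain ⟨N, hN⟩ := eventually_atTop.1 hev
  refine ⟨N, fun n hn => ?_⟩
  have hnonneg : 0 ≤ ∫ t, min (dist (x n t) (y t)) 1 ∂expMeasure :=
    integral_nonneg fun t => le_min dist_nonneg zero_le_one
  rw [Real.dist_eq, sub_zero, abs_of_nonneg hnonneg]
  have := han n
  have h2 := hN n hn
  have : (∫ t, min (dist (x n t) (y t)) 1 ∂expMeasure) < (c + δ) + c := lt_of_le_of_lt this
    (by linarith)
  calc (∫ t, min (dist (x n t) (y t)) 1 ∂expMeasure) < (c + δ) + c := this
    _ ≤ ((δ + δ) + δ) + (δ + δ) := by linarith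
    _ = ε := by rw [hδdef]; ring

end helpers


section backward

variable {E : Type*} [MetricSpace E] [PolishSpace E] [MeasurableSpace E] [BorelSpace E]

set_option linter.unusedSectionVars false

lemma backward (x : ℕ → ℝ → E) (y : ℝ → E) (hx : ∀ n, Measurable (x n)) (hy : Measurable y)
    (ha : Tendsto (fun n => ∫ t, min (dist (x n t) (y t)) 1 ∂expMeasure) atTop (𝓝 0))
    (G : BoundedContinuousFunction (E × ℝ) ℝ) :
    Tendsto (fun n => ∫ p, G p ∂(pseudoPath (x n))) atTop (𝓝 (∫ p, G p ∂(pseudoPath y))) := by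
  set a : ℕ → ℝ := fun n => ∫ t, min (dist (x n t) (y t)) 1 ∂expMeasure with ha_def
  have hinm : TendstoInMeasure expMeasure x atTop y := by
    refine tendstoInMeasure_iff_dist.2 fun ε hε => ?_
    set m : ℝ := min ε 1 with hm_def
    have hm : 0 < m := lt_min hε one_pos
    have hne : ENNReal.ofReal m ≠ 0 := (ENNReal.ofReal_pos.2 hm).ne'
    have key : ∀ n, expMeasure {t | ε ≤ dist (x n t) (y t)}
        ≤ (ENNReal.ofReal m)⁻¹ * ENNReal.ofReal (a n) := by
      intro n
      have hsub : {t | ε ≤ dist (x n t) (y t)}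
          ⊆ {t | ENNReal.ofReal m ≤ ENNReal.ofReal (min (dist (x n t) (y t)) 1)} := fun t ht =>
        ENNReal.ofReal_le_ofReal (le_min (le_trans (min_le_left _ _) ht) (min_le_right _ _))
      calc expMeasure {t | ε ≤ dist (x n t) (y t)}
          ≤ (ENNReal.ofReal m)⁻¹ * (ENNReal.ofReal m *
            expMeasure {t | ENNReal.ofReal m ≤ ENNReal.ofReal (min (dist (x n t) (y t)) 1)}) := by
            rw [← mul_assoc, ENNReal.inv_mul_cancel hne ENNReal.ofReal_ne_top, one_mul]
            exact measure_mono hsub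
        _ ≤ (ENNReal.ofReal m)⁻¹ *
            ∫⁻ t, ENNReal.ofReal (min (dist (x n t) (y t)) 1) ∂expMeasure := by
            gcongr
            exact mul_meas_ge_le_lintegral₀
              ((meas_min_dist (hx n) hy).ennreal_ofReal).aemeasurable _
        _ = (ENNReal.ofReal m)⁻¹ * ENNReal.ofReal (a n) := by
            rw [← ofReal_integral_eq_lintegral_ofReal (integrable_min_dist (hx n) hy)
              (Filter.Eventually.of_forall fun t => le_min dist_nonneg zero_le_one)]
    have hlim : Tendsto (fun n => (ENNReal.ofReal m)⁻¹ * ENNReal.ofReal (a n)) atTop (𝓝 0) := by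
      have h0 : Tendsto (fun n => ENNReal.ofReal (a n)) atTop (𝓝 0) := by
        rw [← ENNReal.ofReal_zero]
        exact (ENNReal.continuous_ofReal.tendsto 0).comp ha
      have := ENNReal.Tendsto.const_mul h0 (Or.inr (ENNReal.inv_ne_top.2 hne))
      simpa using this
    exact tendsto_of_tendsto_of_tendsto_of_le_of_le tendsto_const_nhds hlim
      (fun n => bot_le) key
  apply tendsto_of_subseq_tendsto
  intro ns hns
  have hinm2 : TendstoInMeasure expMeasure (fun i => x (ns i)) atTop y :=
    fun ε hε => (hinm ε hε).comp hns
  obtain ⟨ms, _, hae⟩ := hinm2.exists_seq_tendsto_ae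
  refine ⟨ms, ?_⟩
  have h1 : ∀ k, ∫ p, (G : E × ℝ → ℝ) p ∂(pseudoPath (x k)) = ∫ t, G (x k t, t) ∂expMeasure :=
    fun k => integral_pseudoPath _ (hx k) _ G.continuous
  have h2 : ∫ p, (G : E × ℝ → ℝ) p ∂(pseudoPath y) = ∫ t, G (y t, t) ∂expMeasure :=
    integral_pseudoPath _ hy _ G.continuous
  simp only [h1, h2]
  apply tendsto_integral_of_dominated_convergence (fun _ => ‖G‖)
  · exact fun k =>
      (G.continuous.measurable.comp ((hx _).prodMk measurable_id)).aestronglyMeasurable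
  · exact integrable_const _
  · exact fun k => Filter.Eventually.of_forall fun t => G.norm_coe_le_norm _
  · filter_upwards [hae] with t ht
    exact (G.continuous.tendsto _).comp (ht.prodMk_nhds tendsto_const_nhds)

end backward

lemma integral_expMeasure (h : ℝ → ℝ) :
    ∫ t, h t ∂expMeasure = ∫ t in Set.Ici (0:ℝ), h t * Real.exp (-t) := by
  have hm : Measurable fun t => (Real.exp (-t)).toNNReal :=
    (Real.measurable_exp.comp measurable_neg).real_toNNReal
  rw [expMeasure, show (fun t => ENNReal.ofReal (Real.exp (-t)))
      = fun t => (((Real.exp (-t)).toNNReal : ℝ≥0) : ℝ≥0∞) from rfl,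
    integral_withDensity_eq_integral_smul hm]
  refine setIntegral_congr_fun measurableSet_Ici fun t _ => ?_
  simp [NNReal.smul_def, Real.coe_toNNReal _ (Real.exp_pos (-t)).le, mul_comm]

/-- Weak convergence of pseudo-path measures is equivalent to convergence in probability
(in measure) of the paths with respect to the exponential measure. -/
theorem stmt_1 {E : Type*} [MetricSpace E] [PolishSpace E] [MeasurableSpace E] [BorelSpace E]
    (x : ℕ → ℝ → E) (y : ℝ → E) (hx : ∀ n, Measurable (x n)) (hy : Measurable y) :
    (∀ f : BoundedContinuousFunction (E × ℝ) ℝ,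
        Tendsto (fun n => ∫ p, f p ∂(pseudoPath (x n))) atTop
          (𝓝 (∫ p, f p ∂(pseudoPath y))))
    ↔ Tendsto (fun n => ∫ t in Set.Ici (0 : ℝ),
        min (dist (x n t) (y t)) 1 * Real.exp (-t)) atTop (𝓝 0) := by
  have key : (fun n => ∫ t in Set.Ici (0:ℝ), min (dist (x n t) (y t)) 1 * Real.exp (-t))
      = fun n => ∫ t, min (dist (x n t) (y t)) 1 ∂expMeasure := by
    funext n
    rw [integral_expMeasure]
  rw [key]
  exact ⟨fun H => forward x y hx hy H, fun h G => backward x y hx hy h G⟩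
end

section
/- Let (E, d) be a Polish metric space, let F ⊆ E be a nonempty closed subset, and let ε > 0. Then there exists a Borel measurable map p : E → E such that p(z) ∈ F for every z ∈ E and d(z, p(z)) ≤ dist(z, F) + ε for every z ∈ E, where dist(z, F) = inf_{y ∈ F} d(z, y). -/
open MeasureTheory Topology

/-- Measurable `ε`-projector onto a nonempty closed subset of a Polish space. -/
theorem stmt_3 {E : Type*} [MetricSpace E] [PolishSpace E] [MeasurableSpace E] [BorelSpace E]
    (F : Set E) (hF : IsClosed F) (hFne : F.Nonempty) (ε : ℝ) (hε : 0 < ε) :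
    ∃ p : E → E, Measurable p ∧ (∀ z, p z ∈ F) ∧
      ∀ z, dist z (p z) ≤ Metric.infDist z F + ε := by
  have : Nonempty F := hFne.to_subtype
  obtain ⟨u, hu⟩ := TopologicalSpace.exists_dense_seq F
  have hex : ∀ z : E, ∃ n, dist z (u n : E) < Metric.infDist z F + ε := by
    intro z
    obtain ⟨y, hyF, hy⟩ := (Metric.infDist_lt_iff hFne).1
      (show Metric.infDist z F < Metric.infDist z F + ε / 2 by linarith)
    obtain ⟨n, hn⟩ := Metric.denseRange_iff.1 hu ⟨y, hyF⟩ (ε / 2) (by linarith)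
    have : dist y (u n : E) < ε / 2 := by simpa [Subtype.dist_eq] using hn
    refine ⟨n, ?_⟩
    calc dist z (u n : E) ≤ dist z y + dist y (u n : E) := dist_triangle _ _ _
      _ < Metric.infDist z F + ε / 2 + ε / 2 := by
          exact add_lt_add hy this
      _ = Metric.infDist z F + ε := by ring
  classical
  refine ⟨fun z => u (Nat.find (hex z)), ?_, fun z => (u _).2,
    fun z => (Nat.find_spec (hex z)).le⟩
  exact Measurable.find (f := fun n _ => (u n : E)) (fun n => measurable_const)
    (fun n => measurableSet_lt (measurable_id.dist measurable_const)
      ((Metric.continuous_infDist_pt F).measurable.add_const ε)) hex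
end

section
/- The integral ∫_0^∞ min(1, t) · (π²/16) · (∑_{k ∈ ℤ} k² · exp(−t π² k² / 8)) dt is finite. Consequently the positive measure μ(dt) with density (π²/16) ∑_{k ∈ ℤ} k² e^{−t π² k²/8} on (0,∞) is the Levy measure of a subordinator. -/
open MeasureTheory
open scoped ENNReal

section AuxStmt8
open Real Set

lemma aux_summable_nat {t : ℝ} (ht : 0 < t) :
    Summable fun n : ℕ => (n : ℝ) ^ 2 * Real.exp (-t * Real.pi ^ 2 * (n : ℝ) ^ 2 / 8) := by
  have hc : 0 < t * Real.pi ^ 2 / 8 := by positivity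
  have hgeo : Summable fun n : ℕ => (n : ℝ) ^ 2 * Real.exp (-(t * Real.pi ^ 2 / 8)) ^ n :=
    summable_pow_mul_geometric_of_norm_lt_one 2 (by
      rw [Real.norm_eq_abs, abs_of_pos (Real.exp_pos _)]
      exact Real.exp_lt_one_iff.mpr (by linarith))
  refine hgeo.of_nonneg_of_le (fun n => by positivity) (fun n => ?_)
  rw [← Real.exp_nat_mul]
  refine mul_le_mul_of_nonneg_left (Real.exp_le_exp.mpr ?_) (by positivity)
  have h1 : (n : ℝ) ≤ (n : ℝ) ^ 2 := by
    have := Nat.le_self_pow (two_ne_zero) n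
    exact_mod_cast this
  nlinarith [sq_nonneg (n:ℝ)]

lemma aux_summable {t : ℝ} (ht : 0 < t) :
    Summable fun k : ℤ => (k : ℝ) ^ 2 * Real.exp (-t * Real.pi ^ 2 * (k : ℝ) ^ 2 / 8) := by
  apply Summable.of_nat_of_neg
  · simpa using aux_summable_nat ht
  · simpa using aux_summable_nat ht

lemma aux_integrable {r : ℝ} (hr : 0 < r) :
    IntegrableOn (fun t => t * Real.exp (-(r * t))) (Set.Ioi (0:ℝ)) := by
  have h := integrableOn_rpow_mul_exp_neg_mul_rpow (s := 1) (p := 1) (by norm_num) one_pos hr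
  refine h.congr_fun (fun t ht => ?_) measurableSet_Ioi
  simp [Real.rpow_one]

lemma aux_integral {r : ℝ} (hr : 0 < r) :
    ∫ t in Set.Ioi (0:ℝ), t * Real.exp (-(r * t)) = 1 / r ^ 2 := by
  have h := Real.integral_rpow_mul_exp_neg_mul_Ioi (a := 2) (by norm_num) hr
  rw [show (∫ t in Set.Ioi (0:ℝ), t * Real.exp (-(r*t)))
      = ∫ t in Set.Ioi (0:ℝ), t ^ ((2:ℝ)-1) * Real.exp (-(r*t)) from
    setIntegral_congr_fun measurableSet_Ioi (fun t ht => by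
      rw [show (2:ℝ)-1 = 1 by norm_num, Real.rpow_one]), h, Real.Gamma_two, mul_one,
    show (2:ℝ) = ((2:ℕ):ℝ) by norm_num, Real.rpow_natCast, div_pow, one_pow]

lemma aux_lint (k : ℤ) :
    ∫⁻ t in Set.Ioi (0:ℝ),
      ENNReal.ofReal (t * ((k:ℝ)^2 * Real.exp (-t * Real.pi^2 * (k:ℝ)^2 / 8)))
      = ENNReal.ofReal (64 / Real.pi^4 * (1 / (k:ℝ)^2)) := by
  rcases eq_or_ne k 0 with rfl | hk
  · simp
  have hk2 : (0:ℝ) < (k:ℝ)^2 := by positivity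
  set r : ℝ := Real.pi^2 * (k:ℝ)^2 / 8 with hr'
  have hr : 0 < r := by positivity
  have heq : ∀ t : ℝ, t * ((k:ℝ)^2 * Real.exp (-t * Real.pi^2 * (k:ℝ)^2 / 8))
      = (k:ℝ)^2 * (t * Real.exp (-(r * t))) := by
    intro t
    rw [hr']
    ring_nf
  simp_rw [heq]
  rw [← ofReal_integral_eq_lintegral_ofReal
      (((aux_integrable hr).const_mul _))
      ((ae_restrict_iff' measurableSet_Ioi).mpr (Filter.Eventually.of_forall fun t ht =>
        mul_nonneg (by positivity) (mul_nonneg (le_of_lt (Set.mem_Ioi.mp ht)) (Real.exp_pos _).le)))]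
  rw [integral_const_mul, aux_integral hr]
  congr 1
  rw [hr']
  field_simp
  ring

lemma aux_aemeas :
    AEMeasurable (fun t : ℝ => ∑' k : ℤ, (k:ℝ)^2 * Real.exp (-t * Real.pi^2 * (k:ℝ)^2 / 8))
      (volume.restrict (Set.Ioi (0:ℝ))) := by
  set e : ℕ ≃ ℤ := (Denumerable.eqv ℤ).symm with he
  refine aemeasurable_of_tendsto_metrizable_ae'
    (f := fun n (t : ℝ) => ∑ i ∈ Finset.range n,
      (((e i):ℝ)^2 * Real.exp (-t * Real.pi^2 * ((e i):ℝ)^2 / 8))) (fun n => ?_) ?_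
  · exact (Finset.measurable_sum _ (fun i _ => by fun_prop)).aemeasurable
  · filter_upwards [ae_restrict_mem measurableSet_Ioi] with t ht
    exact ((e.hasSum_iff.mpr (aux_summable ht).hasSum)).tendsto_sum_nat

end AuxStmt8

/-- The measure `μ(dt) = (π²/16) ∑_{k∈ℤ} k² e^{−tπ²k²/8} dt` on `(0,∞)` integrates
`min(1,t)`, i.e. it is the Levy measure of a subordinator. -/
theorem stmt_8 :
    IntegrableOn
      (fun t : ℝ => min 1 t *
        (Real.pi ^ 2 / 16 * ∑' k : ℤ, (k : ℝ) ^ 2 * Real.exp (-t * Real.pi ^ 2 * (k : ℝ) ^ 2 / 8)))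
      (Set.Ioi (0 : ℝ)) ∧
    ∫⁻ t, ENNReal.ofReal (min 1 t)
        ∂((volume.restrict (Set.Ioi (0 : ℝ))).withDensity fun t =>
          ENNReal.ofReal (Real.pi ^ 2 / 16 *
            ∑' k : ℤ, (k : ℝ) ^ 2 * Real.exp (-t * Real.pi ^ 2 * (k : ℝ) ^ 2 / 8))) < ⊤ := by
  set S : ℝ → ℝ := fun t => ∑' k : ℤ, (k : ℝ) ^ 2 * Real.exp (-t * Real.pi ^ 2 * (k : ℝ) ^ 2 / 8)
    with hS
  set c : ℝ := Real.pi ^ 2 / 16 with hc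
  have hcpos : 0 < c := by rw [hc]; positivity
  have hSnn : ∀ t : ℝ, 0 ≤ S t := fun t => tsum_nonneg fun k => by positivity
  -- pointwise bound
  have hpt : ∀ t ∈ Set.Ioi (0:ℝ), ENNReal.ofReal (min 1 t * (c * S t)) ≤
      ENNReal.ofReal c * ∑' k : ℤ,
        ENNReal.ofReal (t * ((k:ℝ)^2 * Real.exp (-t * Real.pi^2 * (k:ℝ)^2 / 8))) := by
    intro t ht
    rw [Set.mem_Ioi] at ht
    have h1 : min 1 t * (c * S t) ≤ c * (t * S t) := by
      have h2 : min 1 t * (c * S t) ≤ t * (c * S t) :=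
        mul_le_mul_of_nonneg_right (min_le_right 1 t) (mul_nonneg hcpos.le (hSnn t))
      linarith [h2, mul_comm t (c * S t)]
    calc ENNReal.ofReal (min 1 t * (c * S t)) ≤ ENNReal.ofReal (c * (t * S t)) :=
          ENNReal.ofReal_le_ofReal h1
      _ = ENNReal.ofReal c * ENNReal.ofReal (t * S t) := ENNReal.ofReal_mul hcpos.le
      _ = ENNReal.ofReal c * ENNReal.ofReal
            (∑' k : ℤ, t * ((k:ℝ)^2 * Real.exp (-t * Real.pi^2 * (k:ℝ)^2 / 8))) := by
          rw [tsum_mul_left]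
      _ = ENNReal.ofReal c * ∑' k : ℤ,
            ENNReal.ofReal (t * ((k:ℝ)^2 * Real.exp (-t * Real.pi^2 * (k:ℝ)^2 / 8))) := by
          rw [ENNReal.ofReal_tsum_of_nonneg (fun k => mul_nonneg ht.le (by positivity))
            ((aux_summable ht).mul_left t)]
  have hB : Summable fun k : ℤ => 64 / Real.pi^4 * (1 / (k:ℝ)^2) :=
    (Real.summable_one_div_int_pow.mpr (by norm_num : 1 < 2)).mul_left _
  have key : (∫⁻ t in Set.Ioi (0:ℝ), ENNReal.ofReal (min 1 t * (c * S t))) < ⊤ := by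
    calc (∫⁻ t in Set.Ioi (0:ℝ), ENNReal.ofReal (min 1 t * (c * S t)))
        ≤ ∫⁻ t in Set.Ioi (0:ℝ), ENNReal.ofReal c * ∑' k : ℤ,
            ENNReal.ofReal (t * ((k:ℝ)^2 * Real.exp (-t * Real.pi^2 * (k:ℝ)^2 / 8))) :=
          lintegral_mono_ae ((ae_restrict_iff' measurableSet_Ioi).mpr
            (Filter.Eventually.of_forall hpt))
      _ = ENNReal.ofReal c * ∑' k : ℤ, ∫⁻ t in Set.Ioi (0:ℝ),
            ENNReal.ofReal (t * ((k:ℝ)^2 * Real.exp (-t * Real.pi^2 * (k:ℝ)^2 / 8))) := by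
          rw [lintegral_const_mul' _ _ ENNReal.ofReal_ne_top,
            lintegral_tsum (f := fun (k : ℤ) (t : ℝ) =>
              ENNReal.ofReal (t * ((k:ℝ)^2 * Real.exp (-t * Real.pi^2 * (k:ℝ)^2 / 8))))
              (fun k => (Measurable.ennreal_ofReal (by fun_prop)).aemeasurable)]
      _ = ENNReal.ofReal c * ∑' k : ℤ, ENNReal.ofReal (64 / Real.pi^4 * (1 / (k:ℝ)^2)) := by
          congr 1
          exact tsum_congr fun k => aux_lint k
      _ = ENNReal.ofReal c * ENNReal.ofReal (∑' k : ℤ, 64 / Real.pi^4 * (1 / (k:ℝ)^2)) := by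
          rw [ENNReal.ofReal_tsum_of_nonneg (fun k => by positivity) hB]
      _ < ⊤ := ENNReal.mul_lt_top ENNReal.ofReal_lt_top ENNReal.ofReal_lt_top
  have hmeasg : AEStronglyMeasurable (fun t : ℝ => min 1 t * (c * S t))
      (volume.restrict (Set.Ioi (0:ℝ))) :=
    ((measurable_const.min measurable_id).aemeasurable.mul
      (aemeasurable_const.mul aux_aemeas)).aestronglyMeasurable
  have hnn_ae : 0 ≤ᵐ[volume.restrict (Set.Ioi (0:ℝ))] fun t : ℝ => min 1 t * (c * S t) :=
    (ae_restrict_iff' measurableSet_Ioi).mpr (Filter.Eventually.of_forall fun t ht =>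
      mul_nonneg (le_min zero_le_one (Set.mem_Ioi.mp ht).le) (mul_nonneg hcpos.le (hSnn t)))
  constructor
  · exact ⟨hmeasg, (hasFiniteIntegral_iff_ofReal hnn_ae).mpr key⟩
  · rw [lintegral_withDensity_eq_lintegral_mul₀
      (f := fun t : ℝ => ENNReal.ofReal (c * S t))
      (g := fun t : ℝ => ENNReal.ofReal (min 1 t))
      ((aemeasurable_const.mul aux_aemeas).ennreal_ofReal)
      (((measurable_const.min measurable_id).ennreal_ofReal).aemeasurable)]
    have hcongr : (fun t : ℝ => ENNReal.ofReal (c * S t) * ENNReal.ofReal (min 1 t))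
        =ᵐ[volume.restrict (Set.Ioi (0:ℝ))] fun t => ENNReal.ofReal (min 1 t * (c * S t)) := by
      refine Filter.Eventually.of_forall fun t => ?_
      show ENNReal.ofReal (c * S t) * ENNReal.ofReal (min 1 t)
          = ENNReal.ofReal (min 1 t * (c * S t))
      rw [← ENNReal.ofReal_mul (mul_nonneg hcpos.le (hSnn t)), mul_comm]
    calc ∫⁻ t, ((fun t : ℝ => ENNReal.ofReal (c * S t)) * fun t => ENNReal.ofReal (min 1 t)) t
            ∂(volume.restrict (Set.Ioi (0:ℝ)))
        = ∫⁻ t, ENNReal.ofReal (min 1 t * (c * S t)) ∂(volume.restrict (Set.Ioi (0:ℝ))) :=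
          lintegral_congr_ae hcongr
      _ < ⊤ := key
end

section
/- For every t > 0, one has ∑_{k ∈ ℤ} (−1)^k · k² · exp(−t π² k² / 8) ≤ 0. Equivalently, the measure ν(dt) on (0,∞) with density −(π²/16) ∑_{k ∈ ℤ} (−1)^k k² e^{−t π² k²/8} with respect to Lebesgue measure is a positive measure. -/
open Real

noncomputable section ThetaProofAux

/-- summability of `|k|^p * exp (-ε k²)` over ℤ -/
lemma sumAux1 {ε : ℝ} (hε : 0 < ε) (p : ℕ) :
    Summable (fun k : ℤ => (|(k : ℝ)| ^ p) * Real.exp (-ε * (k : ℝ) ^ 2)) := by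
  have := summable_pow_mul_jacobiTheta₂_term_bound 0 (T := ε / π) (by positivity) p
  refine this.congr fun k => ?_
  have hπ := Real.pi_ne_zero
  rw [Int.cast_abs]
  congr 2
  field_simp
  ring

lemma sumAux2 {ε : ℝ} (hε : 0 < ε) :
    Summable (fun k : ℤ => ((k : ℝ) ^ 2) * Real.exp (-ε * (k : ℝ) ^ 2)) :=
  (sumAux1 hε 2).congr fun k => by rw [_root_.sq_abs]

lemma sumAux0 {ε : ℝ} (hε : 0 < ε) :
    Summable (fun k : ℤ => Real.exp (-ε * (k : ℝ) ^ 2)) :=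
  (sumAux1 hε 0).congr fun k => by simp

lemma neg_one_zpow_mul_self (k : ℤ) : ((-1 : ℝ) ^ k) * ((-1 : ℝ) ^ k) = 1 := by
  rw [← mul_zpow]; norm_num

lemma abs_neg_one_zpow' (k : ℤ) : |(-1 : ℝ) ^ k| = 1 := by
  have h := neg_one_zpow_mul_self k
  have h2 : |(-1 : ℝ) ^ k| ^ 2 = 1 := by rw [sq_abs, sq, h]
  nlinarith [abs_nonneg ((-1 : ℝ) ^ k)]

lemma neg_one_zpow_even (m : ℤ) : (-1 : ℝ) ^ (2 * m) = 1 := by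
  rw [zpow_mul]; norm_num

lemma neg_one_zpow_odd (m : ℤ) : (-1 : ℝ) ^ (2 * m + 1) = -1 := by
  rw [zpow_add₀ (by norm_num : (-1:ℝ) ≠ 0), zpow_one, neg_one_zpow_even]; norm_num

lemma regimeA {c : ℝ} (hc : 2 ≤ c) :
    ∑' k : ℤ, (-1 : ℝ) ^ k * (k : ℝ) ^ 2 * Real.exp (-c * (k : ℝ) ^ 2) ≤ 0 := by
  have hc0 : (0:ℝ) < c := by linarith
  set g : ℤ → ℝ := fun k => (-1 : ℝ) ^ k * (k : ℝ) ^ 2 * Real.exp (-c * (k : ℝ) ^ 2) with hgdef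
  have hgsum : Summable g := by
    apply Summable.of_norm_bounded (sumAux2 hc0)
    intro k
    rw [hgdef]
    simp only [Real.norm_eq_abs, abs_mul, abs_neg_one_zpow', one_mul,
      abs_of_nonneg (sq_nonneg ((k:ℝ))), abs_of_nonneg (Real.exp_pos _).le]
    exact le_rfl
  have hinv : ∀ k : ℤ, ((-1 : ℝ) ^ k)⁻¹ = (-1 : ℝ) ^ k := fun k =>
    inv_eq_of_mul_eq_one_right (neg_one_zpow_mul_self k)
  have gneg : ∀ k : ℤ, g (-k) = g k := by
    intro k
    rw [hgdef]
    simp only [zpow_neg, hinv, Int.cast_neg, neg_sq]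
  set h : ℕ → ℝ := fun n => g ((n : ℤ) + 1) with hhdef
  have hinj1 : Function.Injective (fun n : ℕ => (n : ℤ)) := fun a b hab => by
    simpa using hab
  have hinj2 : Function.Injective (fun n : ℕ => -((n : ℤ) + 1)) := fun a b hab => by
    simp only [neg_inj, add_left_inj, Int.natCast_inj] at hab; exact hab
  have hinj3 : Function.Injective (fun n : ℕ => ((n : ℤ) + 1)) := fun a b hab => by
    simp only [add_left_inj, Int.natCast_inj] at hab; exact hab
  have hg1 : Summable fun n : ℕ => g n := hgsum.comp_injective hinj1
  have hg2 : Summable fun n : ℕ => g (-((n : ℤ) + 1)) := hgsum.comp_injective hinj2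
  have hh : Summable h := hgsum.comp_injective hinj3
  have step1 : ∑' k : ℤ, g k = ∑' n : ℕ, g n + ∑' n : ℕ, g (-((n:ℤ) + 1)) :=
    tsum_of_nat_of_neg_add_one hg1 hg2
  have step2 : ∑' n : ℕ, g (-((n:ℤ) + 1)) = ∑' n : ℕ, h n := by
    refine tsum_congr fun n => ?_
    rw [hhdef]
    exact gneg ((n:ℤ)+1)
  have step3 : ∑' n : ℕ, g n = ∑' n : ℕ, h n := by
    rw [Summable.tsum_eq_zero_add hg1]
    have h0 : g ((0:ℕ) : ℤ) = 0 := by rw [hgdef]; norm_num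
    rw [h0, zero_add]
    refine tsum_congr fun n => ?_
    rw [hhdef]
    push_cast
    ring_nf
  have hhe : Summable fun n : ℕ => h (2 * n) :=
    hh.comp_injective (fun a b hab => by omega)
  have hho : Summable fun n : ℕ => h (2 * n + 1) :=
    hh.comp_injective (fun a b hab => by omega)
  have step4 : ∑' n : ℕ, h n = ∑' n : ℕ, (h (2 * n) + h (2 * n + 1)) := by
    rw [← tsum_even_add_odd hhe hho, Summable.tsum_add hhe hho]
  have pair : ∀ n : ℕ, h (2 * n) + h (2 * n + 1) ≤ 0 := by
    intro n
    have e1 : h (2 * n) = -((2*(n:ℝ)+1) ^ 2 * Real.exp (-c * (2*(n:ℝ)+1) ^ 2)) := by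
      simp only [hhdef, hgdef]
      rw [show ((2*n : ℕ):ℤ) + 1 = 2 * (n:ℤ) + 1 by push_cast; ring, neg_one_zpow_odd]
      push_cast
      ring_nf
    have e2 : h (2 * n + 1) = (2*(n:ℝ)+2) ^ 2 * Real.exp (-c * (2*(n:ℝ)+2) ^ 2) := by
      simp only [hhdef, hgdef]
      rw [show ((2*n+1 : ℕ):ℤ) + 1 = 2 * ((n:ℤ)+1) by push_cast; ring, neg_one_zpow_even]
      push_cast
      ring_nf
    rw [e1, e2]
    set a : ℝ := 2*(n:ℝ)+1 with hadef
    have ha1 : 1 ≤ a := by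
      have : (0:ℝ) ≤ (n:ℝ) := by positivity
      rw [hadef]; linarith
    have hb : (2*(n:ℝ)+2) = a + 1 := by rw [hadef]; ring
    rw [hb]
    have hsplit : Real.exp (-c * (a+1)^2) = Real.exp (-c * a^2) * Real.exp (-(c*(2*a+1))) := by
      rw [← Real.exp_add]; ring_nf
    rw [hsplit]
    have hE : (0:ℝ) < Real.exp (-c * a^2) := Real.exp_pos _
    have hEp : (0:ℝ) < Real.exp (-(c*(2*a+1))) := Real.exp_pos _
    have h6 : Real.exp (-(c*(2*a+1))) ≤ Real.exp (-6) := by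
      apply Real.exp_le_exp.mpr; nlinarith
    have h7 : Real.exp (-6:ℝ) ≤ 1/7 := by
      have hmul : Real.exp (-6:ℝ) * Real.exp (6:ℝ) = 1 := by
        rw [← Real.exp_add]; norm_num
      nlinarith [Real.add_one_le_exp (6:ℝ), Real.exp_pos (-6:ℝ)]
    have h67 : Real.exp (-(c*(2*a+1))) ≤ 1/7 := le_trans h6 h7
    have hq : (a+1)^2 ≤ 4 * a^2 := by nlinarith
    have key : (a+1)^2 * (Real.exp (-c * a^2) * Real.exp (-(c*(2*a+1))))
        ≤ a^2 * Real.exp (-c * a^2) := by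
      nlinarith [mul_le_mul_of_nonneg_right hq (mul_pos hE hEp).le,
        mul_le_mul_of_nonneg_left h67 (by positivity : (0:ℝ) ≤ 4*a^2*Real.exp (-c*a^2)),
        mul_nonneg (sq_nonneg a) hE.le]
    linarith
  have step5 : ∑' n : ℕ, (h (2 * n) + h (2 * n + 1)) ≤ 0 := by
    have hnn : 0 ≤ ∑' n : ℕ, -(h (2 * n) + h (2 * n + 1)) :=
      tsum_nonneg fun n => by linarith [pair n]
    rw [tsum_neg] at hnn
    linarith
  calc ∑' k : ℤ, g k = ∑' n : ℕ, h n + ∑' n : ℕ, h n := by rw [step1, step2, step3]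
    _ = 2 * ∑' n : ℕ, (h (2*n) + h (2*n+1)) := by rw [step4]; ring
    _ ≤ 0 := by linarith

section PoissonSection
open Complex
lemma poissonB {y : ℝ} (hy : 0 < y) :
    ∑' k : ℤ, (-1:ℝ)^k * Real.exp (-y * (k:ℝ)^2)
      = π ^ ((1:ℝ)/2) * y ^ (-((1:ℝ)/2))
        * ∑' n : ℤ, Real.exp (-(π^2*((n:ℝ)-1/2)^2) * (1/y)) := by
  have hπ := Real.pi_pos
  have hπne : (π:ℂ) ≠ 0 := by exact_mod_cast Real.pi_ne_zero
  have hyne : (y:ℂ) ≠ 0 := by exact_mod_cast hy.ne'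
  have ha : 0 < ((y/π : ℝ) : ℂ).re := by
    rw [Complex.ofReal_re]; positivity
  have h := Complex.tsum_exp_neg_quadratic ha (I/2)
  have hL : (∑' n : ℤ, Complex.exp (-(π:ℂ) * ((y/π : ℝ):ℂ) * (n:ℂ)^2 + 2*(π:ℂ)*(I/2)*(n:ℂ)))
      = ((∑' k : ℤ, (-1:ℝ)^k * Real.exp (-y * (k:ℝ)^2) : ℝ) : ℂ) := by
    rw [Complex.ofReal_tsum]
    refine tsum_congr fun n => ?_
    push_cast
    rw [show -(π:ℂ) * ((y:ℂ)/(π:ℂ)) * (n:ℂ)^2 + 2*(π:ℂ)*(I/2)*(n:ℂ)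
        = -(y:ℂ)*(n:ℂ)^2 + (n:ℂ)*((π:ℂ)*I) by field_simp]
    rw [Complex.exp_add, Complex.exp_int_mul, Complex.exp_pi_mul_I]
    ring
  have hR : (∑' n : ℤ, Complex.exp (-(π:ℂ) / ((y/π : ℝ):ℂ) * ((n:ℂ) + I*(I/2))^2))
      = ((∑' n : ℤ, Real.exp (-(π^2*((n:ℝ)-1/2)^2) * (1/y)) : ℝ) : ℂ) := by
    rw [Complex.ofReal_tsum]
    refine tsum_congr fun n => ?_
    rw [Complex.ofReal_exp]
    congr 1
    push_cast
    rw [show ((n:ℂ) + I*(I/2)) = (n:ℂ) - 1/2 by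
      rw [show I*(I/2) = (I*I)/2 by ring, Complex.I_mul_I]; ring]
    field_simp
  have hpre : (1 : ℂ) / (((y/π : ℝ):ℂ) ^ ((1:ℂ)/2))
      = ((π ^ ((1:ℝ)/2) * y ^ (-((1:ℝ)/2)) : ℝ) : ℂ) := by
    have h1 : (((y/π : ℝ):ℂ) ^ ((1:ℂ)/2)) = (((y/π) ^ ((1:ℝ)/2) : ℝ) : ℂ) := by
      rw [show ((1:ℂ)/2) = (((1/2 : ℝ) : ℝ) : ℂ) by norm_num,
        ← Complex.ofReal_cpow (by positivity)]
    rw [h1, show (1 : ℂ) = ((1:ℝ):ℂ) by norm_num, ← Complex.ofReal_div]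
    congr 1
    rw [Real.div_rpow hy.le hπ.le, Real.rpow_neg hy.le]
    have hy2 : y ^ ((1:ℝ)/2) ≠ 0 := by positivity
    have hπ2 : π ^ ((1:ℝ)/2) ≠ 0 := by positivity
    field_simp
  apply Complex.ofReal_injective
  calc ((∑' k : ℤ, (-1:ℝ)^k * Real.exp (-y * (k:ℝ)^2) : ℝ) : ℂ)
      = ∑' n : ℤ, Complex.exp (-(π:ℂ) * ((y/π : ℝ):ℂ) * (n:ℂ)^2 + 2*(π:ℂ)*(I/2)*(n:ℂ)) :=
        hL.symm
    _ = (1 : ℂ) / (((y/π : ℝ):ℂ) ^ ((1:ℂ)/2))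
          * ∑' n : ℤ, Complex.exp (-(π:ℂ) / ((y/π : ℝ):ℂ) * ((n:ℂ) + I*(I/2))^2) := h
    _ = _ := by
        rw [hpre, hR, ← Complex.ofReal_mul]

end PoissonSection

lemma sumB0 {u : ℝ} (hu : 0 < u) :
    Summable (fun n : ℤ => Real.exp (-(π^2*((n:ℝ)-1/2)^2) * u)) := by
  have hT : 0 < π * u := by positivity
  have hs := summable_pow_mul_jacobiTheta₂_term_bound (π*u/2) hT 0
  have hs' : Summable fun n : ℤ => Real.exp (-π * (π*u*(n:ℝ)^2 - 2*(π*u/2)*|(n:ℝ)|)) := by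
    refine hs.congr fun n => ?_
    rw [pow_zero, one_mul, Int.cast_abs]
  refine Summable.of_nonneg_of_le (fun n => (Real.exp_pos _).le) (fun n => ?_) hs'
  refine Real.exp_le_exp.mpr ?_
  have h1 : (n:ℝ) ≤ |(n:ℝ)| := le_abs_self _
  have h2 : (0:ℝ) < π := Real.pi_pos
  nlinarith [mul_nonneg (mul_nonneg (sq_nonneg π) hu.le) (sub_nonneg.mpr h1),
    mul_pos (mul_pos (pow_pos h2 2) hu) (by norm_num : (0:ℝ) < 1/4)]

lemma xexp_le {u x : ℝ} (hu : 0 < u) :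
    x * Real.exp (-x*u) ≤ (2/u) * Real.exp (-x*(u/2)) := by
  have h1 : x*u/2 ≤ Real.exp (x*u/2) := by linarith [Real.add_one_le_exp (x*u/2)]
  have h2 : x ≤ (2/u) * Real.exp (x*u/2) := by
    rw [div_mul_eq_mul_div, le_div_iff₀ hu]
    calc x * u = 2 * (x*u/2) := by ring
      _ ≤ 2 * Real.exp (x*u/2) := by linarith
  calc x * Real.exp (-x*u) ≤ ((2/u) * Real.exp (x*u/2)) * Real.exp (-x*u) :=
        mul_le_mul_of_nonneg_right h2 (Real.exp_pos _).le
    _ = (2/u) * Real.exp (-x*(u/2)) := by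
        rw [mul_assoc, ← Real.exp_add]
        congr 2
        ring

lemma sumB1 {u : ℝ} (hu : 0 < u) :
    Summable (fun n : ℤ => (π^2*((n:ℝ)-1/2)^2) * Real.exp (-(π^2*((n:ℝ)-1/2)^2) * u)) :=
  Summable.of_nonneg_of_le (fun n => by positivity)
    (fun n => xexp_le hu) ((sumB0 (half_pos hu)).mul_left (2/u))

/-- derivative of Ψ -/
lemma derivPsi {u : ℝ} (hu : 0 < u) :
    HasDerivAt (fun v => ∑' n : ℤ, Real.exp (-(π^2*((n:ℝ)-1/2)^2) * v))
      (∑' n : ℤ, -(π^2*((n:ℝ)-1/2)^2) * Real.exp (-(π^2*((n:ℝ)-1/2)^2) * u)) u := by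
  refine hasDerivAt_tsum_of_isPreconnected
    (u := fun n : ℤ => (π^2*((n:ℝ)-1/2)^2) * Real.exp (-(π^2*((n:ℝ)-1/2)^2) * (u/2)))
    (t := Set.Ioi (u/2)) (y₀ := u)
    (g := fun (n : ℤ) (v : ℝ) => Real.exp (-(π^2*((n:ℝ)-1/2)^2) * v))
    (g' := fun (n : ℤ) (v : ℝ) => -(π^2*((n:ℝ)-1/2)^2) * Real.exp (-(π^2*((n:ℝ)-1/2)^2) * v))
    (sumB1 (half_pos hu)) isOpen_Ioi (isPreconnected_Ioi)
    (fun n y _ => ?_) (fun n y hy => ?_) (Set.mem_Ioi.mpr (half_lt_self hu))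
    (sumB0 hu) (Set.mem_Ioi.mpr (half_lt_self hu))
  · have h := (((hasDerivAt_id y).const_mul (-(π^2*((n:ℝ)-1/2)^2))).exp)
    simpa [mul_comm] using h
  · have hBn : (0:ℝ) ≤ π^2*((n:ℝ)-1/2)^2 := by positivity
    rw [Real.norm_eq_abs, abs_mul, abs_neg, abs_of_nonneg hBn,
      abs_of_nonneg (Real.exp_pos _).le]
    refine mul_le_mul_of_nonneg_left (Real.exp_le_exp.mpr ?_) hBn
    have : u/2 ≤ y := le_of_lt hy
    nlinarith

/-- derivative of F -/
lemma derivF {c : ℝ} (hc : 0 < c) :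
    HasDerivAt (fun y => ∑' k : ℤ, (-1:ℝ)^k * Real.exp (-y * (k:ℝ)^2))
      (∑' k : ℤ, (-1:ℝ)^k * (Real.exp (-c * (k:ℝ)^2) * (-(k:ℝ)^2))) c := by
  have habs : ∀ k : ℤ, |(-1 : ℝ) ^ k| = 1 := fun k => by
    have h : ((-1 : ℝ) ^ k) * ((-1 : ℝ) ^ k) = 1 := by rw [← mul_zpow]; norm_num
    have h2 : |(-1 : ℝ) ^ k| ^ 2 = 1 := by rw [sq_abs, sq, h]
    nlinarith [abs_nonneg ((-1 : ℝ) ^ k)]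
  refine hasDerivAt_tsum_of_isPreconnected
    (u := fun k : ℤ => ((k:ℝ)^2) * Real.exp (-(c/2) * (k:ℝ)^2))
    (t := Set.Ioi (c/2)) (y₀ := c)
    (g := fun (k : ℤ) (y : ℝ) => (-1:ℝ)^k * Real.exp (-y * (k:ℝ)^2))
    (g' := fun (k : ℤ) (y : ℝ) => (-1:ℝ)^k * (Real.exp (-y * (k:ℝ)^2) * (-(k:ℝ)^2)))
    (sumAux2 (half_pos hc)) isOpen_Ioi (isPreconnected_Ioi)
    (fun k y _ => ?_) (fun k y hy => ?_) (Set.mem_Ioi.mpr (half_lt_self hc))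
    ?_ (Set.mem_Ioi.mpr (half_lt_self hc))
  · have hinner : HasDerivAt (fun y : ℝ => -y * (k:ℝ)^2) (-(k:ℝ)^2) y := by
      simpa using ((hasDerivAt_id y).neg.mul_const ((k:ℝ)^2))
    exact (hinner.exp).const_mul _
  · rw [Real.norm_eq_abs, abs_mul, habs, one_mul, abs_mul,
      abs_of_nonneg (Real.exp_pos _).le, abs_neg, abs_of_nonneg (sq_nonneg ((k:ℝ)))]
    have h : c/2 ≤ y := le_of_lt hy
    rw [mul_comm]
    refine mul_le_mul_of_nonneg_left (Real.exp_le_exp.mpr ?_) (sq_nonneg _)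
    nlinarith [sq_nonneg ((k:ℝ))]
  · refine Summable.of_norm_bounded (sumAux0 hc) (fun k => ?_)
    rw [Real.norm_eq_abs, abs_mul, habs, one_mul, abs_of_nonneg (Real.exp_pos _).le]

lemma regimeB {c : ℝ} (hc0 : 0 < c) (hc : c ≤ 2) :
    ∑' k : ℤ, (-1 : ℝ) ^ k * (k : ℝ) ^ 2 * Real.exp (-c * (k : ℝ) ^ 2) ≤ 0 := by
  set Ψ : ℝ → ℝ := fun v => ∑' n : ℤ, Real.exp (-(π^2*((n:ℝ)-1/2)^2) * v) with hΨ
  set W : ℝ := ∑' n : ℤ, Real.exp (-(π^2*((n:ℝ)-1/2)^2) * c⁻¹) with hW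
  set V : ℝ := ∑' n : ℤ, (π^2*((n:ℝ)-1/2)^2) * Real.exp (-(π^2*((n:ℝ)-1/2)^2) * c⁻¹) with hV
  have hcinv : 0 < c⁻¹ := by positivity
  -- derivative of G = π^(1/2) * (y ^ (-1/2) * Ψ (y⁻¹)) at c
  have h1 : HasDerivAt (fun y : ℝ => y ^ (-((1:ℝ)/2)))
      (-((1:ℝ)/2) * c ^ (-((1:ℝ)/2) - 1)) c :=
    Real.hasDerivAt_rpow_const (Or.inl hc0.ne')
  have h3 : HasDerivAt Ψ
      (∑' n : ℤ, -(π^2*((n:ℝ)-1/2)^2) * Real.exp (-(π^2*((n:ℝ)-1/2)^2) * c⁻¹)) c⁻¹ :=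
    derivPsi hcinv
  have h4 : HasDerivAt (fun y : ℝ => Ψ y⁻¹)
      ((∑' n : ℤ, -(π^2*((n:ℝ)-1/2)^2) * Real.exp (-(π^2*((n:ℝ)-1/2)^2) * c⁻¹))
        * (-(c^2)⁻¹)) c :=
    HasDerivAt.comp c h3 (hasDerivAt_inv hc0.ne')
  have h5 := (h1.mul h4).const_mul (π ^ ((1:ℝ)/2))
  -- F agrees with G near c
  have hFG : (fun y => ∑' k : ℤ, (-1:ℝ)^k * Real.exp (-y * (k:ℝ)^2))
      =ᶠ[nhds c] (fun y : ℝ => π ^ ((1:ℝ)/2) * (y ^ (-((1:ℝ)/2)) * Ψ y⁻¹)) := by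
    filter_upwards [Ioi_mem_nhds hc0] with y hy
    rw [poissonB hy]
    simp only [hΨ, one_div, mul_assoc]
  have h6 : HasDerivAt (fun y => ∑' k : ℤ, (-1:ℝ)^k * Real.exp (-y * (k:ℝ)^2))
      (π ^ ((1:ℝ)/2) * (-((1:ℝ)/2) * c ^ (-((1:ℝ)/2) - 1) * Ψ c⁻¹ +
        c ^ (-((1:ℝ)/2)) * ((∑' n : ℤ, -(π^2*((n:ℝ)-1/2)^2) *
          Real.exp (-(π^2*((n:ℝ)-1/2)^2) * c⁻¹)) * (-(c^2)⁻¹)))) c :=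
    h5.congr_of_eventuallyEq hFG
  have huniq := (derivF hc0).unique h6
  -- identify the sums
  have hΨc : Ψ c⁻¹ = W := by rw [hΨ, hW]
  have hnegV : (∑' n : ℤ, -(π^2*((n:ℝ)-1/2)^2) *
      Real.exp (-(π^2*((n:ℝ)-1/2)^2) * c⁻¹)) = -V := by
    rw [hV, ← tsum_neg]
    exact tsum_congr fun n => by ring
  rw [hΨc, hnegV] at huniq
  -- positivity facts
  have hWpos : 0 ≤ W := tsum_nonneg fun n => (Real.exp_pos _).le
  have hkey : c/2 * W ≤ V := by
    rw [hW, hV, ← tsum_mul_left]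
    refine Summable.tsum_le_tsum (fun n => ?_) ((sumB0 hcinv).mul_left _) (sumB1 hcinv)
    refine mul_le_mul_of_nonneg_right ?_ (Real.exp_pos _).le
    have hn : (1:ℝ) ≤ (2*(n:ℝ)-1)^2 := by
      have h0 : (2*n-1 : ℤ) ≠ 0 := by omega
      have h1 : (1:ℤ) ≤ |2*n-1| := Int.one_le_abs h0
      have h2 : (1:ℝ) ≤ |2*(n:ℝ)-1| := by
        have h3 : ((1:ℤ):ℝ) ≤ ((|2*n-1| : ℤ) : ℝ) := Int.cast_le.mpr h1
        push_cast [Int.cast_abs] at h3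
        exact h3
      nlinarith [abs_nonneg (2*(n:ℝ)-1), sq_abs (2*(n:ℝ)-1)]
    have hπ : (3:ℝ) < π := Real.pi_gt_three
    nlinarith
  -- conclude
  have hD : ∑' k : ℤ, (-1 : ℝ) ^ k * (k : ℝ) ^ 2 * Real.exp (-c * (k : ℝ) ^ 2)
      = -(∑' k : ℤ, (-1:ℝ)^k * (Real.exp (-c * (k:ℝ)^2) * (-(k:ℝ)^2))) := by
    rw [← tsum_neg]
    exact tsum_congr fun k => by ring
  rw [hD, huniq]
  -- show the derivative expression is nonnegative
  have hR : 0 < c ^ (-((1:ℝ)/2)) := Real.rpow_pos_of_pos hc0 _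
  have hP : 0 < π ^ ((1:ℝ)/2) := Real.rpow_pos_of_pos Real.pi_pos _
  have hsub : c ^ (-((1:ℝ)/2) - 1) = c ^ (-((1:ℝ)/2)) * c⁻¹ := by
    rw [Real.rpow_sub hc0, Real.rpow_one, div_eq_mul_inv]
  rw [hsub]
  rw [neg_nonpos]
  have hbr : 0 ≤ -((1:ℝ)/2) * (c ^ (-((1:ℝ)/2)) * c⁻¹) * W +
      c ^ (-((1:ℝ)/2)) * (-V * -(c^2)⁻¹) := by
    have e1 : -((1:ℝ)/2) * (c ^ (-((1:ℝ)/2)) * c⁻¹) * W +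
        c ^ (-((1:ℝ)/2)) * (-V * -(c^2)⁻¹)
        = c ^ (-((1:ℝ)/2)) * c⁻¹ * (V * c⁻¹ - W/2) := by
      rw [sq]
      field_simp
      ring
    rw [e1]
    refine mul_nonneg (by positivity) ?_
    have e2 : c/2 * W * c⁻¹ = W/2 := by field_simp
    have := mul_le_mul_of_nonneg_right hkey (le_of_lt hcinv)
    rw [e2] at this
    linarith
  positivity

end ThetaProofAux

/-- For every `t > 0`, `∑_{k∈ℤ} (−1)^k k² e^{−tπ²k²/8} ≤ 0`; equivalently the density of the
measure `ν` is nonnegative. -/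
theorem stmt_9 (t : ℝ) (ht : 0 < t) :
    ∑' k : ℤ, (-1 : ℝ) ^ k * (k : ℝ) ^ 2 * Real.exp (-t * Real.pi ^ 2 * (k : ℝ) ^ 2 / 8) ≤ 0 := by
  have hc0 : 0 < t * Real.pi ^ 2 / 8 := by positivity
  have harg : ∀ k : ℤ, -t * Real.pi ^ 2 * (k:ℝ) ^ 2 / 8
      = -(t * Real.pi ^ 2 / 8) * (k:ℝ) ^ 2 := fun k => by ring
  simp_rw [harg]
  rcases le_or_gt (t * Real.pi ^ 2 / 8) 2 with h | h
  · exact regimeB hc0 h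
  · exact regimeA h.le
end

section
/- The total mass of the measure ν equals 1/2: one has ∫_0^∞ (−(π²/16)) · (∑_{k ∈ ℤ} (−1)^k · k² · exp(−t π² k² / 8)) dt = 1/2. -/
open MeasureTheory

section Aux
open Real Filter Topology

/-! ### Summability toolkit -/

lemma sum_exp_abs {b : ℝ} (hb : 0 < b) : Summable fun k : ℤ => Real.exp (-b * |(k:ℝ)|) := by
  apply Summable.of_nat_of_neg <;>
  · simp only [Int.cast_natCast, Int.cast_neg, abs_neg, Nat.abs_cast]
    simpa only [neg_mul, mul_comm] using Real.summable_exp_nat_mul_iff.mpr (neg_lt_zero.mpr hb)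

lemma mul_exp_le {c x : ℝ} (hc : 0 < c) (hx : 0 ≤ x) : x * Real.exp (-(c*x)) ≤ 1/c := by
  have h2 : c * x ≤ Real.exp (c*x) := by
    have h := Real.add_one_le_exp (c*x); nlinarith [mul_nonneg hc.le hx]
  rw [Real.exp_neg]
  rw [div_eq_mul_inv, ← mul_le_mul_iff_right₀ hc, ← mul_assoc]
  have hex := Real.exp_pos (c*x)
  calc c * x * (Real.exp (c*x))⁻¹ ≤ Real.exp (c*x) * (Real.exp (c*x))⁻¹ :=
        mul_le_mul_of_nonneg_right h2 (inv_nonneg.mpr hex.le)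
    _ = 1 := mul_inv_cancel₀ hex.ne'
    _ = c * (1 * c⁻¹) := by field_simp

lemma summable_mul_exp {b : ℝ} (hb : 0 < b) {v : ℤ → ℝ} (hv : ∀ k, 0 ≤ v k)
    (h : Summable fun k => Real.exp (-(b/2) * v k)) :
    Summable fun k => v k * Real.exp (-b * v k) := by
  apply Summable.of_nonneg_of_le
    (fun k => mul_nonneg (hv k) (Real.exp_pos _).le)
    (fun k => ?_) (h.mul_left (2/b))
  have : Real.exp (-b * v k) = Real.exp (-(b/2 * v k)) * Real.exp (-(b/2) * v k) := by
    rw [← Real.exp_add]; ring_nf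
  rw [this, ← mul_assoc]
  apply mul_le_mul_of_nonneg_right _ (Real.exp_pos _).le
  have := mul_exp_le (c := b/2) (x := v k) (by linarith) (hv k)
  calc v k * Real.exp (-(b/2 * v k)) ≤ 1/(b/2) := this
    _ = 2/b := by field_simp

lemma int_sq_ge_abs (k : ℤ) : |(k:ℝ)| ≤ (k:ℝ)^2 := by
  rcases eq_or_ne k 0 with rfl | hk
  · simp
  · have h1 : (1:ℝ) ≤ |(k:ℝ)| := by
      rw [← Int.cast_abs]; exact_mod_cast Int.one_le_abs (by simpa using hk)
    calc |(k:ℝ)| = 1 * |(k:ℝ)| := (one_mul _).symm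
      _ ≤ |(k:ℝ)| * |(k:ℝ)| := mul_le_mul_of_nonneg_right h1 (abs_nonneg _)
      _ = (k:ℝ)^2 := by rw [← abs_mul, ← sq, abs_sq]

lemma shift_sq_ge (k : ℤ) : |(k:ℝ)|/4 ≤ ((k:ℝ)-1/2)^2 := by
  rcases le_or_gt 1 k with hk | hk
  · have h1 : (1:ℝ) ≤ (k:ℝ) := by exact_mod_cast hk
    have : |(k:ℝ)| = (k:ℝ) := abs_of_pos (by linarith)
    nlinarith [sq_nonneg ((k:ℝ) - 1)]
  · have h1 : (k:ℝ) ≤ 0 := by exact_mod_cast Int.lt_add_one_iff.mp hk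
    have : |(k:ℝ)| = -(k:ℝ) := abs_of_nonpos h1
    nlinarith

lemma sum_exp_sq {b : ℝ} (hb : 0 < b) : Summable fun k : ℤ => Real.exp (-b * (k:ℝ)^2) := by
  apply Summable.of_nonneg_of_le (fun k => (Real.exp_pos _).le) (fun k => ?_) (sum_exp_abs hb)
  apply Real.exp_le_exp.mpr
  have := int_sq_ge_abs k; nlinarith

lemma sum_exp_shift {b : ℝ} (hb : 0 < b) :
    Summable fun k : ℤ => Real.exp (-b * ((k:ℝ)-1/2)^2) := by
  apply Summable.of_nonneg_of_le (fun k => (Real.exp_pos _).le) (fun k => ?_)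
    (sum_exp_abs (b := b/4) (by linarith))
  apply Real.exp_le_exp.mpr
  have := shift_sq_ge k; nlinarith

lemma sum_sq_exp {b : ℝ} (hb : 0 < b) :
    Summable fun k : ℤ => (k:ℝ)^2 * Real.exp (-b * (k:ℝ)^2) :=
  summable_mul_exp hb (fun k => sq_nonneg _) (sum_exp_sq (by linarith))

lemma sum_shiftsq_exp {b : ℝ} (hb : 0 < b) :
    Summable fun k : ℤ => ((k:ℝ)-1/2)^2 * Real.exp (-b * ((k:ℝ)-1/2)^2) :=
  summable_mul_exp hb (fun k => sq_nonneg _) (sum_exp_shift (by linarith))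

lemma q_lb (n : ℤ) : (1/4:ℝ) ≤ ((n:ℝ)-1/2)^2 := by
  rcases le_or_gt n 0 with h | h
  · have : (n:ℝ) ≤ 0 := by exact_mod_cast h
    nlinarith
  · have : (1:ℝ) ≤ (n:ℝ) := by exact_mod_cast h
    nlinarith

/-! ### The theta functions -/

noncomputable def tF (t : ℝ) : ℝ := ∑' k : ℤ, (-1:ℝ)^k * Real.exp (-(π^2*(k:ℝ)^2/8) * t)
noncomputable def tG (t : ℝ) : ℝ :=
  ∑' k : ℤ, (-1:ℝ)^k * (Real.exp (-(π^2*(k:ℝ)^2/8) * t) * (-(π^2*(k:ℝ)^2/8)))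
noncomputable def tH (t : ℝ) : ℝ := ∑' n : ℤ, Real.exp (-(8/t) * ((n:ℝ)-1/2)^2)
noncomputable def tH' (t : ℝ) : ℝ :=
  ∑' n : ℤ, Real.exp (-(8/t) * ((n:ℝ)-1/2)^2) * (8*((n:ℝ)-1/2)^2/t^2)

/-! ### Poisson summation / Jacobi transformation -/

lemma poisson (t : ℝ) (ht : 0 < t) :
    ∑' k : ℤ, (-1:ℝ)^k * Real.exp (-(π^2*(k:ℝ)^2/8) * t)
      = (Real.sqrt (t*π/8))⁻¹ * tH t := by
  have hpi := Real.pi_pos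
  have ha : (0:ℝ) < t*π/8 := by positivity
  have key := Complex.tsum_exp_neg_quadratic (a := ((t*π/8 : ℝ) : ℂ))
    (by simpa using ha) (Complex.I/2)
  have hL : ∀ n : ℤ, Complex.exp (-↑π * ((t*π/8 : ℝ) : ℂ) * (n:ℂ)^2 + 2*↑π*(Complex.I/2)*(n:ℂ))
      = ((((-1:ℝ))^n * Real.exp (-(π^2*(n:ℝ)^2/8) * t) : ℝ) : ℂ) := by
    intro n
    rw [Complex.exp_add]
    have h1 : (-↑π * ((t*π/8 : ℝ) : ℂ) * (n:ℂ)^2 : ℂ) = ((-(π^2*(n:ℝ)^2/8) * t : ℝ) : ℂ) := by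
      push_cast; ring
    have h2 : (2*↑π*(Complex.I/2)*(n:ℂ) : ℂ) = (n:ℂ) * (↑π * Complex.I) := by ring
    rw [h1, h2, Complex.exp_int_mul, Complex.exp_pi_mul_I, ← Complex.ofReal_exp]
    push_cast
    ring
  have hR : ∀ n : ℤ, Complex.exp (-↑π / ((t*π/8 : ℝ) : ℂ) * ((n:ℂ) + Complex.I*(Complex.I/2))^2)
      = ((Real.exp (-(8/t) * ((n:ℝ)-1/2)^2) : ℝ) : ℂ) := by
    intro n
    have h1 : ((n:ℂ) + Complex.I*(Complex.I/2))^2 = (((((n:ℝ)-1/2)^2 : ℝ)) : ℂ) := by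
      rw [show Complex.I*(Complex.I/2) = Complex.I*Complex.I/2 by ring, Complex.I_mul_I]
      push_cast; ring
    have h2 : (-↑π / ((t*π/8 : ℝ) : ℂ) : ℂ) = ((-(8/t) : ℝ) : ℂ) := by
      have hne : ((t*π/8 : ℝ) : ℂ) ≠ 0 := by exact_mod_cast ha.ne'
      have htne : (t:ℂ) ≠ 0 := by exact_mod_cast ht.ne'
      rw [div_eq_iff hne]
      push_cast
      field_simp
    rw [h1, h2, ← Complex.ofReal_mul, ← Complex.ofReal_exp]
  have hcpow : (((t*π/8 : ℝ) : ℂ) ^ (1/2 : ℂ) : ℂ) = ((Real.sqrt (t*π/8) : ℝ) : ℂ) := by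
    rw [Real.sqrt_eq_rpow, Complex.ofReal_cpow ha.le]
    norm_num
  rw [tsum_congr hL, tsum_congr hR, hcpow] at key
  rw [← Complex.ofReal_tsum, ← Complex.ofReal_tsum] at key
  have : ((1:ℂ) / ((Real.sqrt (t*π/8) : ℝ) : ℂ)) = (((Real.sqrt (t*π/8))⁻¹ : ℝ) : ℂ) := by
    push_cast; ring
  rw [this, ← Complex.ofReal_mul] at key
  exact_mod_cast key

/-! ### Differentiation of `tF` -/

lemma term_hasDeriv (k : ℤ) (y : ℝ) :
    HasDerivAt (fun y : ℝ => (-1:ℝ)^k * Real.exp (-(π^2*(k:ℝ)^2/8) * y))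
      ((-1:ℝ)^k * (Real.exp (-(π^2*(k:ℝ)^2/8) * y) * (-(π^2*(k:ℝ)^2/8)))) y := by
  have h1 : HasDerivAt (fun y : ℝ => -(π^2*(k:ℝ)^2/8) * y) (-(π^2*(k:ℝ)^2/8)) y := by
    simpa using (hasDerivAt_id y).const_mul (-(π^2*(k:ℝ)^2/8))
  exact (h1.exp).const_mul _

lemma norm_term (k : ℤ) (x c : ℝ) : ‖(-1:ℝ)^k * x * c‖ = ‖x * c‖ := by
  rw [norm_mul, norm_mul, norm_mul, norm_zpow]
  norm_num

lemma term_bound (k : ℤ) {t y : ℝ} (ht : 0 < t) (hy : t/2 < y) :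
    ‖(-1:ℝ)^k * (Real.exp (-(π^2*(k:ℝ)^2/8) * y) * (-(π^2*(k:ℝ)^2/8)))‖
      ≤ (π^2/8) * ((k:ℝ)^2 * Real.exp (-(π^2*t/16) * (k:ℝ)^2)) := by
  have hpi := Real.pi_pos
  rw [show (-1:ℝ)^k * (Real.exp (-(π^2*(k:ℝ)^2/8) * y) * (-(π^2*(k:ℝ)^2/8)))
      = (-1:ℝ)^k * Real.exp (-(π^2*(k:ℝ)^2/8) * y) * (-(π^2*(k:ℝ)^2/8)) by ring,
    norm_term]
  rw [norm_mul, Real.norm_eq_abs, Real.norm_eq_abs, abs_of_pos (Real.exp_pos _),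
    abs_neg, abs_of_nonneg (by positivity : (0:ℝ) ≤ π^2*(k:ℝ)^2/8)]
  rw [show (π^2/8) * ((k:ℝ)^2 * Real.exp (-(π^2*t/16) * (k:ℝ)^2))
      = Real.exp (-(π^2*t/16) * (k:ℝ)^2) * (π^2*(k:ℝ)^2/8) by ring]
  have h1 : Real.exp (-(π^2*(k:ℝ)^2/8) * y) ≤ Real.exp (-(π^2*t/16) * (k:ℝ)^2) := by
    apply Real.exp_le_exp.mpr
    have : (0:ℝ) ≤ π^2*(k:ℝ)^2/8 := by positivity
    nlinarith
  exact mul_le_mul_of_nonneg_right h1 (by positivity)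

lemma tF_summable {t : ℝ} (ht : 0 < t) :
    Summable fun k : ℤ => (-1:ℝ)^k * Real.exp (-(π^2*(k:ℝ)^2/8) * t) := by
  have hpi := Real.pi_pos
  apply Summable.of_norm
  apply Summable.of_nonneg_of_le (fun k => norm_nonneg _) (fun k => ?_)
    (sum_exp_sq (b := π^2*t/8) (by positivity))
  rw [norm_mul, norm_zpow]
  simp only [norm_neg, norm_one, one_zpow, one_mul, Real.norm_eq_abs,
    abs_of_pos (Real.exp_pos _)]
  apply Real.exp_le_exp.mpr
  apply le_of_eq; ring

lemma tF_hasDeriv {t : ℝ} (ht : 0 < t) : HasDerivAt tF (tG t) t := by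
  have hpi := Real.pi_pos
  have hmem : t ∈ Set.Ioo (t/2) (t+1) := ⟨by linarith, by linarith⟩
  apply hasDerivAt_tsum_of_isPreconnected
    (u := fun k : ℤ => (π^2/8) * ((k:ℝ)^2 * Real.exp (-(π^2*t/16) * (k:ℝ)^2)))
    ((sum_sq_exp (b := π^2*t/16) (by positivity)).mul_left _)
    isOpen_Ioo isPreconnected_Ioo (fun k y _ => term_hasDeriv k y)
    (fun k y hy => term_bound k ht hy.1) hmem (tF_summable ht) hmem

/-! ### Limits of `tF` at `∞` and `0⁺` -/

lemma tF_atTop : Filter.Tendsto tF Filter.atTop (𝓝 1) := by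
  have hpi := Real.pi_pos
  have h := tendsto_tsum_of_dominated_convergence
    (f := fun (t : ℝ) (k : ℤ) => (-1:ℝ)^k * Real.exp (-(π^2*(k:ℝ)^2/8) * t))
    (g := fun k : ℤ => if k = 0 then 1 else 0)
    (bound := fun k : ℤ => Real.exp (-(π^2/8) * (k:ℝ)^2))
    (𝓕 := Filter.atTop) (sum_exp_sq (by positivity)) (fun k => ?_) ?_
  · have : (∑' k : ℤ, if k = 0 then (1:ℝ) else 0) = 1 := tsum_ite_eq 0 1
    rw [this] at h
    exact h
  · rcases eq_or_ne k 0 with rfl | hk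
    · simpa using tendsto_const_nhds
    · simp only [if_neg hk]
      have hc : (0:ℝ) < π^2*(k:ℝ)^2/8 := by
        have : (k:ℝ) ≠ 0 := Int.cast_ne_zero.mpr hk
        positivity
      have h2 : Filter.Tendsto (fun t : ℝ => Real.exp (-(π^2*(k:ℝ)^2/8) * t))
          Filter.atTop (𝓝 0) := by
        apply Real.tendsto_exp_atBot.comp
        exact Filter.Tendsto.const_mul_atTop_of_neg (neg_neg_iff_pos.mpr hc) tendsto_id
      simpa using h2.const_mul ((-1:ℝ)^k)
  · filter_upwards [Filter.eventually_ge_atTop (1:ℝ)] with t ht k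
    rw [norm_mul, norm_zpow]
    simp only [norm_neg, norm_one, one_zpow, one_mul, Real.norm_eq_abs,
      abs_of_pos (Real.exp_pos _)]
    apply Real.exp_le_exp.mpr
    have : (0:ℝ) ≤ π^2*(k:ℝ)^2/8 := by positivity
    nlinarith

lemma tH_nonneg (t : ℝ) : 0 ≤ tH t := tsum_nonneg (fun n => (Real.exp_pos _).le)

lemma tH_bound {t : ℝ} (ht : 0 < t) (ht1 : t ≤ 1) :
    tH t ≤ Real.exp 1 * Real.exp (-2/t) * ∑' n : ℤ, Real.exp (-4 * ((n:ℝ)-1/2)^2) := by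
  have h8t : (4:ℝ) ≤ 8/t - 4 := by
    rw [le_sub_iff_add_le, ← sub_nonneg]
    have : 8/t ≥ 8 := by rw [ge_iff_le, le_div_iff₀ ht]; linarith
    linarith
  calc tH t ≤ ∑' n : ℤ, (Real.exp 1 * Real.exp (-2/t)) * Real.exp (-4 * ((n:ℝ)-1/2)^2) := by
        apply Summable.tsum_le_tsum _ (sum_exp_shift (by positivity : (0:ℝ) < 8/t))
          (((sum_exp_shift (by norm_num : (0:ℝ) < 4)).mul_left _))
        intro n
        rw [← Real.exp_add, ← Real.exp_add]
        apply Real.exp_le_exp.mpr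
        have hq := q_lb n
        set q : ℝ := ((n:ℝ)-1/2)^2 with hqdef
        have hdiff : -(8/t)*q - (1 + -2/t + -4*q) = (1/t)*((t-2)*(4*q-1)) := by
          field_simp
          ring
        have hprod : (1/t)*((t-2)*(4*q-1)) ≤ 0 := by
          apply mul_nonpos_of_nonneg_of_nonpos (by positivity)
          apply mul_nonpos_of_nonpos_of_nonneg (by linarith) (by linarith)
        linarith
    _ = Real.exp 1 * Real.exp (-2/t) * ∑' n : ℤ, Real.exp (-4 * ((n:ℝ)-1/2)^2) :=
        tsum_mul_left

lemma tF_zero : Filter.Tendsto tF (𝓝[>] (0:ℝ)) (𝓝 0) := by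
  have hpi := Real.pi_pos
  set D : ℝ := ∑' n : ℤ, Real.exp (-4 * ((n:ℝ)-1/2)^2) with hD
  have hDpos : 0 ≤ D := tsum_nonneg (fun n => (Real.exp_pos _).le)
  have hbig : Filter.Tendsto
      (fun t : ℝ => (Real.exp 1 * D) * ((Real.sqrt (t*π/8))⁻¹ * Real.exp (-2/t)))
      (𝓝[>] (0:ℝ)) (𝓝 0) := by
    have key : Filter.Tendsto (fun x : ℝ => Real.sqrt (8/π) * (x ^ (1/2:ℝ) * Real.exp (-2*x)))
        Filter.atTop (𝓝 0) := by
      simpa using (tendsto_rpow_mul_exp_neg_mul_atTop_nhds_zero (1/2) 2 (by norm_num)).const_mul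
        (Real.sqrt (8/π))
    have comp := key.comp tendsto_inv_nhdsGT_zero
    have heq : ∀ᶠ t in 𝓝[>] (0:ℝ),
        ((fun x : ℝ => Real.sqrt (8/π) * (x ^ (1/2:ℝ) * Real.exp (-2*x))) ∘ (fun t => t⁻¹)) t
          = (Real.sqrt (t*π/8))⁻¹ * Real.exp (-2/t) := by
      filter_upwards [self_mem_nhdsWithin] with t ht
      have ht' : (0:ℝ) < t := ht
      simp only [Function.comp_apply]
      have h8 : (8/π) * t⁻¹ = (t*π/8)⁻¹ := by field_simp
      have hs : (Real.sqrt (t*π/8))⁻¹ = Real.sqrt (8/π) * Real.sqrt t⁻¹ := by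
        rw [← Real.sqrt_inv, ← h8, Real.sqrt_mul (by positivity)]
      rw [← Real.sqrt_eq_rpow, hs, show -2*t⁻¹ = -2/t by ring]
      ring
    have := (Filter.Tendsto.congr' heq comp).const_mul (Real.exp 1 * D)
    simpa using this
  apply squeeze_zero_norm' _ hbig
  filter_upwards [Ioc_mem_nhdsGT_of_mem (by norm_num : (0:ℝ) ∈ Set.Ico (0:ℝ) 1)]
    with t ht
  rw [show tF t = (Real.sqrt (t*π/8))⁻¹ * tH t from poisson t ht.1]
  rw [Real.norm_eq_abs, abs_of_nonneg (mul_nonneg (by positivity) (tH_nonneg t))]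
  calc (Real.sqrt (t*π/8))⁻¹ * tH t
      ≤ (Real.sqrt (t*π/8))⁻¹ * (Real.exp 1 * Real.exp (-2/t) * D) :=
        mul_le_mul_of_nonneg_left (tH_bound ht.1 ht.2) (by positivity)
    _ = Real.exp 1 * D * ((Real.sqrt (t*π/8))⁻¹ * Real.exp (-2/t)) := by ring

/-! ### Continuity of `tG` on `(0,∞)` -/

lemma tG_contAt {t : ℝ} (ht : 0 < t) : ContinuousAt tG t := by
  have hpi := Real.pi_pos
  have h := tendsto_tsum_of_dominated_convergence
    (f := fun (y : ℝ) (k : ℤ) => (-1:ℝ)^k * (Real.exp (-(π^2*(k:ℝ)^2/8) * y) * (-(π^2*(k:ℝ)^2/8))))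
    (g := fun k : ℤ => (-1:ℝ)^k * (Real.exp (-(π^2*(k:ℝ)^2/8) * t) * (-(π^2*(k:ℝ)^2/8))))
    (bound := fun k : ℤ => (π^2/8) * ((k:ℝ)^2 * Real.exp (-(π^2*t/16) * (k:ℝ)^2)))
    (𝓕 := 𝓝 t) ((sum_sq_exp (b := π^2*t/16) (by positivity)).mul_left _) (fun k => ?_) ?_
  · exact h
  · have hc : Continuous (fun y : ℝ =>
        (-1:ℝ)^k * (Real.exp (-(π^2*(k:ℝ)^2/8) * y) * (-(π^2*(k:ℝ)^2/8)))) := by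
      exact continuous_const.mul
        ((Real.continuous_exp.comp (continuous_const.mul continuous_id)).mul continuous_const)
    exact hc.tendsto t
  · filter_upwards [isOpen_Ioi.mem_nhds (show t/2 < t by linarith)] with y hy k
    exact term_bound k ht hy

/-! ### Differentiation of `tH` -/

lemma tH_term_hasDeriv (n : ℤ) {y : ℝ} (hy : 0 < y) :
    HasDerivAt (fun y : ℝ => Real.exp (-(8/y) * ((n:ℝ)-1/2)^2))
      (Real.exp (-(8/y) * ((n:ℝ)-1/2)^2) * (8*((n:ℝ)-1/2)^2/y^2)) y := by
  set q : ℝ := ((n:ℝ)-1/2)^2 with hq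
  have h1 : HasDerivAt (fun y : ℝ => -(8/y) * q) (8*q/y^2) y := by
    have h0 : HasDerivAt (fun y : ℝ => (-8*q) * y⁻¹) ((-8*q) * (-(y^2)⁻¹)) y :=
      (hasDerivAt_inv hy.ne').const_mul _
    have h0' : HasDerivAt (fun y : ℝ => -(8/y) * q) ((-8*q) * (-(y^2)⁻¹)) y := by
      apply h0.congr_of_eventuallyEq
      filter_upwards with z
      ring
    have : (-8*q) * (-(y^2)⁻¹) = 8*q/y^2 := by field_simp
    rwa [this] at h0'
  exact h1.exp

lemma tH_hasDeriv {t : ℝ} (ht : 0 < t) : HasDerivAt tH (tH' t) t := by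
  have hmem : t ∈ Set.Ioo (t/2) (t+1) := ⟨by linarith, by linarith⟩
  apply hasDerivAt_tsum_of_isPreconnected
    (u := fun n : ℤ => (32/t^2) * (((n:ℝ)-1/2)^2 * Real.exp (-(8/(t+1)) * ((n:ℝ)-1/2)^2)))
    ((sum_shiftsq_exp (b := 8/(t+1)) (by positivity)).mul_left _)
    isOpen_Ioo isPreconnected_Ioo (fun n y hy => tH_term_hasDeriv n (by
      rcases hy with ⟨h1, _⟩; linarith))
    (fun n y hy => ?_) hmem
    (sum_exp_shift (b := 8/t) (by positivity)) hmem
  rcases hy with ⟨hy1, hy2⟩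
  have hy0 : 0 < y := by linarith
  set q : ℝ := ((n:ℝ)-1/2)^2 with hqdef
  have hq0 : 0 ≤ q := sq_nonneg _
  rw [Real.norm_eq_abs, abs_of_nonneg (by positivity)]
  show Real.exp (-(8/y) * q) * (8*q/y^2) ≤ (32/t^2) * (q * Real.exp (-(8/(t+1)) * q))
  have h1 : Real.exp (-(8/y) * q) ≤ Real.exp (-(8/(t+1)) * q) := by
    apply Real.exp_le_exp.mpr
    have : 8/(t+1) ≤ 8/y := by
      apply div_le_div_of_nonneg_left (by norm_num) hy0 (by linarith)
    nlinarith
  have h2 : 8*q/y^2 ≤ 32*q/t^2 := by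
    rw [div_le_div_iff₀ (by positivity) (by positivity)]
    have h3 : t^2/4 ≤ y^2 := by nlinarith
    nlinarith [mul_nonneg hq0 (sub_nonneg.mpr h3)]
  calc Real.exp (-(8/y) * q) * (8*q/y^2)
      ≤ Real.exp (-(8/(t+1)) * q) * (32*q/t^2) := by
        apply mul_le_mul h1 h2 (by positivity) (Real.exp_pos _).le
    _ = (32/t^2) * (q * Real.exp (-(8/(t+1)) * q)) := by ring

/-! ### Identification of `tG` with the derivative of the transformed series -/

noncomputable def sder (t : ℝ) : ℝ :=
  -((π/8) / (2 * Real.sqrt (t*π/8))) / (Real.sqrt (t*π/8))^2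

lemma sqrtinv_hasDeriv {t : ℝ} (ht : 0 < t) :
    HasDerivAt (fun y : ℝ => (Real.sqrt (y*π/8))⁻¹) (sder t) t := by
  have hpi := Real.pi_pos
  have ha : (0:ℝ) < t*π/8 := by positivity
  have h1 : HasDerivAt (fun y : ℝ => y*π/8) (π/8) t := by
    have h0 := (hasDerivAt_id t).mul_const (π/8)
    have h0' : HasDerivAt (fun y : ℝ => y*π/8) (1*(π/8)) t := by
      apply h0.congr_of_eventuallyEq
      filter_upwards with z
      simp [mul_div_assoc]
    simpa using h0'
  have h2 : HasDerivAt (fun y : ℝ => Real.sqrt (y*π/8)) ((π/8) / (2 * Real.sqrt (t*π/8))) t :=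
    h1.sqrt ha.ne'
  exact h2.inv (Real.sqrt_ne_zero'.mpr ha)

lemma tG_eq_phi {t : ℝ} (ht : 0 < t) :
    tG t = sder t * tH t + (Real.sqrt (t*π/8))⁻¹ * tH' t := by
  have hphi : HasDerivAt (fun y : ℝ => (Real.sqrt (y*π/8))⁻¹ * tH y)
      (sder t * tH t + (Real.sqrt (t*π/8))⁻¹ * tH' t) t :=
    (sqrtinv_hasDeriv ht).mul (tH_hasDeriv ht)
  have hFphi : HasDerivAt tF (sder t * tH t + (Real.sqrt (t*π/8))⁻¹ * tH' t) t := by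
    apply hphi.congr_of_eventuallyEq
    filter_upwards [isOpen_Ioi.mem_nhds (Set.mem_Ioi.mpr ht)] with y hy
    exact poisson y hy
  exact (tF_hasDeriv ht).unique hFphi

/-! ### Boundedness of `tG` near `0` -/

lemma tH'_nonneg (t : ℝ) (ht : 0 < t) : 0 ≤ tH' t :=
  tsum_nonneg (fun n => mul_nonneg (Real.exp_pos _).le (by positivity))

lemma tH'_bound {t : ℝ} (ht : 0 < t) (ht1 : t ≤ 1) :
    tH' t ≤ (2/t^2) * (Real.exp 1 * Real.exp (-1/t))
      * ∑' n : ℤ, Real.exp (-4 * ((n:ℝ)-1/2)^2) := by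
  have ht4 : (4:ℝ) ≤ 4/t := by rw [le_div_iff₀ ht]; linarith
  calc tH' t ≤ ∑' n : ℤ, ((2/t^2) * (Real.exp 1 * Real.exp (-1/t)))
        * Real.exp (-4 * ((n:ℝ)-1/2)^2) := by
        apply Summable.tsum_le_tsum _ ?_ (((sum_exp_shift (by norm_num : (0:ℝ) < 4)).mul_left _))
        · intro n
          set q : ℝ := ((n:ℝ)-1/2)^2 with hqdef
          have hq0 : 0 ≤ q := sq_nonneg _
          have hq := q_lb n
          -- split exp(-(8/t)q) = exp(-(4/t)q) * exp(-(4/t)q)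
          have hsplit : Real.exp (-(8/t) * q) = Real.exp (-(4/t) * q) * Real.exp (-(4/t) * q) := by
            rw [← Real.exp_add]; congr 1; ring
          have hA : q * Real.exp (-(4/t) * q) ≤ 1/4 := by
            have h1 : Real.exp (-(4/t) * q) ≤ Real.exp (-(4*q)) := by
              apply Real.exp_le_exp.mpr
              nlinarith [mul_nonneg (sub_nonneg.mpr ht4) hq0]
            calc q * Real.exp (-(4/t) * q) ≤ q * Real.exp (-(4*q)) :=
                  mul_le_mul_of_nonneg_left h1 hq0
              _ ≤ 1/4 := by
                  have := mul_exp_le (c := 4) (x := q) (by norm_num) hq0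
                  linarith
          have hB : Real.exp (-(4/t) * q) ≤ Real.exp 1 * Real.exp (-1/t) * Real.exp (-4*q) := by
            rw [← Real.exp_add, ← Real.exp_add]
            apply Real.exp_le_exp.mpr
            have hdiff : -(4/t)*q - (1 + -1/t + -4*q) = (1/t)*((t-1)*(4*q-1)) := by
              field_simp
              ring
            have hprod : (1/t)*((t-1)*(4*q-1)) ≤ 0 := by
              apply mul_nonpos_of_nonneg_of_nonpos (by positivity)
              apply mul_nonpos_of_nonpos_of_nonneg (by linarith) (by linarith)
            linarith
          show Real.exp (-(8/t) * q) * (8*q/t^2)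
            ≤ (2/t^2) * (Real.exp 1 * Real.exp (-1/t)) * Real.exp (-4*q)
          rw [hsplit]
          calc Real.exp (-(4/t) * q) * Real.exp (-(4/t) * q) * (8*q/t^2)
              = (8/t^2) * (q * Real.exp (-(4/t) * q)) * Real.exp (-(4/t) * q) := by ring
            _ ≤ (8/t^2) * (1/4) * (Real.exp 1 * Real.exp (-1/t) * Real.exp (-4*q)) := by
                exact mul_le_mul (mul_le_mul_of_nonneg_left hA (by positivity)) hB
                  (Real.exp_pos _).le (by positivity)
            _ = (2/t^2) * (Real.exp 1 * Real.exp (-1/t)) * Real.exp (-4*q) := by ring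
        · -- summability of the LHS
          apply Summable.of_nonneg_of_le
            (fun n => mul_nonneg (Real.exp_pos _).le (by positivity)) (fun n => ?_)
            ((sum_shiftsq_exp (b := 8/t) (by positivity)).mul_left (8/t^2))
          set q : ℝ := ((n:ℝ)-1/2)^2
          show Real.exp (-(8/t) * q) * (8*q/t^2) ≤ (8/t^2) * (q * Real.exp (-(8/t) * q))
          apply le_of_eq; ring
    _ = (2/t^2) * (Real.exp 1 * Real.exp (-1/t)) * ∑' n : ℤ, Real.exp (-4 * ((n:ℝ)-1/2)^2) :=
        tsum_mul_left

/-! ### `tG` is bounded on `(0,1]` -/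

lemma exp_neg_inv_le {t : ℝ} (ht : 0 < t) : Real.exp (-1/t) ≤ t := by
  have hu : 1/t ≤ Real.exp (1/t) := by
    have := Real.add_one_le_exp (1/t); linarith
  have h0 : (0:ℝ) < 1/t := by positivity
  have h3 : (Real.exp (1/t))⁻¹ ≤ (1/t)⁻¹ := inv_anti₀ h0 hu
  rw [show (-1/t : ℝ) = -(1/t) by ring, Real.exp_neg]
  simpa using h3

lemma exp_neg_two_le {t : ℝ} (ht : 0 < t) : Real.exp (-2/t) ≤ t^2 := by
  have h := exp_neg_inv_le ht
  have h2 : Real.exp (-2/t) = Real.exp (-1/t) * Real.exp (-1/t) := by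
    rw [← Real.exp_add]; congr 1; ring
  rw [h2, sq]
  exact mul_le_mul h h (Real.exp_pos _).le ht.le

lemma exp_neg_one_le_cube {t : ℝ} (ht : 0 < t) : Real.exp (-1/t) ≤ 6*t^3 := by
  have h0 : (0:ℝ) < 1/t := by positivity
  have h2 : (1/t)^3/6 ≤ Real.exp (1/t) := by
    have h := Real.pow_div_factorial_le_exp (1/t) h0.le 3
    norm_num [Nat.factorial] at h
    rw [one_div, inv_pow]
    exact h
  have h1 : (0:ℝ) < (1/t)^3/6 := by positivity
  have h3 : (Real.exp (1/t))⁻¹ ≤ ((1/t)^3/6)⁻¹ := inv_anti₀ h1 h2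
  have h4 : ((1/t)^3/6 : ℝ)⁻¹ = 6*t^3 := by field_simp
  rw [show (-1/t : ℝ) = -(1/t) by ring, Real.exp_neg]
  rw [h4] at h3
  exact h3

lemma tG_bdd : ∃ M : ℝ, ∀ t ∈ Set.Ioc (0:ℝ) 1, |tG t| ≤ M := by
  have hpi := Real.pi_pos
  set D : ℝ := ∑' n : ℤ, Real.exp (-4 * ((n:ℝ)-1/2)^2) with hD
  have hDpos : 0 ≤ D := tsum_nonneg (fun n => (Real.exp_pos _).le)
  set E : ℝ := Real.exp 1 with hE
  have hEpos : 0 < E := Real.exp_pos 1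
  set r : ℝ := Real.sqrt (π/8) with hr
  have hrpos : 0 < r := Real.sqrt_pos.mpr (by positivity)
  refine ⟨E*D/(2*r) + 2*E*D/r * 6, fun t ht => ?_⟩
  obtain ⟨ht0, ht1⟩ := ht
  have ha : (0:ℝ) < t*π/8 := by positivity
  set s : ℝ := Real.sqrt (t*π/8) with hs
  have hspos : 0 < s := Real.sqrt_pos.mpr ha
  have hs2 : s^2 = t*π/8 := Real.sq_sqrt ha.le
  have hsmul : s = Real.sqrt t * r := by
    rw [hs, hr, ← Real.sqrt_mul ht0.le]
    congr 1; ring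
  have htsqrt : t ≤ Real.sqrt t := by
    nlinarith [Real.sq_sqrt ht0.le, Real.sqrt_nonneg t, Real.sqrt_le_one.mpr ht1]
  have hsge : t*r ≤ s := by
    rw [hsmul]
    exact mul_le_mul_of_nonneg_right htsqrt hrpos.le
  have htr : (0:ℝ) < t*r := by positivity
  -- |sder t| = 1/(2*(s*t))
  have hsder : |sder t| = 1/(2*(s*t)) := by
    have hneg : sder t ≤ 0 := by
      rw [sder]
      apply div_nonpos_of_nonpos_of_nonneg _ (by positivity)
      simp only [neg_nonpos]
      positivity
    rw [abs_of_nonpos hneg, sder, ← hs, hs2]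
    field_simp
  rw [tG_eq_phi ht0]
  calc |sder t * tH t + (Real.sqrt (t*π/8))⁻¹ * tH' t|
      ≤ |sder t| * tH t + s⁻¹ * tH' t := by
        rw [← hs]
        apply (abs_add_le _ _).trans
        rw [abs_mul, abs_of_nonneg (tH_nonneg t), abs_mul,
          abs_of_nonneg (inv_nonneg.mpr hspos.le), abs_of_nonneg (tH'_nonneg t ht0)]
    _ ≤ (1/(2*((t*r)*t))) * (E * Real.exp (-2/t) * D)
        + (t*r)⁻¹ * ((2/t^2) * (E*Real.exp (-1/t)) * D) := by
        apply add_le_add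
        · rw [hsder]
          apply mul_le_mul _ (tH_bound ht0 ht1) (tH_nonneg t) (by positivity)
          apply one_div_le_one_div_of_le (by positivity)
          nlinarith [mul_le_mul_of_nonneg_right hsge ht0.le]
        · apply mul_le_mul _ (tH'_bound ht0 ht1) (tH'_nonneg t ht0) (by positivity)
          exact inv_anti₀ htr hsge
    _ = (E*D/(2*r)) * (Real.exp (-2/t)/t^2) + (2*E*D/r) * (Real.exp (-1/t)/t^3) := by
        field_simp
    _ ≤ (E*D/(2*r)) * 1 + (2*E*D/r) * 6 := by
        apply add_le_add
        · apply mul_le_mul_of_nonneg_left _ (by positivity)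
          rw [div_le_one (by positivity)]
          simpa using exp_neg_two_le ht0
        · apply mul_le_mul_of_nonneg_left _ (by positivity)
          rw [div_le_iff₀ (by positivity)]
          calc Real.exp (-1/t) ≤ 6*t^3 := exp_neg_one_le_cube ht0
            _ = 6*t^3 := rfl
    _ = E*D/(2*r) + 2*E*D/r * 6 := by ring

/-! ### Integrability of `tG` on `(0,∞)` -/

lemma tG_norm_eq (t : ℝ) (k : ℤ) :
    ‖(-1:ℝ)^k * (Real.exp (-(π^2*(k:ℝ)^2/8) * t) * (-(π^2*(k:ℝ)^2/8)))‖
      = (π^2/8) * ((k:ℝ)^2 * Real.exp (-(π^2*t/8) * (k:ℝ)^2)) := by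
  rw [show (-1:ℝ)^k * (Real.exp (-(π^2*(k:ℝ)^2/8) * t) * (-(π^2*(k:ℝ)^2/8)))
      = (-1:ℝ)^k * Real.exp (-(π^2*(k:ℝ)^2/8) * t) * (-(π^2*(k:ℝ)^2/8)) by ring,
    norm_term]
  rw [norm_mul, Real.norm_eq_abs, Real.norm_eq_abs, abs_of_pos (Real.exp_pos _),
    abs_neg, abs_of_nonneg (by positivity : (0:ℝ) ≤ π^2*(k:ℝ)^2/8)]
  rw [show -(π^2*(k:ℝ)^2/8) * t = -(π^2*t/8) * (k:ℝ)^2 by ring]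
  ring

lemma tG_norm_summable {t : ℝ} (ht : 0 < t) :
    Summable fun k : ℤ =>
      ‖(-1:ℝ)^k * (Real.exp (-(π^2*(k:ℝ)^2/8) * t) * (-(π^2*(k:ℝ)^2/8)))‖ := by
  have hpi := Real.pi_pos
  exact Summable.congr ((sum_sq_exp (b := π^2*t/8) (by positivity)).mul_left (π^2/8))
    (fun k => (tG_norm_eq t k).symm)

lemma tG_tail_bound {t : ℝ} (ht : 1 ≤ t) :
    |tG t| ≤ Real.exp (-(π^2/8) * (t-1))
      * ∑' k : ℤ, (π^2/8) * ((k:ℝ)^2 * Real.exp (-(π^2/8) * (k:ℝ)^2)) := by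
  have hpi := Real.pi_pos
  have ht0 : (0:ℝ) < t := by linarith
  calc |tG t| ≤ ∑' k : ℤ,
        ‖(-1:ℝ)^k * (Real.exp (-(π^2*(k:ℝ)^2/8) * t) * (-(π^2*(k:ℝ)^2/8)))‖ := by
        rw [← Real.norm_eq_abs]
        exact norm_tsum_le_tsum_norm (tG_norm_summable ht0)
    _ ≤ ∑' k : ℤ, Real.exp (-(π^2/8) * (t-1))
          * ((π^2/8) * ((k:ℝ)^2 * Real.exp (-(π^2/8) * (k:ℝ)^2))) := by
        apply Summable.tsum_le_tsum _ (tG_norm_summable ht0)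
          (((sum_sq_exp (b := π^2/8) (by positivity)).mul_left (π^2/8)).mul_left _)
        intro k
        rw [tG_norm_eq]
        rcases eq_or_ne k 0 with rfl | hk
        · simp
        · have hk1 : (1:ℝ) ≤ (k:ℝ)^2 := by
            have h1 : (1:ℝ) ≤ |(k:ℝ)| := by
              rw [← Int.cast_abs]; exact_mod_cast Int.one_le_abs (by simpa using hk)
            nlinarith [int_sq_ge_abs k]
          have hexp : Real.exp (-(π^2*t/8) * (k:ℝ)^2)
              ≤ Real.exp (-(π^2/8) * (t-1)) * Real.exp (-(π^2/8) * (k:ℝ)^2) := by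
            rw [← Real.exp_add]
            apply Real.exp_le_exp.mpr
            nlinarith [mul_nonneg (mul_nonneg (sq_nonneg π) (sub_nonneg.mpr ht))
              (sub_nonneg.mpr hk1)]
          calc (π^2/8) * ((k:ℝ)^2 * Real.exp (-(π^2*t/8) * (k:ℝ)^2))
              ≤ (π^2/8) * ((k:ℝ)^2 * (Real.exp (-(π^2/8) * (t-1))
                  * Real.exp (-(π^2/8) * (k:ℝ)^2))) := by
                apply mul_le_mul_of_nonneg_left _ (by positivity)
                exact mul_le_mul_of_nonneg_left hexp (sq_nonneg _)
            _ = Real.exp (-(π^2/8) * (t-1))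
                  * ((π^2/8) * ((k:ℝ)^2 * Real.exp (-(π^2/8) * (k:ℝ)^2))) := by ring
    _ = Real.exp (-(π^2/8) * (t-1))
          * ∑' k : ℤ, (π^2/8) * ((k:ℝ)^2 * Real.exp (-(π^2/8) * (k:ℝ)^2)) := tsum_mul_left

lemma tG_integrable : MeasureTheory.IntegrableOn tG (Set.Ioi (0:ℝ)) := by
  have hpi := Real.pi_pos
  have hcont : ContinuousOn tG (Set.Ioi 0) := fun t ht => (tG_contAt ht).continuousWithinAt
  rw [show Set.Ioi (0:ℝ) = Set.Ioc 0 1 ∪ Set.Ioi 1 from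
    (Set.Ioc_union_Ioi_eq_Ioi (by norm_num)).symm]
  apply MeasureTheory.IntegrableOn.union
  · obtain ⟨M, hM⟩ := tG_bdd
    apply MeasureTheory.Integrable.mono' (g := fun _ => M)
      (MeasureTheory.integrableOn_const measure_Ioc_lt_top.ne)
      ((hcont.mono (Set.Ioc_subset_Ioi_self)).aestronglyMeasurable measurableSet_Ioc)
    filter_upwards [MeasureTheory.ae_restrict_mem measurableSet_Ioc] with t ht
    rw [Real.norm_eq_abs]
    exact hM t ht
  · set K : ℝ := ∑' k : ℤ, (π^2/8) * ((k:ℝ)^2 * Real.exp (-(π^2/8) * (k:ℝ)^2)) with hK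
    have hKpos : 0 ≤ K :=
      tsum_nonneg (fun k => by positivity)
    apply MeasureTheory.Integrable.mono'
      (g := fun t => (K * Real.exp (π^2/8)) * Real.exp (-(π^2/8) * t))
      (((exp_neg_integrableOn_Ioi 1 (show (0:ℝ) < π^2/8 by positivity)).const_mul _))
      ((hcont.mono (Set.Ioi_subset_Ioi (by norm_num))).aestronglyMeasurable measurableSet_Ioi)
    filter_upwards [MeasureTheory.ae_restrict_mem measurableSet_Ioi] with t ht
    rw [Real.norm_eq_abs]
    calc |tG t| ≤ Real.exp (-(π^2/8) * (t-1)) * K := tG_tail_bound (le_of_lt ht)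
      _ = (K * Real.exp (π^2/8)) * Real.exp (-(π^2/8) * t) := by
          rw [show -(π^2/8) * (t-1) = π^2/8 + -(π^2/8)*t by ring, Real.exp_add]
          ring

lemma tG_integral : ∫ t in Set.Ioi (0:ℝ), tG t = 1 := by
  set f : ℝ → ℝ := fun t => if t ≤ 0 then 0 else tF t with hf
  have h0 : f 0 = 0 := by simp [hf]
  have hderiv : ∀ x ∈ Set.Ioi (0:ℝ), HasDerivAt f (tG x) x := by
    intro x hx
    apply (tF_hasDeriv hx).congr_of_eventuallyEq
    filter_upwards [isOpen_Ioi.mem_nhds hx] with y hy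
    simp [hf, not_le.mpr (Set.mem_Ioi.mp hy)]
  have hcont : ContinuousWithinAt f (Set.Ici 0) 0 := by
    rw [← Set.Ioi_insert]
    apply ContinuousWithinAt.insert
    unfold ContinuousWithinAt
    rw [h0]
    apply Filter.Tendsto.congr' _ tF_zero
    filter_upwards [self_mem_nhdsWithin] with y hy
    simp [hf, not_le.mpr (Set.mem_Ioi.mp hy)]
  have htop : Filter.Tendsto f Filter.atTop (𝓝 1) := by
    apply Filter.Tendsto.congr' _ tF_atTop
    filter_upwards [Filter.eventually_gt_atTop 0] with y hy
    simp [hf, not_le.mpr hy]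
  have := MeasureTheory.integral_Ioi_of_hasDerivAt_of_tendsto hcont hderiv tG_integrable htop
  rw [this, h0, sub_zero]

end Aux

/-- The total mass of the measure `ν(dt) = −(π²/16) ∑_{k∈ℤ} (−1)^k k² e^{−tπ²k²/8} dt`
on `(0,∞)` equals `1/2`. -/
theorem stmt_10 :
    ∫ t in Set.Ioi (0 : ℝ),
      -(Real.pi ^ 2 / 16) *
        ∑' k : ℤ, (-1 : ℝ) ^ k * (k : ℝ) ^ 2 * Real.exp (-t * Real.pi ^ 2 * (k : ℝ) ^ 2 / 8)
      = 1 / 2 := by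
  have hcong : Set.EqOn
      (fun t : ℝ => -(Real.pi ^ 2 / 16) *
        ∑' k : ℤ, (-1 : ℝ) ^ k * (k : ℝ) ^ 2 * Real.exp (-t * Real.pi ^ 2 * (k : ℝ) ^ 2 / 8))
      (fun t : ℝ => (1/2) * tG t) (Set.Ioi 0) := by
    intro t _
    simp only
    have h1 : tG t = ∑' k : ℤ, (-(Real.pi^2/8)) *
        ((-1:ℝ)^k * (k:ℝ)^2 * Real.exp (-t*Real.pi^2*(k:ℝ)^2/8)) := by
      apply tsum_congr
      intro k
      rw [show -(Real.pi^2*(k:ℝ)^2/8) * t = -t*Real.pi^2*(k:ℝ)^2/8 by ring]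
      ring
    rw [h1, tsum_mul_left]
    ring
  rw [MeasureTheory.setIntegral_congr_fun measurableSet_Ioi hcong,
    MeasureTheory.integral_const_mul, tG_integral]
  norm_num
end

section
/- The function F : (0, 1) → ℝ defined by F(t) = ∑_{k ∈ ℤ} (−1)^k · exp(−t π² k² / 8) is monotone nondecreasing on the interval (0, 1). -/
open Real

private lemma summable_shift {b : ℝ} (hb : 0 < b) :
    Summable (fun n : ℤ => Real.exp (-b * ((n : ℝ) - 1/2) ^ 2)) := by
  have hr0 : (0:ℝ) ≤ Real.exp (-b) := (Real.exp_pos _).le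
  have hr1 : Real.exp (-b) < 1 := by
    rw [Real.exp_lt_one_iff]; linarith
  refine Summable.of_nat_of_neg_add_one ?_ ?_
  · refine Summable.of_nonneg_of_le (fun n => (Real.exp_pos _).le) (fun n => ?_)
      ((summable_geometric_of_lt_one hr0 hr1).mul_left (Real.exp b))
    rw [← Real.exp_nat_mul, ← Real.exp_add, Real.exp_le_exp]
    push_cast
    nlinarith [sq_nonneg ((n:ℝ) - 1), hb.le, sq_nonneg ((n:ℝ))]
  · refine Summable.of_nonneg_of_le (fun n => (Real.exp_pos _).le) (fun n => ?_)
      (summable_geometric_of_lt_one hr0 hr1)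
    rw [← Real.exp_nat_mul, Real.exp_le_exp]
    push_cast
    nlinarith [sq_nonneg ((n:ℝ) + 1), hb.le, sq_nonneg ((n:ℝ))]

private lemma term_mono {c s t : ℝ} (hc : 2 ≤ c) (hs : 0 < s) (hst : s ≤ t) (ht1 : t ≤ 1) :
    1 / (s * π / 8) ^ ((1:ℝ)/2) * Real.exp (-(c / s))
      ≤ 1 / (t * π / 8) ^ ((1:ℝ)/2) * Real.exp (-(c / t)) := by
  have ht0 : 0 < t := lt_of_lt_of_le hs hst
  have hπ : (0:ℝ) < π / 8 := by positivity
  have hspos : (0:ℝ) < (s * π / 8) ^ ((1:ℝ)/2) := Real.rpow_pos_of_pos (by positivity) _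
  have htpos : (0:ℝ) < (t * π / 8) ^ ((1:ℝ)/2) := Real.rpow_pos_of_pos (by positivity) _
  rw [div_mul_eq_mul_div, div_mul_eq_mul_div, one_mul, one_mul, div_le_div_iff₀ hspos htpos]
  have hp2 : (0:ℝ) < (π/8) ^ ((1:ℝ)/2) := Real.rpow_pos_of_pos hπ _
  rw [show s * π / 8 = s * (π/8) by ring, show t * π / 8 = t * (π/8) by ring,
    Real.mul_rpow ht0.le hπ.le, Real.mul_rpow hs.le hπ.le, ← mul_assoc, ← mul_assoc,
    mul_le_mul_iff_of_pos_right hp2, Real.rpow_def_of_pos ht0, Real.rpow_def_of_pos hs,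
    ← Real.exp_add, ← Real.exp_add, Real.exp_le_exp]
  -- -(c/s) + log t * (1/2) ≤ -(c/t) + log s * (1/2)
  have hlog : Real.log t - Real.log s ≤ (t - s) / s := by
    rw [← Real.log_div ht0.ne' hs.ne']
    have h := Real.log_le_sub_one_of_pos (div_pos ht0 hs)
    have he : t / s - 1 = (t - s) / s := by field_simp
    linarith [he ▸ h]
  have h2 : (t - s) / s * (1/2) ≤ c / s - c / t := by
    rw [div_sub_div _ _ hs.ne' ht0.ne', div_mul_eq_mul_div, div_le_div_iff₀ hs (mul_pos hs ht0)]
    nlinarith [mul_nonneg (sub_nonneg.2 hst) hs.le, mul_pos hs ht0,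
      mul_nonneg (mul_nonneg (sub_nonneg.2 hst) hs.le) (sub_nonneg.2 ht1)]
  nlinarith [hlog, h2]

private lemma key {t : ℝ} (ht : 0 < t) :
    ∑' k : ℤ, (-1 : ℝ) ^ k * Real.exp (-t * Real.pi ^ 2 * (k : ℝ) ^ 2 / 8)
      = ∑' n : ℤ, 1 / (t * π / 8) ^ ((1:ℝ)/2)
          * Real.exp (-(8 * ((n : ℝ) - 1/2) ^ 2 / t)) := by
  have hπ := Real.pi_pos
  have ha : (0:ℝ) < t * π / 8 := by positivity
  have haC : 0 < ((t * π / 8 : ℝ) : ℂ).re := by simpa using ha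
  have H := Complex.tsum_exp_neg_quadratic haC (Complex.I / 2)
  have h1 : (Complex.ofReal (∑' k : ℤ, (-1 : ℝ) ^ k * Real.exp (-t * Real.pi ^ 2 * (k : ℝ) ^ 2 / 8)))
      = ∑' k : ℤ, Complex.exp (-(π:ℂ) * ((t * π / 8 : ℝ) : ℂ) * (k:ℂ) ^ 2
          + 2 * (π:ℂ) * (Complex.I / 2) * (k:ℂ)) := by
    rw [Complex.ofReal_tsum]
    refine tsum_congr fun k => ?_
    rw [Complex.ofReal_mul, Complex.ofReal_zpow, Complex.ofReal_exp, Complex.exp_add, mul_comm]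
    congr 1
    · congr 1
      push_cast
      ring
    · have harg : (2 * (π:ℂ) * (Complex.I / 2) * (k:ℂ)) = (k:ℂ) * ((π:ℂ) * Complex.I) := by
        ring
      rw [harg, Complex.exp_int_mul, Complex.exp_pi_mul_I]
      norm_num
  have h2 : 1 / ((t * π / 8 : ℝ) : ℂ) ^ (1/2 : ℂ)
        * ∑' n : ℤ, Complex.exp (-(π:ℂ) / ((t * π / 8 : ℝ) : ℂ)
            * ((n:ℂ) + Complex.I * (Complex.I / 2)) ^ 2)
      = Complex.ofReal (∑' n : ℤ, 1 / (t * π / 8) ^ ((1:ℝ)/2)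
          * Real.exp (-(8 * ((n : ℝ) - 1/2) ^ 2 / t))) := by
    rw [Complex.ofReal_tsum, ← tsum_mul_left]
    refine tsum_congr fun n => ?_
    rw [Complex.ofReal_mul, Complex.ofReal_exp]
    congr 1
    · conv_rhs => rw [Complex.ofReal_div, Complex.ofReal_one, Complex.ofReal_cpow ha.le]
      norm_num
    · have hI : Complex.I * (Complex.I / 2) = -(1/2 : ℂ) := by
        rw [← mul_div_assoc, Complex.I_mul_I]
        norm_num
      rw [hI]
      have hπC : ((π:ℝ):ℂ) ≠ 0 := Complex.ofReal_ne_zero.mpr Real.pi_ne_zero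
      have htC : ((t:ℝ):ℂ) ≠ 0 := Complex.ofReal_ne_zero.mpr ht.ne'
      congr 1
      push_cast
      field_simp
      ring
  exact Complex.ofReal_injective (h1.trans (H.trans h2))

/-- The function `F(t) = ∑_{k∈ℤ} (−1)^k e^{−tπ²k²/8}` is nondecreasing on `(0,1)`. -/
theorem stmt_12 :
    MonotoneOn
      (fun t : ℝ => ∑' k : ℤ, (-1 : ℝ) ^ k * Real.exp (-t * Real.pi ^ 2 * (k : ℝ) ^ 2 / 8))
      (Set.Ioo (0 : ℝ) 1) := by
  intro s hs t ht hst
  simp only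
  rw [key hs.1, key ht.1]
  have hsum : ∀ u : ℝ, 0 < u →
      Summable (fun n : ℤ => 1 / (u * π / 8) ^ ((1:ℝ)/2)
        * Real.exp (-(8 * ((n : ℝ) - 1/2) ^ 2 / u))) := by
    intro u hu
    have he : (fun n : ℤ => Real.exp (-(8 * ((n : ℝ) - 1/2) ^ 2 / u)))
        = fun n : ℤ => Real.exp (-(8/u) * ((n : ℝ) - 1/2) ^ 2) := by
      funext n; congr 1; ring
    exact Summable.mul_left _ (he ▸ summable_shift (by positivity : (0:ℝ) < 8/u))
  refine Summable.tsum_le_tsum (fun n => ?_) (hsum s hs.1) (hsum t ht.1)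
  have h14 : (1:ℝ)/4 ≤ ((n : ℝ) - 1/2) ^ 2 := by
    rcases le_or_gt n 0 with h | h
    · have hn : (n:ℝ) ≤ 0 := by exact_mod_cast h
      nlinarith
    · have hn : (1:ℝ) ≤ (n:ℝ) := by exact_mod_cast h
      nlinarith
  have := term_mono (c := 8 * ((n : ℝ) - 1/2) ^ 2) (by nlinarith) hs.1 hst ht.2.le
  simpa using this
end

section
/- Let n ≥ 2 and let σ denote the uniform probability measure on the unit sphere S^{n−1} ⊂ ℝⁿ. Let (x_k) be a sequence in the open unit ball of ℝⁿ converging to a point a with ‖a‖ = 1, and let φ : S^{n−1} → ℝ be continuous. Then ∫_{S^{n−1}} φ(y) · (1 − ‖x_k‖²) / ‖x_k − y‖ⁿ dσ(y) → φ(a) as k → ∞. In other words, the harmonic (Poisson kernel) measures P(x_k, dy) = (1 − ‖x_k‖²) ‖x_k − y‖^{−n} σ(dy) converge weakly to the Dirac mass δ_a. -/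
set_option maxHeartbeats 1000000

open MeasureTheory Filter Topology Metric
open scoped RealInnerProductSpace

namespace Stmt14Aux

variable {n : ℕ}

/-- The Poisson kernel written with an rpow. -/
noncomputable def pk (n : ℕ) (x y : EuclideanSpace ℝ (Fin n)) : ℝ :=
  (1 - ‖x‖ ^ 2) * (‖x - y‖ ^ 2 : ℝ) ^ (-(n : ℝ) / 2)

/-- Directional derivative of the Poisson kernel at `x` in direction `v`. -/
noncomputable def pk1 (n : ℕ) (x v y : EuclideanSpace ℝ (Fin n)) : ℝ :=
  (-2 * ⟪x, v⟫) * (‖x - y‖ ^ 2 : ℝ) ^ (-(n : ℝ) / 2)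
    + (1 - ‖x‖ ^ 2) *
      ((-(n : ℝ) / 2) * (‖x - y‖ ^ 2 : ℝ) ^ (-(n : ℝ) / 2 - 1) * (2 * ⟪x - y, v⟫))

/-- Second directional derivative of the Poisson kernel at `x` in direction `v`. -/
noncomputable def pk2 (n : ℕ) (x v y : EuclideanSpace ℝ (Fin n)) : ℝ :=
  (-2 * ‖v‖ ^ 2) * (‖x - y‖ ^ 2 : ℝ) ^ (-(n : ℝ) / 2)
    + 2 * ((-2 * ⟪x, v⟫) *
        ((-(n : ℝ) / 2) * (‖x - y‖ ^ 2 : ℝ) ^ (-(n : ℝ) / 2 - 1) * (2 * ⟪x - y, v⟫)))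
    + (1 - ‖x‖ ^ 2) *
        ((-(n : ℝ) / 2) * ((-(n : ℝ) / 2 - 1) * (‖x - y‖ ^ 2 : ℝ) ^ (-(n : ℝ) / 2 - 2)
            * (2 * ⟪x - y, v⟫) ^ 2)
          + (-(n : ℝ) / 2) * (‖x - y‖ ^ 2 : ℝ) ^ (-(n : ℝ) / 2 - 1) * (2 * ‖v‖ ^ 2))

section Calculus

variable (c v y w : EuclideanSpace ℝ (Fin n)) (t : ℝ)

lemma hasDerivAt_line : HasDerivAt (fun s : ℝ => c + s • v) v t := by
  simpa using ((hasDerivAt_id t).smul_const v).const_add c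

lemma hasDerivAt_normsq :
    HasDerivAt (fun s : ℝ => (‖c + s • v - w‖ ^ 2 : ℝ)) (2 * ⟪c + t • v - w, v⟫) t := by
  have hX : HasDerivAt (fun s : ℝ => c + s • v - w) v t := (hasDerivAt_line c v t).sub_const w
  have h2 := hX.inner ℝ hX
  have hfun : (fun s : ℝ => (‖c + s • v - w‖ ^ 2 : ℝ))
      = fun s : ℝ => ⟪c + s • v - w, c + s • v - w⟫ :=
    funext fun s => (real_inner_self_eq_norm_sq _).symm
  rw [hfun]
  refine h2.congr_deriv (Eq.symm ?_)
  rw [real_inner_comm]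
  ring

lemma hasDerivAt_Brpow (q : ℝ) (h : c + t • v ≠ y) :
    HasDerivAt (fun s : ℝ => (‖c + s • v - y‖ ^ 2 : ℝ) ^ q)
      (q * (‖c + t • v - y‖ ^ 2 : ℝ) ^ (q - 1) * (2 * ⟪c + t • v - y, v⟫)) t := by
  have hB0 : (‖c + t • v - y‖ ^ 2 : ℝ) ≠ 0 := by
    apply pow_ne_zero
    simpa [sub_ne_zero] using h
  have := (Real.hasDerivAt_rpow_const (p := q) (Or.inl hB0)).comp t (hasDerivAt_normsq c v y t)
  refine this.congr_deriv (Eq.symm ?_)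
  all_goals ring

lemma hasDerivAt_pk (h : c + t • v ≠ y) :
    HasDerivAt (fun s : ℝ => pk n (c + s • v) y) (pk1 n (c + t • v) v y) t := by
  have hA : HasDerivAt (fun s : ℝ => 1 - ‖c + s • v‖ ^ 2) (-(2 * ⟪c + t • v, v⟫)) t := by
    have := (hasDerivAt_normsq c v 0 t).const_sub 1
    simpa using this
  have hBp := hasDerivAt_Brpow c v y t (-(n : ℝ) / 2) h
  have := hA.mul hBp
  simp only [pk, pk1]
  refine this.congr_deriv (Eq.symm ?_)
  all_goals ring

lemma hasDerivAt_pk1 (h : c + t • v ≠ y) :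
    HasDerivAt (fun s : ℝ => pk1 n (c + s • v) v y) (pk2 n (c + t • v) v y) t := by
  have hXv : HasDerivAt (fun s : ℝ => ⟪c + s • v, v⟫) (‖v‖ ^ 2) t := by
    have := (hasDerivAt_line c v t).inner ℝ (hasDerivAt_const t v)
    simpa only [inner_zero_right, zero_add, real_inner_self_eq_norm_sq] using this
  have hXyv : HasDerivAt (fun s : ℝ => ⟪c + s • v - y, v⟫) (‖v‖ ^ 2) t := by
    have := ((hasDerivAt_line c v t).sub_const y).inner ℝ (hasDerivAt_const t v)
    simpa only [inner_zero_right, zero_add, real_inner_self_eq_norm_sq] using this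
  have hA : HasDerivAt (fun s : ℝ => 1 - ‖c + s • v‖ ^ 2) (-(2 * ⟪c + t • v, v⟫)) t := by
    have := (hasDerivAt_normsq c v 0 t).const_sub 1
    simpa using this
  have hBp := hasDerivAt_Brpow c v y t (-(n : ℝ) / 2) h
  have hBp1 := hasDerivAt_Brpow c v y t (-(n : ℝ) / 2 - 1) h
  rw [show (-(n : ℝ) / 2 - 1 - 1) = -(n : ℝ) / 2 - 2 by ring] at hBp1
  -- first summand : (-2 * ⟪X s, v⟫) * B^p
  have h1 : HasDerivAt
      (fun s : ℝ => (-2 * ⟪c + s • v, v⟫) * (‖c + s • v - y‖ ^ 2 : ℝ) ^ (-(n : ℝ) / 2))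
      ((-2 * ‖v‖ ^ 2) * (‖c + t • v - y‖ ^ 2 : ℝ) ^ (-(n : ℝ) / 2)
        + (-2 * ⟪c + t • v, v⟫) *
          ((-(n : ℝ) / 2) * (‖c + t • v - y‖ ^ 2 : ℝ) ^ (-(n : ℝ) / 2 - 1)
            * (2 * ⟪c + t • v - y, v⟫))) t := by
    have := (hXv.const_mul (-2)).mul hBp
    refine this.congr_deriv (Eq.symm ?_)
    all_goals ring
  -- second summand : A * (p * B^(p-1) * (2*⟪X s - y, v⟫))
  have h2 : HasDerivAt
      (fun s : ℝ => (1 - ‖c + s • v‖ ^ 2) *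
        ((-(n : ℝ) / 2) * (‖c + s • v - y‖ ^ 2 : ℝ) ^ (-(n : ℝ) / 2 - 1)
          * (2 * ⟪c + s • v - y, v⟫)))
      ((-(2 * ⟪c + t • v, v⟫)) *
        ((-(n : ℝ) / 2) * (‖c + t • v - y‖ ^ 2 : ℝ) ^ (-(n : ℝ) / 2 - 1)
          * (2 * ⟪c + t • v - y, v⟫))
        + (1 - ‖c + t • v‖ ^ 2) *
          ((-(n : ℝ) / 2) * ((-(n : ℝ) / 2 - 1) * (‖c + t • v - y‖ ^ 2 : ℝ) ^ (-(n : ℝ) / 2 - 2)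
              * (2 * ⟪c + t • v - y, v⟫)) * (2 * ⟪c + t • v - y, v⟫)
            + (-(n : ℝ) / 2) * (‖c + t • v - y‖ ^ 2 : ℝ) ^ (-(n : ℝ) / 2 - 1) * (2 * ‖v‖ ^ 2))) t := by
    have hinner : HasDerivAt
        (fun s : ℝ => (-(n : ℝ) / 2) * (‖c + s • v - y‖ ^ 2 : ℝ) ^ (-(n : ℝ) / 2 - 1)
          * (2 * ⟪c + s • v - y, v⟫))
        ((-(n : ℝ) / 2) * ((-(n : ℝ) / 2 - 1) * (‖c + t • v - y‖ ^ 2 : ℝ) ^ (-(n : ℝ) / 2 - 2)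
            * (2 * ⟪c + t • v - y, v⟫)) * (2 * ⟪c + t • v - y, v⟫)
          + (-(n : ℝ) / 2) * (‖c + t • v - y‖ ^ 2 : ℝ) ^ (-(n : ℝ) / 2 - 1) * (2 * ‖v‖ ^ 2)) t := by
      have := ((hBp1.const_mul (-(n : ℝ) / 2)).mul (hXyv.const_mul 2))
      refine this.congr_deriv (Eq.symm ?_)
      all_goals ring
    exact hA.mul hinner
  have := h1.add h2
  simp only [pk1, pk2]
  refine this.congr_deriv (Eq.symm ?_)
  all_goals ring

end Calculus

end Stmt14Aux

namespace Block2
open Stmt14Aux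

variable {n : ℕ}

/-- Pointwise harmonicity: the Laplacian of the Poisson kernel vanishes. -/
lemma lap (x y : EuclideanSpace ℝ (Fin n)) (hy : ‖y‖ = 1) (hxy : x ≠ y) :
    ∑ i : Fin n, pk2 n x (EuclideanSpace.single i (1:ℝ)) y = 0 := by
  have hspos : (0:ℝ) < ‖x - y‖ ^ 2 := by
    exact pow_pos (norm_pos_iff.2 (sub_ne_zero.2 hxy)) 2
  have hsne : (‖x - y‖ ^ 2 : ℝ) ≠ 0 := ne_of_gt hspos
  have hsummand : ∀ i : Fin n, pk2 n x (EuclideanSpace.single i (1:ℝ)) y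
      = (-2 * (‖x - y‖ ^ 2 : ℝ) ^ (-(n:ℝ)/2)
          + (1 - ‖x‖ ^ 2) * ((-(n:ℝ)/2) * (‖x - y‖ ^ 2 : ℝ) ^ (-(n:ℝ)/2 - 1) * 2))
        + (-8 * (-(n:ℝ)/2) * (‖x - y‖ ^ 2 : ℝ) ^ (-(n:ℝ)/2 - 1)) * (x i * (x i - y i))
        + ((1 - ‖x‖ ^ 2) * (4 * (-(n:ℝ)/2) * (-(n:ℝ)/2 - 1) * (‖x - y‖ ^ 2 : ℝ) ^ (-(n:ℝ)/2 - 2)))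
            * ((x i - y i) ^ 2) := by
    intro i
    have h1 : ⟪x, EuclideanSpace.single i (1:ℝ)⟫ = x i := by
      rw [EuclideanSpace.inner_single_right]
      simp
    have h2 : ⟪x - y, EuclideanSpace.single i (1:ℝ)⟫ = x i - y i := by
      rw [EuclideanSpace.inner_single_right]
      simp [PiLp.sub_apply]
    simp only [pk2, h1, h2, EuclideanSpace.norm_single, norm_one]
    ring
  have hinner : ∀ a b : EuclideanSpace ℝ (Fin n), ⟪a, b⟫ = ∑ i, a i * b i := by
    intro a b
    simp [PiLp.inner_apply, RCLike.inner_apply, conj_trivial]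
    exact Finset.sum_congr rfl fun i _ => mul_comm _ _
  have hxx : ∑ i, x i * (x i - y i) = ‖x‖ ^ 2 - ⟪x, y⟫ := by
    have h3 : ⟪x, x - y⟫ = ∑ i, x i * (x i - y i) := by
      rw [hinner]
      exact Finset.sum_congr rfl fun i _ => by simp [PiLp.sub_apply]
    rw [← h3, inner_sub_right, real_inner_self_eq_norm_sq]
  have hdd : ∑ i, (x i - y i) ^ 2 = (‖x - y‖ ^ 2 : ℝ) := by
    have h3 : ⟪x - y, x - y⟫ = ∑ i, (x i - y i) ^ 2 := by
      rw [hinner]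
      exact Finset.sum_congr rfl fun i _ => by simp [PiLp.sub_apply]; ring
    rw [← h3, real_inner_self_eq_norm_sq]
  have hsexp : (‖x - y‖ ^ 2 : ℝ) = ‖x‖ ^ 2 - 2 * ⟪x, y⟫ + 1 := by
    rw [norm_sub_sq_real, hy]
    norm_num
  have e1 : (‖x - y‖ ^ 2 : ℝ) ^ (-(n:ℝ)/2)
      = (‖x - y‖ ^ 2 : ℝ) ^ (-(n:ℝ)/2 - 1) * (‖x - y‖ ^ 2 : ℝ) := by
    rw [← Real.rpow_add_one hsne]
    congr 1
    ring
  have e2 : (‖x - y‖ ^ 2 : ℝ) ^ (-(n:ℝ)/2 - 1)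
      = (‖x - y‖ ^ 2 : ℝ) ^ (-(n:ℝ)/2 - 2) * (‖x - y‖ ^ 2 : ℝ) := by
    rw [← Real.rpow_add_one hsne]
    congr 1
    ring
  calc ∑ i : Fin n, pk2 n x (EuclideanSpace.single i (1:ℝ)) y
      = ∑ i : Fin n, ((-2 * (‖x - y‖ ^ 2 : ℝ) ^ (-(n:ℝ)/2)
          + (1 - ‖x‖ ^ 2) * ((-(n:ℝ)/2) * (‖x - y‖ ^ 2 : ℝ) ^ (-(n:ℝ)/2 - 1) * 2))
        + (-8 * (-(n:ℝ)/2) * (‖x - y‖ ^ 2 : ℝ) ^ (-(n:ℝ)/2 - 1)) * (x i * (x i - y i))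
        + ((1 - ‖x‖ ^ 2) * (4 * (-(n:ℝ)/2) * (-(n:ℝ)/2 - 1) * (‖x - y‖ ^ 2 : ℝ) ^ (-(n:ℝ)/2 - 2)))
            * ((x i - y i) ^ 2)) := Finset.sum_congr rfl fun i _ => hsummand i
    _ = (n : ℝ) * (-2 * (‖x - y‖ ^ 2 : ℝ) ^ (-(n:ℝ)/2)
          + (1 - ‖x‖ ^ 2) * ((-(n:ℝ)/2) * (‖x - y‖ ^ 2 : ℝ) ^ (-(n:ℝ)/2 - 1) * 2))
        + (-8 * (-(n:ℝ)/2) * (‖x - y‖ ^ 2 : ℝ) ^ (-(n:ℝ)/2 - 1)) * (∑ i, x i * (x i - y i))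
        + ((1 - ‖x‖ ^ 2) * (4 * (-(n:ℝ)/2) * (-(n:ℝ)/2 - 1) * (‖x - y‖ ^ 2 : ℝ) ^ (-(n:ℝ)/2 - 2)))
            * (∑ i, (x i - y i) ^ 2) := by
        rw [Finset.sum_add_distrib, Finset.sum_add_distrib, ← Finset.mul_sum, ← Finset.mul_sum,
          Finset.sum_const, Finset.card_univ, Fintype.card_fin, nsmul_eq_mul]
    _ = 0 := by
        rw [hxx, hdd, e1, e2, hsexp]
        ring
end Block2

namespace Block3
open Stmt14Aux

variable {n : ℕ}

local notation "E" => EuclideanSpace ℝ (Fin n)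

lemma contOn_pair_rpow (c v : EuclideanSpace ℝ (Fin n)) (q : ℝ) :
    ContinuousOn (fun z : ℝ × EuclideanSpace ℝ (Fin n) => (‖c + z.1 • v - z.2‖ ^ 2 : ℝ) ^ q)
      {z : ℝ × EuclideanSpace ℝ (Fin n) | c + z.1 • v ≠ z.2} := by
  have hB : Continuous fun z : ℝ × EuclideanSpace ℝ (Fin n) => (‖c + z.1 • v - z.2‖ ^ 2 : ℝ) :=
    (((continuous_const.add (continuous_fst.smul continuous_const)).sub continuous_snd).norm).pow 2
  intro z hz
  have hB0 : (‖c + z.1 • v - z.2‖ ^ 2 : ℝ) ≠ 0 :=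
    pow_ne_zero _ (norm_ne_zero_iff.2 (sub_ne_zero.2 hz))
  have h2 : ContinuousAt (fun w : ℝ => w ^ q) (‖c + z.1 • v - z.2‖ ^ 2) :=
    Real.continuousAt_rpow_const _ q (Or.inl hB0)
  exact (ContinuousAt.comp
    (f := fun z : ℝ × EuclideanSpace ℝ (Fin n) => (‖c + z.1 • v - z.2‖ ^ 2 : ℝ)) (x := z)
    h2 hB.continuousAt).continuousWithinAt

lemma contOn_pair_pk (c v : EuclideanSpace ℝ (Fin n)) :
    ContinuousOn (fun z : ℝ × EuclideanSpace ℝ (Fin n) => pk n (c + z.1 • v) z.2)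
      {z : ℝ × EuclideanSpace ℝ (Fin n) | c + z.1 • v ≠ z.2} := by
  have hX : Continuous fun z : ℝ × EuclideanSpace ℝ (Fin n) => c + z.1 • v :=
    continuous_const.add (continuous_fst.smul continuous_const)
  have hA : Continuous fun z : ℝ × EuclideanSpace ℝ (Fin n) => 1 - ‖c + z.1 • v‖ ^ 2 :=
    continuous_const.sub (hX.norm.pow 2)
  exact hA.continuousOn.mul (contOn_pair_rpow c v _)

lemma contOn_pair_pk1 (c v : EuclideanSpace ℝ (Fin n)) :
    ContinuousOn (fun z : ℝ × EuclideanSpace ℝ (Fin n) => pk1 n (c + z.1 • v) v z.2)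
      {z : ℝ × EuclideanSpace ℝ (Fin n) | c + z.1 • v ≠ z.2} := by
  have hX : Continuous fun z : ℝ × EuclideanSpace ℝ (Fin n) => c + z.1 • v :=
    continuous_const.add (continuous_fst.smul continuous_const)
  have hXv : Continuous fun z : ℝ × EuclideanSpace ℝ (Fin n) => (⟪c + z.1 • v, v⟫ : ℝ) :=
    hX.inner continuous_const
  have hXyv : Continuous fun z : ℝ × EuclideanSpace ℝ (Fin n) => (⟪c + z.1 • v - z.2, v⟫ : ℝ) :=
    (hX.sub continuous_snd).inner continuous_const
  have hA : Continuous fun z : ℝ × EuclideanSpace ℝ (Fin n) => 1 - ‖c + z.1 • v‖ ^ 2 :=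
    continuous_const.sub (hX.norm.pow 2)
  exact ((continuousOn_const.mul hXv.continuousOn).mul (contOn_pair_rpow c v _)).add
    (hA.continuousOn.mul ((continuousOn_const.mul (contOn_pair_rpow c v _)).mul
      (continuousOn_const.mul hXyv.continuousOn)))

lemma contOn_pair_pk2 (c v : EuclideanSpace ℝ (Fin n)) :
    ContinuousOn (fun z : ℝ × EuclideanSpace ℝ (Fin n) => pk2 n (c + z.1 • v) v z.2)
      {z : ℝ × EuclideanSpace ℝ (Fin n) | c + z.1 • v ≠ z.2} := by
  have hX : Continuous fun z : ℝ × EuclideanSpace ℝ (Fin n) => c + z.1 • v :=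
    continuous_const.add (continuous_fst.smul continuous_const)
  have hXv : Continuous fun z : ℝ × EuclideanSpace ℝ (Fin n) => (⟪c + z.1 • v, v⟫ : ℝ) :=
    hX.inner continuous_const
  have hXyv : Continuous fun z : ℝ × EuclideanSpace ℝ (Fin n) => (⟪c + z.1 • v - z.2, v⟫ : ℝ) :=
    (hX.sub continuous_snd).inner continuous_const
  have hA : Continuous fun z : ℝ × EuclideanSpace ℝ (Fin n) => 1 - ‖c + z.1 • v‖ ^ 2 :=
    continuous_const.sub (hX.norm.pow 2)
  refine ContinuousOn.add (ContinuousOn.add ?_ ?_) ?_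
  · exact continuousOn_const.mul (contOn_pair_rpow c v _)
  · exact continuousOn_const.mul ((continuousOn_const.mul hXv.continuousOn).mul
      ((continuousOn_const.mul (contOn_pair_rpow c v _)).mul
        (continuousOn_const.mul hXyv.continuousOn)))
  · exact hA.continuousOn.mul
      ((continuousOn_const.mul ((continuousOn_const.mul (contOn_pair_rpow c v _)).mul
          ((continuousOn_const.mul hXyv.continuousOn).pow 2))).add
        ((continuousOn_const.mul (contOn_pair_rpow c v _)).mul continuousOn_const))

/-- Slice continuity on the sphere. -/
lemma contOn_sphere_of_pair {f : ℝ × EuclideanSpace ℝ (Fin n) → ℝ} {c v : EuclideanSpace ℝ (Fin n)}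
    (hf : ContinuousOn f {z : ℝ × EuclideanSpace ℝ (Fin n) | c + z.1 • v ≠ z.2})
    (t : ℝ) (ht : ‖c + t • v‖ < 1) :
    ContinuousOn (fun y => f (t, y)) (sphere (0 : EuclideanSpace ℝ (Fin n)) 1) := by
  apply hf.comp (Continuous.continuousOn (by continuity))
  intro y hy
  have hy1 : ‖y‖ = 1 := by simpa using hy
  intro h
  have h' : c + t • v = y := h
  rw [h', hy1] at ht
  exact lt_irrefl 1 ht

lemma aesm (σ : Measure (EuclideanSpace ℝ (Fin n))) (hsupp : ∀ᵐ y ∂σ, ‖y‖ = 1)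
    {f : EuclideanSpace ℝ (Fin n) → ℝ}
    (hf : ContinuousOn f (sphere (0 : EuclideanSpace ℝ (Fin n)) 1)) :
    AEStronglyMeasurable f σ := by
  have hms : MeasurableSet (sphere (0 : EuclideanSpace ℝ (Fin n)) 1) :=
    isClosed_sphere.measurableSet
  have hres : σ.restrict (sphere (0 : EuclideanSpace ℝ (Fin n)) 1) = σ :=
    Measure.restrict_eq_self_of_ae_mem
      (by filter_upwards [hsupp] with y hy; simpa [mem_sphere_zero_iff_norm] using hy)
  rw [← hres]
  exact hf.aestronglyMeasurable hms

lemma pk_integrable (σ : Measure (EuclideanSpace ℝ (Fin n))) [IsProbabilityMeasure σ]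
    (hsupp : ∀ᵐ y ∂σ, ‖y‖ = 1) (x : EuclideanSpace ℝ (Fin n)) (hx : ‖x‖ < 1) :
    Integrable (fun y => pk n x y) σ := by
  have hcont : ContinuousOn (fun y => pk n x y) (sphere (0 : EuclideanSpace ℝ (Fin n)) 1) := by
    have := contOn_sphere_of_pair (c := x) (v := (0:EuclideanSpace ℝ (Fin n)))
      (contOn_pair_pk x 0) 0 (by simpa using hx)
    simpa using this
  refine Integrable.mono' (integrable_const ((((1 - ‖x‖) ^ 2 : ℝ)) ^ (-(n:ℝ)/2)))
    (aesm σ hsupp hcont) ?_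
  filter_upwards [hsupp] with y hy
  have h0 : (0:ℝ) < 1 - ‖x‖ := by linarith
  have h1 : (1 - ‖x‖ : ℝ) ≤ ‖x - y‖ := by
    have := norm_sub_norm_le y x
    rw [hy] at this
    rw [norm_sub_rev]
    linarith
  have h2 : ((1 - ‖x‖) ^ 2 : ℝ) ≤ ‖x - y‖ ^ 2 := by nlinarith
  have hq : -(n:ℝ)/2 ≤ 0 := by
    have : (0:ℝ) ≤ (n:ℝ) := Nat.cast_nonneg n
    linarith
  have hbp : (‖x - y‖ ^ 2 : ℝ) ^ (-(n:ℝ)/2) ≤ (((1 - ‖x‖) ^ 2 : ℝ)) ^ (-(n:ℝ)/2) :=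
    Real.rpow_le_rpow_of_nonpos (pow_pos h0 2) h2 hq
  have hA0 : (0:ℝ) ≤ 1 - ‖x‖ ^ 2 := by nlinarith [norm_nonneg x]
  have hA1 : (1 - ‖x‖ ^ 2 : ℝ) ≤ 1 := by nlinarith [norm_nonneg x]
  rw [Real.norm_eq_abs, pk, abs_of_nonneg (by positivity)]
  calc (1 - ‖x‖ ^ 2) * (‖x - y‖ ^ 2 : ℝ) ^ (-(n:ℝ)/2)
      ≤ 1 * (((1 - ‖x‖) ^ 2 : ℝ)) ^ (-(n:ℝ)/2) :=
        mul_le_mul hA1 hbp (by positivity) one_pos.le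
    _ = (((1 - ‖x‖) ^ 2 : ℝ)) ^ (-(n:ℝ)/2) := one_mul _
end Block3

namespace Block4
open Stmt14Aux Block3

variable {n : ℕ}

lemma DUI (σ : Measure (EuclideanSpace ℝ (Fin n))) [IsProbabilityMeasure σ]
    (hsupp : ∀ᵐ y ∂σ, ‖y‖ = 1) (c v : EuclideanSpace ℝ (Fin n)) (hv : ‖v‖ = 1)
    (t₀ : ℝ) (h1 : ‖c + t₀ • v‖ < 1) :
    (Integrable (fun y => pk1 n (c + t₀ • v) v y) σ ∧
      HasDerivAt (fun t => ∫ y, pk n (c + t • v) y ∂σ) (∫ y, pk1 n (c + t₀ • v) v y ∂σ) t₀) ∧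
    (Integrable (fun y => pk2 n (c + t₀ • v) v y) σ ∧
      HasDerivAt (fun t => ∫ y, pk1 n (c + t • v) v y ∂σ) (∫ y, pk2 n (c + t₀ • v) v y ∂σ) t₀) := by
  set ε := (1 - ‖c + t₀ • v‖) / 2 with hε
  have hεpos : 0 < ε := by
    rw [hε]; linarith
  have hball2 : ∀ t : ℝ, |t - t₀| ≤ ε → ‖c + t • v‖ < 1 := by
    intro t ht
    have hrw : c + t • v = (c + t₀ • v) + (t - t₀) • v := by
      rw [sub_smul]; abel
    calc ‖c + t • v‖ = ‖(c + t₀ • v) + (t - t₀) • v‖ := by rw [hrw]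
      _ ≤ ‖c + t₀ • v‖ + ‖(t - t₀) • v‖ := norm_add_le _ _
      _ = ‖c + t₀ • v‖ + |t - t₀| := by rw [norm_smul, hv, Real.norm_eq_abs, mul_one]
      _ ≤ ‖c + t₀ • v‖ + ε := by linarith
      _ < 1 := by rw [hε]; linarith
  have hball : ∀ t ∈ Metric.ball t₀ ε, ‖c + t • v‖ < 1 := by
    intro t ht
    exact hball2 t (le_of_lt (by simpa [Real.dist_eq] using ht))
  have hne : ∀ t ∈ Metric.ball t₀ ε, ∀ y : EuclideanSpace ℝ (Fin n), ‖y‖ = 1 → c + t • v ≠ y := by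
    intro t ht y hy heq
    have h2 := hball t ht
    rw [heq, hy] at h2
    exact lt_irrefl 1 h2
  have hK : IsCompact ((Set.Icc (t₀ - ε) (t₀ + ε)) ×ˢ (sphere (0:EuclideanSpace ℝ (Fin n)) 1)) :=
    isCompact_Icc.prod (isCompact_sphere 0 1)
  have hKsub : (Set.Icc (t₀ - ε) (t₀ + ε)) ×ˢ (sphere (0:EuclideanSpace ℝ (Fin n)) 1)
      ⊆ {z : ℝ × EuclideanSpace ℝ (Fin n) | c + z.1 • v ≠ z.2} := by
    rintro ⟨t, y⟩ ⟨ht, hy⟩ heq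
    have hy1 : ‖y‖ = 1 := by simpa using hy
    have habs : |t - t₀| ≤ ε := by
      rw [abs_le]; constructor <;> [linarith [ht.1]; linarith [ht.2]]
    have h2 := hball2 t habs
    have h' : c + t • v = y := heq
    rw [h', hy1] at h2
    exact lt_irrefl 1 h2
  obtain ⟨C₁, hC₁⟩ := hK.exists_bound_of_continuousOn ((contOn_pair_pk1 c v).mono hKsub)
  obtain ⟨C₂, hC₂⟩ := hK.exists_bound_of_continuousOn ((contOn_pair_pk2 c v).mono hKsub)
  have hmem : ∀ t ∈ Metric.ball t₀ ε, ∀ y : EuclideanSpace ℝ (Fin n), ‖y‖ = 1 →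
      ((t, y) : ℝ × EuclideanSpace ℝ (Fin n))
        ∈ (Set.Icc (t₀ - ε) (t₀ + ε)) ×ˢ (sphere (0:EuclideanSpace ℝ (Fin n)) 1) := by
    intro t ht y hy
    constructor
    · have : |t - t₀| ≤ ε := le_of_lt (by simpa [Real.dist_eq] using ht)
      rw [abs_le] at this
      exact ⟨by linarith [this.1], by linarith [this.2]⟩
    · simpa [mem_sphere_zero_iff_norm] using hy
  have hmeas : ∀ t : ℝ, ‖c + t • v‖ < 1 →
      AEStronglyMeasurable (fun y => pk n (c + t • v) y) σ := by
    intro t ht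
    exact aesm σ hsupp (contOn_sphere_of_pair (contOn_pair_pk c v) t ht)
  have hmeas1 : ∀ t : ℝ, ‖c + t • v‖ < 1 →
      AEStronglyMeasurable (fun y => pk1 n (c + t • v) v y) σ := by
    intro t ht
    exact aesm σ hsupp (contOn_sphere_of_pair (contOn_pair_pk1 c v) t ht)
  have hmeas2 : ∀ t : ℝ, ‖c + t • v‖ < 1 →
      AEStronglyMeasurable (fun y => pk2 n (c + t • v) v y) σ := by
    intro t ht
    exact aesm σ hsupp (contOn_sphere_of_pair (contOn_pair_pk2 c v) t ht)
  have H1 : Integrable (fun y => pk1 n (c + t₀ • v) v y) σ ∧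
      HasDerivAt (fun t => ∫ y, pk n (c + t • v) y ∂σ) (∫ y, pk1 n (c + t₀ • v) v y ∂σ) t₀ :=
    hasDerivAt_integral_of_dominated_loc_of_deriv_le (μ := σ)
    (F := fun t y => pk n (c + t • v) y) (F' := fun t y => pk1 n (c + t • v) v y)
    (bound := fun _ => C₁) (Metric.ball_mem_nhds t₀ hεpos)
    (by
      filter_upwards [Metric.ball_mem_nhds t₀ hεpos] with t ht
      exact hmeas t (hball t ht))
    (pk_integrable σ hsupp (c + t₀ • v) h1)
    (hmeas1 t₀ h1)
    (by
      filter_upwards [hsupp] with y hy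
      intro t ht
      exact hC₁ (t, y) (hmem t ht y hy))
    (integrable_const C₁)
    (by
      filter_upwards [hsupp] with y hy
      intro t ht
      exact hasDerivAt_pk c v y t (hne t ht y hy))
  have H2 : Integrable (fun y => pk2 n (c + t₀ • v) v y) σ ∧
      HasDerivAt (fun t => ∫ y, pk1 n (c + t • v) v y ∂σ) (∫ y, pk2 n (c + t₀ • v) v y ∂σ) t₀ :=
    hasDerivAt_integral_of_dominated_loc_of_deriv_le (μ := σ)
    (F := fun t y => pk1 n (c + t • v) v y) (F' := fun t y => pk2 n (c + t • v) v y)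
    (bound := fun _ => C₂) (Metric.ball_mem_nhds t₀ hεpos)
    (by
      filter_upwards [Metric.ball_mem_nhds t₀ hεpos] with t ht
      exact hmeas1 t (hball t ht))
    H1.1
    (hmeas2 t₀ h1)
    (by
      filter_upwards [hsupp] with y hy
      intro t ht
      exact hC₂ (t, y) (hmem t ht y hy))
    (integrable_const C₂)
    (by
      filter_upwards [hsupp] with y hy
      intro t ht
      exact hasDerivAt_pk1 c v y t (hne t ht y hy))
  exact ⟨⟨H1.1, H1.2⟩, ⟨H2.1, H2.2⟩⟩

lemma radial (σ : Measure (EuclideanSpace ℝ (Fin n))) [IsProbabilityMeasure σ]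
    (hsupp : ∀ᵐ y ∂σ, ‖y‖ = 1)
    (hinv : ∀ R : EuclideanSpace ℝ (Fin n) ≃ₗᵢ[ℝ] EuclideanSpace ℝ (Fin n),
      Measure.map (⇑R) σ = σ)
    (x x' : EuclideanSpace ℝ (Fin n)) (hxx : ‖x‖ = ‖x'‖) (hx : ‖x'‖ < 1) :
    ∫ y, pk n x y ∂σ = ∫ y, pk n x' y ∂σ := by
  rcases eq_or_ne x x' with rfl | hne
  · rfl
  set R : EuclideanSpace ℝ (Fin n) ≃ₗᵢ[ℝ] EuclideanSpace ℝ (Fin n) :=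
    Submodule.reflection (ℝ ∙ (x - x'))ᗮ with hRdef
  have hR : R x = x' := Submodule.reflection_sub hxx
  have key : ∀ y, pk n x' (R y) = pk n x y := by
    intro y
    unfold pk
    have h2 : ‖x' - R y‖ = ‖x - y‖ := by
      have h3 : x' - R y = R (x - y) := by rw [map_sub, hR]
      rw [h3, R.norm_map]
    rw [hxx, h2]
  have hcont : ContinuousOn (fun y => pk n x' y) (sphere (0:EuclideanSpace ℝ (Fin n)) 1) := by
    have := contOn_sphere_of_pair (c := x') (v := (0:EuclideanSpace ℝ (Fin n)))
      (contOn_pair_pk x' 0) 0 (by simpa using hx)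
    simpa using this
  have hmap : ∫ y, pk n x' y ∂σ = ∫ y, pk n x' (R y) ∂σ := by
    conv_lhs => rw [← hinv R]
    exact integral_map R.continuous.measurable.aemeasurable
      (by rw [hinv R]; exact aesm σ hsupp hcont)
  rw [hmap]
  simp only [key]

end Block4

namespace Block5
open Stmt14Aux Block3 Block4

variable {n : ℕ}

lemma const_of_deriv_zero {f : ℝ → ℝ} {a b : ℝ} (hab : a ≤ b)
    (h : ∀ x ∈ Set.Icc a b, HasDerivAt f 0 x) : f b = f a := by
  have H := eq_of_has_deriv_right_eq (f' := fun _ => (0:ℝ)) (g := fun _ => f a) (a := a) (b := b)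
    (fun x hx => (h x ⟨hx.1, hx.2.le⟩).hasDerivWithinAt)
    (fun x _ => (hasDerivAt_const x (f a)).hasDerivWithinAt)
    (fun x hx => (h x hx).continuousAt.continuousWithinAt) continuousOn_const rfl
  exact H b (Set.right_mem_Icc.2 hab)

noncomputable def gfun (n : ℕ) (σ : Measure (EuclideanSpace ℝ (Fin n)))
    (e0 : EuclideanSpace ℝ (Fin n)) : ℝ → ℝ := fun r => ∫ y, pk n (r • e0) y ∂σ

noncomputable def g1fun (n : ℕ) (σ : Measure (EuclideanSpace ℝ (Fin n)))
    (e0 : EuclideanSpace ℝ (Fin n)) : ℝ → ℝ := fun r => ∫ y, pk1 n (r • e0) e0 y ∂σ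

noncomputable def g2fun (n : ℕ) (σ : Measure (EuclideanSpace ℝ (Fin n)))
    (e0 : EuclideanSpace ℝ (Fin n)) : ℝ → ℝ := fun r => ∫ y, pk2 n (r • e0) e0 y ∂σ

lemma poisson_one (hn : 2 ≤ n) (σ : Measure (EuclideanSpace ℝ (Fin n))) [IsProbabilityMeasure σ]
    (hsupp : ∀ᵐ y ∂σ, ‖y‖ = 1)
    (hinv : ∀ R : EuclideanSpace ℝ (Fin n) ≃ₗᵢ[ℝ] EuclideanSpace ℝ (Fin n),
      Measure.map (⇑R) σ = σ)
    (x : EuclideanSpace ℝ (Fin n)) (hx : ‖x‖ < 1) :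
    ∫ y, pk n x y ∂σ = 1 := by
  set i0 : Fin n := ⟨0, by omega⟩ with hi0def
  set e0 : EuclideanSpace ℝ (Fin n) := EuclideanSpace.single i0 (1:ℝ) with he0def
  have he0 : ‖e0‖ = 1 := by rw [he0def]; simp
  have hDUI0 : ∀ r : ℝ, |r| < 1 →
      (HasDerivAt (gfun n σ e0) (g1fun n σ e0 r) r ∧
        HasDerivAt (g1fun n σ e0) (g2fun n σ e0 r) r) := by
    intro r hr
    have H := DUI σ hsupp 0 e0 he0 r
      (by rw [zero_add, norm_smul, he0, mul_one, Real.norm_eq_abs]; exact hr)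
    simp only [zero_add] at H
    exact ⟨H.1.2, H.2.2⟩
  -- The radial ODE coming from harmonicity
  have hODE : ∀ r : ℝ, 0 < r → r < 1 →
      g2fun n σ e0 r = -(((n:ℝ) - 1) * (g1fun n σ e0 r / r)) := by
    intro r hr0 hr1
    have habs : |r| < 1 := by rw [abs_of_pos hr0]; exact hr1
    have hbase : ∀ i : Fin n, ‖r • e0 + (0:ℝ) • (EuclideanSpace.single i (1:ℝ))‖ < 1 := by
      intro i
      rw [zero_smul, add_zero, norm_smul, he0, mul_one, Real.norm_eq_abs]
      exact habs
    have hVint : ∀ i : Fin n,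
        Integrable (fun y => pk2 n (r • e0) (EuclideanSpace.single i (1:ℝ)) y) σ := by
      intro i
      have := (DUI σ hsupp (r • e0) (EuclideanSpace.single i (1:ℝ)) (by simp) 0 (hbase i)).2.1
      simpa [zero_smul, add_zero] using this
    have hsum : (∑ i : Fin n, ∫ y, pk2 n (r • e0) (EuclideanSpace.single i (1:ℝ)) y ∂σ) = 0 := by
      rw [← integral_finset_sum Finset.univ (fun i _ => hVint i)]
      rw [integral_congr_ae (g := fun _ => (0:ℝ)), integral_zero]
      filter_upwards [hsupp] with y hy
      refine Block2.lap _ y hy ?_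
      intro heq
      have h2 : ‖r • e0‖ = 1 := by rw [heq, hy]
      rw [norm_smul, he0, mul_one, Real.norm_eq_abs, abs_of_pos hr0] at h2
      exact absurd h2 (ne_of_lt hr1)
    -- the off-axis second derivatives
    have hVne : ∀ i : Fin n, i ≠ i0 →
        (∫ y, pk2 n (r • e0) (EuclideanSpace.single i (1:ℝ)) y ∂σ) = g1fun n σ e0 r / r := by
      intro i hi
      have hei : ‖(EuclideanSpace.single i (1:ℝ) : EuclideanSpace ℝ (Fin n))‖ = 1 := by simp
      have hortho : ⟪e0, (EuclideanSpace.single i (1:ℝ) : EuclideanSpace ℝ (Fin n))⟫ = 0 := by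
        rw [he0def, EuclideanSpace.inner_single_left]
        simp [EuclideanSpace.single_apply, Ne.symm hi]
      have hnrm : ∀ t : ℝ, ‖r • e0 + t • (EuclideanSpace.single i (1:ℝ) :
          EuclideanSpace ℝ (Fin n))‖ = Real.sqrt (r^2 + t^2) := by
        intro t
        have h2 : ‖r • e0 + t • (EuclideanSpace.single i (1:ℝ) :
            EuclideanSpace ℝ (Fin n))‖^2 = r^2 + t^2 := by
          rw [norm_add_sq_real, real_inner_smul_left, real_inner_smul_right, hortho,
            norm_smul, norm_smul, he0, hei]
          simp [Real.norm_eq_abs, mul_pow, sq_abs]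
        calc ‖r • e0 + t • (EuclideanSpace.single i (1:ℝ) : EuclideanSpace ℝ (Fin n))‖
            = Real.sqrt (‖r • e0 + t • (EuclideanSpace.single i (1:ℝ) :
                EuclideanSpace ℝ (Fin n))‖^2) := (Real.sqrt_sq (norm_nonneg _)).symm
          _ = Real.sqrt (r^2 + t^2) := by rw [h2]
      set S : Set ℝ := {t : ℝ | r^2 + t^2 < 1} with hSdef
      have hSopen : IsOpen S := isOpen_lt (by continuity) continuous_const
      have h0S : (0:ℝ) ∈ S := by
        simp only [hSdef, Set.mem_setOf_eq]
        nlinarith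
      set ρ : ℝ → ℝ := fun t => Real.sqrt (r^2 + t^2) with hρdef
      have hρpos : ∀ t, 0 < ρ t := fun t => Real.sqrt_pos.2 (by positivity)
      have hρ0 : ρ 0 = r := by
        rw [hρdef]
        simp only []
        rw [show r^2 + (0:ℝ)^2 = r^2 by ring]
        exact Real.sqrt_sq hr0.le
      have hρlt1 : ∀ t ∈ S, ρ t < 1 := by
        intro t ht
        rw [hρdef, show (1:ℝ) = Real.sqrt 1 by rw [Real.sqrt_one]]
        exact Real.sqrt_lt_sqrt (by positivity) (by simpa [hSdef] using ht)
      have hρd : ∀ t : ℝ, HasDerivAt ρ (t / ρ t) t := by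
        intro t
        have hq : HasDerivAt (fun s : ℝ => r^2 + s^2) (2*t) t := by
          simpa using (hasDerivAt_pow 2 t).const_add (r^2)
        have h5 := (Real.hasDerivAt_sqrt (by positivity : r^2+t^2 ≠ 0)).comp t hq
        have hne0 : Real.sqrt (r^2+t^2) ≠ 0 := ne_of_gt (hρpos t)
        refine h5.congr_deriv (Eq.symm ?_)
        rw [hρdef]
        field_simp
      have hKW : ∀ t ∈ S, HasDerivAt
          (fun t' => ∫ y, pk n (r • e0 + t' • (EuclideanSpace.single i (1:ℝ))) y ∂σ)
          (∫ y, pk1 n (r • e0 + t • (EuclideanSpace.single i (1:ℝ)))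
            (EuclideanSpace.single i (1:ℝ)) y ∂σ) t := by
        intro t ht
        exact (DUI σ hsupp (r • e0) (EuclideanSpace.single i (1:ℝ)) hei t
          (by rw [hnrm t]; exact hρlt1 t ht)).1.2
      have hWd : HasDerivAt
          (fun t : ℝ => ∫ y, pk1 n (r • e0 + t • (EuclideanSpace.single i (1:ℝ)))
            (EuclideanSpace.single i (1:ℝ)) y ∂σ)
          (∫ y, pk2 n (r • e0) (EuclideanSpace.single i (1:ℝ)) y ∂σ) 0 := by
        have := (DUI σ hsupp (r • e0) (EuclideanSpace.single i (1:ℝ)) hei 0 (hbase i)).2.2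
        simpa [zero_smul, add_zero] using this
      have hKg : ∀ t ∈ S, (∫ y, pk n (r • e0 + t • (EuclideanSpace.single i (1:ℝ))) y ∂σ)
          = gfun n σ e0 (ρ t) := by
        intro t ht
        refine radial σ hsupp hinv _ _ ?_ ?_
        · rw [hnrm t, norm_smul, he0, mul_one, Real.norm_eq_abs, abs_of_pos (hρpos t)]
        · rw [norm_smul, he0, mul_one, Real.norm_eq_abs, abs_of_pos (hρpos t)]
          exact hρlt1 t ht
      have hcomp : ∀ t ∈ S, HasDerivAt (fun t' => gfun n σ e0 (ρ t'))
          (g1fun n σ e0 (ρ t) * (t / ρ t)) t := by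
        intro t ht
        exact ((hDUI0 (ρ t) (by rw [abs_of_pos (hρpos t)]; exact hρlt1 t ht)).1).comp t (hρd t)
      have hKd2 : ∀ t ∈ S, HasDerivAt
          (fun t' => ∫ y, pk n (r • e0 + t' • (EuclideanSpace.single i (1:ℝ))) y ∂σ)
          (g1fun n σ e0 (ρ t) * (t / ρ t)) t := by
        intro t ht
        have hEq : (fun t' => ∫ y, pk n (r • e0 + t' • (EuclideanSpace.single i (1:ℝ))) y ∂σ)
            =ᶠ[𝓝 t] (fun t' => gfun n σ e0 (ρ t')) :=
          eventually_of_mem (hSopen.mem_nhds ht) (fun t' ht' => hKg t' ht')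
        exact (hcomp t ht).congr_of_eventuallyEq hEq
      have hWeq : ∀ t ∈ S, (∫ y, pk1 n (r • e0 + t • (EuclideanSpace.single i (1:ℝ)))
          (EuclideanSpace.single i (1:ℝ)) y ∂σ) = g1fun n σ e0 (ρ t) * (t / ρ t) := by
        intro t ht
        exact HasDerivAt.unique (hKW t ht) (hKd2 t ht)
      have hW0 : (∫ y, pk1 n (r • e0 + (0:ℝ) • (EuclideanSpace.single i (1:ℝ)))
          (EuclideanSpace.single i (1:ℝ)) y ∂σ) = 0 := by
        rw [hWeq 0 h0S]
        simp
      have hslope := hasDerivAt_iff_tendsto_slope.1 hWd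
      have hρcont : Tendsto ρ (𝓝 0) (𝓝 r) := by
        rw [← hρ0]
        exact ((Real.continuous_sqrt.comp (by continuity)).tendsto 0)
      have hG1cont : ContinuousAt (g1fun n σ e0) r := ((hDUI0 r habs).2).continuousAt
      have ht2 : Tendsto (fun t => g1fun n σ e0 (ρ t) / ρ t) (𝓝 (0:ℝ))
          (𝓝 (g1fun n σ e0 r / r)) :=
        (hG1cont.tendsto.comp hρcont).div hρcont (ne_of_gt hr0)
      have hcongr : (slope (fun t => ∫ y, pk1 n (r • e0 + t • (EuclideanSpace.single i (1:ℝ)))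
            (EuclideanSpace.single i (1:ℝ)) y ∂σ) 0)
          =ᶠ[𝓝[≠] (0:ℝ)] (fun t => g1fun n σ e0 (ρ t) / ρ t) := by
        filter_upwards [mem_nhdsWithin_of_mem_nhds (hSopen.mem_nhds h0S),
          self_mem_nhdsWithin] with t htS htne
        have htne' : t ≠ 0 := htne
        rw [slope_def_field, hWeq t htS, hW0]
        have hρne : ρ t ≠ 0 := ne_of_gt (hρpos t)
        field_simp
        ring
      have hB2 : Tendsto (slope (fun t => ∫ y, pk1 n (r • e0 + t •
            (EuclideanSpace.single i (1:ℝ))) (EuclideanSpace.single i (1:ℝ)) y ∂σ) 0)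
          (𝓝[≠] (0:ℝ)) (𝓝 (g1fun n σ e0 r / r)) :=
        Tendsto.congr' hcongr.symm (ht2.mono_left nhdsWithin_le_nhds)
      exact tendsto_nhds_unique hslope hB2
    -- split the sum
    have hVi0 : (∫ y, pk2 n (r • e0) (EuclideanSpace.single i0 (1:ℝ)) y ∂σ)
        = g2fun n σ e0 r := by rw [← he0def]; rfl
    have hsplit : (∫ y, pk2 n (r • e0) (EuclideanSpace.single i0 (1:ℝ)) y ∂σ)
        + ∑ i ∈ Finset.univ.erase i0,
            (∫ y, pk2 n (r • e0) (EuclideanSpace.single i (1:ℝ)) y ∂σ)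
        = ∑ i : Fin n, ∫ y, pk2 n (r • e0) (EuclideanSpace.single i (1:ℝ)) y ∂σ :=
      Finset.add_sum_erase Finset.univ
        (fun i => ∫ y, pk2 n (r • e0) (EuclideanSpace.single i (1:ℝ)) y ∂σ)
        (Finset.mem_univ i0)
    have herase : (∑ i ∈ Finset.univ.erase i0,
        (∫ y, pk2 n (r • e0) (EuclideanSpace.single i (1:ℝ)) y ∂σ))
        = ((n:ℝ) - 1) * (g1fun n σ e0 r / r) := by
      rw [Finset.sum_congr rfl (fun i hi => hVne i (Finset.ne_of_mem_erase hi)),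
        Finset.sum_const, Finset.card_erase_of_mem (Finset.mem_univ i0), Finset.card_univ,
        Fintype.card_fin, nsmul_eq_mul]
      congr 1
      rw [Nat.cast_sub (by omega : 1 ≤ n), Nat.cast_one]
    rw [← hsplit, hVi0, herase] at hsum
    linarith
  -- G1 vanishes on (0,1)
  have hG1zero : ∀ b : ℝ, 0 < b → b < 1 → g1fun n σ e0 b = 0 := by
    intro b hb0 hb1
    have hFd : ∀ r : ℝ, 0 < r → r < 1 → HasDerivAt (fun s => s^(n-1) * g1fun n σ e0 s) 0 r := by
      intro r hr0 hr1
      have habs : |r| < 1 := by rw [abs_of_pos hr0]; exact hr1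
      have h2 := (hasDerivAt_pow (n-1) r).mul ((hDUI0 r habs).2)
      refine h2.congr_deriv (Eq.symm ?_)
      rw [hODE r hr0 hr1]
      have hc : ((n-1 : ℕ) : ℝ) = (n:ℝ) - 1 := by
        rw [Nat.cast_sub (by omega : 1 ≤ n), Nat.cast_one]
      have hp : r^(n-1) = r^(n-1-1) * r := by
        rw [← pow_succ]
        congr 1
        omega
      rw [hc, hp]
      have hrne : r ≠ 0 := ne_of_gt hr0
      field_simp
      ring
    have hFconst : ∀ a : ℝ, 0 < a → a ≤ b → b^(n-1) * g1fun n σ e0 b = a^(n-1) * g1fun n σ e0 a := by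
      intro a ha0 hab
      exact const_of_deriv_zero hab
        (fun s hs => hFd s (lt_of_lt_of_le ha0 hs.1) (lt_of_le_of_lt hs.2 hb1))
    have hcont1 : ContinuousAt (g1fun n σ e0) 0 := ((hDUI0 0 (by norm_num)).2).continuousAt
    have hF0 : Tendsto (fun s : ℝ => s^(n-1) * g1fun n σ e0 s) (𝓝[>] (0:ℝ)) (𝓝 0) := by
      have h1 : Tendsto (fun s : ℝ => s^(n-1) * g1fun n σ e0 s) (𝓝 (0:ℝ))
          (𝓝 ((0:ℝ)^(n-1) * g1fun n σ e0 0)) :=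
        ((continuous_pow (n-1)).continuousAt.tendsto).mul hcont1.tendsto
      rw [zero_pow (by omega : n-1 ≠ 0), zero_mul] at h1
      exact h1.mono_left nhdsWithin_le_nhds
    have hFb : Tendsto (fun s : ℝ => s^(n-1) * g1fun n σ e0 s) (𝓝[>] (0:ℝ))
        (𝓝 (b^(n-1) * g1fun n σ e0 b)) := by
      apply Tendsto.congr' ?_ tendsto_const_nhds
      filter_upwards [Ioo_mem_nhdsGT_of_mem (Set.left_mem_Ico.2 hb0)] with a ha
      exact hFconst a ha.1 ha.2.le
    have hFb0 : b^(n-1) * g1fun n σ e0 b = 0 := tendsto_nhds_unique hFb hF0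
    have hbne : b^(n-1) ≠ 0 := pow_ne_zero _ (ne_of_gt hb0)
    exact (mul_eq_zero.1 hFb0).resolve_left hbne
  -- g is constant on [0,1)
  have hgconst : ∀ r : ℝ, 0 ≤ r → r < 1 → gfun n σ e0 r = gfun n σ e0 0 := by
    intro r hr0 hr1
    rcases eq_or_lt_of_le hr0 with heq | hr0'
    · rw [← heq]
    have hgc : ∀ a : ℝ, 0 < a → a ≤ r → gfun n σ e0 r = gfun n σ e0 a := by
      intro a ha0 har
      refine const_of_deriv_zero har (fun s hs => ?_)
      have hs0 : 0 < s := lt_of_lt_of_le ha0 hs.1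
      have hs1 : s < 1 := lt_of_le_of_lt hs.2 hr1
      have h3 := (hDUI0 s (by rw [abs_of_pos hs0]; exact hs1)).1
      rw [hG1zero s hs0 hs1] at h3
      exact h3
    have hcontg : ContinuousAt (gfun n σ e0) 0 := ((hDUI0 0 (by norm_num)).1).continuousAt
    have h1 : Tendsto (gfun n σ e0) (𝓝[>] (0:ℝ)) (𝓝 (gfun n σ e0 0)) :=
      hcontg.tendsto.mono_left nhdsWithin_le_nhds
    have h2 : Tendsto (gfun n σ e0) (𝓝[>] (0:ℝ)) (𝓝 (gfun n σ e0 r)) := by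
      apply Tendsto.congr' ?_ tendsto_const_nhds
      filter_upwards [Ioo_mem_nhdsGT_of_mem (Set.left_mem_Ico.2 hr0')] with a ha
      exact hgc a ha.1 ha.2.le
    exact tendsto_nhds_unique h2 h1
  have hg0 : gfun n σ e0 0 = 1 := by
    show (∫ y, pk n ((0:ℝ) • e0) y ∂σ) = 1
    rw [zero_smul]
    rw [integral_congr_ae (g := fun _ => (1:ℝ))]
    · simp
    · filter_upwards [hsupp] with y hy
      show pk n 0 y = 1
      rw [pk, norm_zero, zero_sub, norm_neg, hy]
      norm_num
  have hxg : ∫ y, pk n x y ∂σ = gfun n σ e0 ‖x‖ := by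
    refine radial σ hsupp hinv x (‖x‖ • e0) ?_ ?_
    · rw [norm_smul, he0, mul_one, Real.norm_eq_abs, abs_of_nonneg (norm_nonneg x)]
    · rw [norm_smul, he0, mul_one, Real.norm_eq_abs, abs_of_nonneg (norm_nonneg x)]
      exact hx
  rw [hxg, hgconst ‖x‖ (norm_nonneg x) hx, hg0]

end Block5

open Stmt14Aux Block2 Block3 Block4 Block5

/-- Convergence of the harmonic (Poisson kernel) measures of the unit ball towards the Dirac
mass at a boundary point: if `x_k → a` with `‖x_k‖ < 1` and `‖a‖ = 1`, then for every
continuous `φ` on the sphere, `∫ φ(y) (1 − ‖x_k‖²)/‖x_k − y‖ⁿ dσ(y) → φ(a)`. -/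
theorem stmt_14 (n : ℕ) (hn : 2 ≤ n)
    (σ : Measure (EuclideanSpace ℝ (Fin n))) [IsProbabilityMeasure σ]
    (hsupp : ∀ᵐ y ∂σ, ‖y‖ = 1)
    (hinv : ∀ R : EuclideanSpace ℝ (Fin n) ≃ₗᵢ[ℝ] EuclideanSpace ℝ (Fin n),
      Measure.map (⇑R) σ = σ)
    (x : ℕ → EuclideanSpace ℝ (Fin n)) (hx : ∀ k, ‖x k‖ < 1)
    (a : EuclideanSpace ℝ (Fin n)) (ha : ‖a‖ = 1)
    (hxa : Tendsto x atTop (𝓝 a))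
    (φ : EuclideanSpace ℝ (Fin n) → ℝ)
    (hφ : ContinuousOn φ (Metric.sphere (0 : EuclideanSpace ℝ (Fin n)) 1)) :
    Tendsto (fun k => ∫ y, φ y * ((1 - ‖x k‖ ^ 2) / ‖x k - y‖ ^ n) ∂σ) atTop (𝓝 (φ a)) := by
  have haS : a ∈ sphere (0 : EuclideanSpace ℝ (Fin n)) 1 := mem_sphere_zero_iff_norm.2 ha
  have hφm : AEStronglyMeasurable φ σ := aesm σ hsupp hφ
  obtain ⟨M, hM⟩ := (isCompact_sphere (0 : EuclideanSpace ℝ (Fin n)) 1).exists_bound_of_continuousOn hφ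
  have hM0 : 0 ≤ M := le_trans (norm_nonneg (φ a)) (hM a haS)
  have hcontp : ∀ z : EuclideanSpace ℝ (Fin n), ‖z‖ < 1 →
      ContinuousOn (fun y => pk n z y) (sphere (0 : EuclideanSpace ℝ (Fin n)) 1) := by
    intro z hz
    have := contOn_sphere_of_pair (c := z) (v := (0 : EuclideanSpace ℝ (Fin n)))
      (contOn_pair_pk z 0) 0 (by simpa using hz)
    simpa using this
  have hPint : ∀ k, Integrable (fun y => pk n (x k) y) σ :=
    fun k => pk_integrable σ hsupp (x k) (hx k)
  have hone : ∀ k, ∫ y, pk n (x k) y ∂σ = 1 :=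
    fun k => poisson_one hn σ hsupp hinv (x k) (hx k)
  have hφPint : ∀ k, Integrable (fun y => φ y * pk n (x k) y) σ := by
    intro k
    refine Integrable.bdd_mul (c := M) (hPint k) hφm ?_
    filter_upwards [hsupp] with y hy
    exact hM y (mem_sphere_zero_iff_norm.2 hy)
  have heq : ∀ k, (∫ y, φ y * ((1 - ‖x k‖ ^ 2) / ‖x k - y‖ ^ n) ∂σ)
      = ∫ y, φ y * pk n (x k) y ∂σ := by
    intro k
    refine integral_congr_ae ?_
    filter_upwards [hsupp] with y hy
    have hxy : x k ≠ y := by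
      intro h
      have := hx k
      rw [h, hy] at this
      exact lt_irrefl 1 this
    have hnorm : (0:ℝ) < ‖x k - y‖ := norm_sub_pos_iff.2 hxy
    congr 1
    rw [pk, div_eq_mul_inv]
    congr 1
    rw [← Real.rpow_natCast (‖x k - y‖) 2, ← Real.rpow_mul (norm_nonneg _)]
    rw [show ((2:ℕ):ℝ) * (-(n:ℝ)/2) = -(n:ℝ) by push_cast; ring]
    rw [Real.rpow_neg (norm_nonneg _), Real.rpow_natCast]
  have key : Tendsto (fun k => ∫ y, φ y * pk n (x k) y ∂σ) atTop (𝓝 (φ a)) := by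
    refine Metric.tendsto_nhds.2 (fun ε hε => ?_)
    obtain ⟨δ, hδ0, hδ⟩ := Metric.continuousWithinAt_iff.1 (hφ a haS) (ε/4) (by linarith)
    have hx1 : Tendsto (fun k => ‖x k‖) atTop (𝓝 1) := by
      have := (continuous_norm.tendsto a).comp hxa
      rwa [ha] at this
    have hterm : Tendsto (fun k => (2*M+1) * ((1 - ‖x k‖^2) *
        (((δ/2)^2 : ℝ) ^ (-(n:ℝ)/2)))) atTop (𝓝 0) := by
      have h2 : Tendsto (fun k => 1 - ‖x k‖^2) atTop (𝓝 0) := by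
        have := (tendsto_const_nhds (x := (1:ℝ)) (f := atTop)).sub ((hx1.pow 2))
        simpa using this
      have := (h2.mul_const (((δ/2)^2 : ℝ) ^ (-(n:ℝ)/2))).const_mul (2*M+1)
      simpa using this
    have hev2 : ∀ᶠ k in atTop, (2*M+1) * ((1 - ‖x k‖^2) *
        (((δ/2)^2 : ℝ) ^ (-(n:ℝ)/2))) < ε/2 := hterm.eventually_lt_const (by linarith)
    have hev1 : ∀ᶠ k in atTop, dist (x k) a < δ/2 := by
      have := hxa (Metric.ball_mem_nhds a (by positivity : (0:ℝ) < δ/2))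
      filter_upwards [this] with k hk
      exact Metric.mem_ball.1 hk
    filter_upwards [hev1, hev2] with k hk1 hk2
    have hIone := hone k
    have hsplitfun : (fun y => (φ y - φ a) * pk n (x k) y)
        = fun y => φ y * pk n (x k) y - φ a * pk n (x k) y := by
      ext y; ring
    have hsub : (∫ y, φ y * pk n (x k) y ∂σ) - φ a
        = ∫ y, (φ y - φ a) * pk n (x k) y ∂σ := by
      have h3 : ∫ y, (φ y - φ a) * pk n (x k) y ∂σ
          = (∫ y, φ y * pk n (x k) y ∂σ) - ∫ y, (φ a) * pk n (x k) y ∂σ := by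
        rw [hsplitfun, integral_sub (hφPint k) ((hPint k).const_mul (φ a))]
      rw [h3, integral_const_mul, hIone, mul_one]
    rw [Real.dist_eq, hsub]
    have hintabs : |∫ y, (φ y - φ a) * pk n (x k) y ∂σ|
        ≤ ∫ y, |(φ y - φ a) * pk n (x k) y| ∂σ := by
      have h0 := norm_integral_le_integral_norm (μ := σ) (fun y => (φ y - φ a) * pk n (x k) y)
      simpa only [Real.norm_eq_abs] using h0
    have habs_int : Integrable (fun y => |(φ y - φ a) * pk n (x k) y|) σ := by
      have h1 : Integrable (fun y => φ y * pk n (x k) y - φ a * pk n (x k) y) σ :=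
        (hφPint k).sub ((hPint k).const_mul (φ a))
      have h2 : Integrable (fun y => (φ y - φ a) * pk n (x k) y) σ := by
        apply h1.congr
        filter_upwards with y
        ring
      exact h2.abs
    have hbound_int : Integrable (fun y => (ε/4) * pk n (x k) y
        + (2*M+1) * ((1-‖x k‖^2) * (((δ/2)^2 : ℝ) ^ (-(n:ℝ)/2)))) σ :=
      ((hPint k).const_mul (ε/4)).add (integrable_const _)
    have hA1 : (0:ℝ) ≤ 1 - ‖x k‖^2 := by nlinarith [hx k, norm_nonneg (x k)]
    have hsec : 0 ≤ (2*M+1) * ((1-‖x k‖^2) * (((δ/2)^2:ℝ) ^ (-(n:ℝ)/2))) :=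
      mul_nonneg (by linarith) (mul_nonneg hA1 (Real.rpow_nonneg (by positivity) _))
    have hptwise : ∀ᵐ y ∂σ, |(φ y - φ a) * pk n (x k) y|
        ≤ (ε/4) * pk n (x k) y
          + (2*M+1) * ((1-‖x k‖^2) * (((δ/2)^2 : ℝ) ^ (-(n:ℝ)/2))) := by
      filter_upwards [hsupp] with y hy
      have hyS : y ∈ sphere (0 : EuclideanSpace ℝ (Fin n)) 1 := mem_sphere_zero_iff_norm.2 hy
      have hpk0 : 0 ≤ pk n (x k) y :=
        mul_nonneg hA1 (Real.rpow_nonneg (by positivity) _)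
      rw [abs_mul, abs_of_nonneg hpk0]
      rcases lt_or_ge (dist y a) δ with hclose | hfar
      · have h4 := hδ hyS hclose
        rw [Real.dist_eq] at h4
        have h5 : |φ y - φ a| * pk n (x k) y ≤ (ε/4) * pk n (x k) y :=
          mul_le_mul_of_nonneg_right h4.le hpk0
        linarith
      · have h5 : δ/2 ≤ ‖x k - y‖ := by
          have h6 : dist y a ≤ dist y (x k) + dist (x k) a := dist_triangle _ _ _
          have h7 : δ/2 ≤ dist y (x k) := by linarith
          calc δ/2 ≤ dist y (x k) := h7
            _ = ‖x k - y‖ := by rw [dist_eq_norm, norm_sub_rev]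
        have hB : ((δ/2)^2 : ℝ) ≤ ‖x k - y‖^2 := by nlinarith
        have hrp : (‖x k - y‖^2 : ℝ) ^ (-(n:ℝ)/2) ≤ ((δ/2)^2 : ℝ) ^ (-(n:ℝ)/2) := by
          refine Real.rpow_le_rpow_of_nonpos (by positivity) hB ?_
          have : (0:ℝ) ≤ (n:ℝ) := Nat.cast_nonneg n
          linarith
        have hpkle : pk n (x k) y ≤ (1-‖x k‖^2) * (((δ/2)^2:ℝ) ^ (-(n:ℝ)/2)) := by
          rw [pk]
          exact mul_le_mul_of_nonneg_left hrp hA1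
        have hphi : |φ y - φ a| ≤ 2*M+1 := by
          have h7 := hM y hyS
          have h8 := hM a haS
          rw [Real.norm_eq_abs] at h7 h8
          have h9 : |φ y - φ a| ≤ |φ y| + |φ a| := by
            have := norm_sub_le (φ y) (φ a)
            simpa [Real.norm_eq_abs] using this
          linarith
        have h10 : |φ y - φ a| * pk n (x k) y
            ≤ (2*M+1) * ((1-‖x k‖^2) * (((δ/2)^2:ℝ) ^ (-(n:ℝ)/2))) :=
          mul_le_mul hphi hpkle hpk0 (by linarith)
        have h11 : 0 ≤ (ε/4) * pk n (x k) y := mul_nonneg (by linarith) hpk0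
        linarith
    have hle := integral_mono_ae habs_int hbound_int hptwise
    have hrhs : (∫ y, ((ε/4) * pk n (x k) y
        + (2*M+1) * ((1-‖x k‖^2) * (((δ/2)^2 : ℝ) ^ (-(n:ℝ)/2)))) ∂σ)
        = (ε/4) + (2*M+1) * ((1-‖x k‖^2) * (((δ/2)^2 : ℝ) ^ (-(n:ℝ)/2))) := by
      rw [integral_add ((hPint k).const_mul (ε/4)) (integrable_const _),
        integral_const_mul, hIone, mul_one, integral_const]
      simp [measure_univ]
    have hfinal := hintabs.trans (hle.trans_eq hrhs)
    calc |∫ y, (φ y - φ a) * pk n (x k) y ∂σ|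
        ≤ (ε/4) + (2*M+1) * ((1-‖x k‖^2) * (((δ/2)^2 : ℝ) ^ (-(n:ℝ)/2))) := hfinal
      _ < ε/4 + ε/2 := by linarith
      _ < ε := by linarith
  exact key.congr (fun k => (heq k).symm)
end

section
/- Let n ≥ 2, let σ denote the uniform probability measure on the unit sphere S^{n−1} ⊂ ℝⁿ, and let a ∈ S^{n−1}. Then ∫_{S^{n−1}} min(1, ‖a − y‖²) · ‖a − y‖^{−n} dσ(y) < ∞; that is, the measure ‖a − y‖^{−n} σ(dy) on S^{n−1} integrates min(1, ‖a − y‖²) and is therefore a Levy measure on the sphere. -/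
open MeasureTheory Metric Set
open scoped ENNReal

/-- Rotation invariance implies all spherical caps of a given radius have the same measure. -/
private lemma sphere_cap_eq {n : ℕ} (σ : Measure (EuclideanSpace ℝ (Fin n)))
    (hinv : ∀ R : EuclideanSpace ℝ (Fin n) ≃ₗᵢ[ℝ] EuclideanSpace ℝ (Fin n),
      Measure.map (⇑R) σ = σ)
    {a x : EuclideanSpace ℝ (Fin n)} (ha : ‖a‖ = 1) (hx : ‖x‖ = 1) (ε : ℝ) :
    σ (closedBall x ε) = σ (closedBall a ε) := by
  set R := Submodule.reflection (ℝ ∙ (a - x))ᗮ with hRdef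
  have hRa : R a = x := Submodule.reflection_sub (by rw [ha, hx])
  have hpre : ⇑R ⁻¹' closedBall x ε = closedBall a ε := by
    ext z
    simp only [mem_preimage, mem_closedBall]
    rw [← hRa, R.dist_map]
  calc σ (closedBall x ε) = Measure.map (⇑R) σ (closedBall x ε) := by rw [hinv R]
    _ = σ (⇑R ⁻¹' closedBall x ε) :=
        Measure.map_apply R.continuous.measurable measurableSet_closedBall
    _ = σ (closedBall a ε) := by rw [hpre]

/-- Quantitative bound on the measure of a spherical cap for a rotation-invariant
probability measure on the sphere. -/
private lemma sphere_cap_bound {n : ℕ} (hn : 2 ≤ n)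
    (σ : Measure (EuclideanSpace ℝ (Fin n))) [IsProbabilityMeasure σ]
    (hinv : ∀ R : EuclideanSpace ℝ (Fin n) ≃ₗᵢ[ℝ] EuclideanSpace ℝ (Fin n),
      Measure.map (⇑R) σ = σ)
    {a : EuclideanSpace ℝ (Fin n)} (ha : ‖a‖ = 1) {ε : ℝ} (hε : 0 < ε) :
    σ (closedBall a ε) ≤ ENNReal.ofReal ((5 * ε) ^ n / ε) := by
  classical
  obtain ⟨u, hu_sub, hdisj, hcov⟩ :=
    Vitali.exists_disjoint_subfamily_covering_enlargement_closedBall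
      (sphere (0 : EuclideanSpace ℝ (Fin n)) 1) id (fun _ => ε) ε (fun _ _ => le_rfl) 4
      (by norm_num)
  have hσ_top : σ (closedBall a ε) ≠ ⊤ := measure_ne_top σ _
  -- Any finite collection of the disjoint caps has total measure at most 1.
  have key : ∀ s : Finset (EuclideanSpace ℝ (Fin n)), ↑s ⊆ u →
      (s.card : ℝ≥0∞) * σ (closedBall a ε) ≤ 1 := by
    intro s hs
    have hsum : σ (⋃ y ∈ s, closedBall (id y) ε) = ∑ y ∈ s, σ (closedBall (id y) ε) :=
      measure_biUnion_finset (hdisj.subset hs) (fun _ _ => measurableSet_closedBall)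
    have heq : ∀ y ∈ s, σ (closedBall (id y) ε) = σ (closedBall a ε) := by
      intro y hy
      exact sphere_cap_eq σ hinv ha
        (by simpa [mem_sphere_zero_iff_norm] using hu_sub (hs hy)) ε
    calc (s.card : ℝ≥0∞) * σ (closedBall a ε)
        = ∑ y ∈ s, σ (closedBall (id y) ε) := by
          rw [Finset.sum_congr rfl heq, Finset.sum_const, nsmul_eq_mul]
      _ = σ (⋃ y ∈ s, closedBall (id y) ε) := hsum.symm
      _ ≤ σ univ := measure_mono (subset_univ _)
      _ = 1 := measure_univ
  by_cases hfin : u.Finite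
  · -- The finite case: count the caps via a volume argument.
    set s : Finset (EuclideanSpace ℝ (Fin n)) := hfin.toFinset with hs_def
    have hs_sub : ↑s ⊆ u := by rw [hs_def, Set.Finite.coe_toFinset]
    -- The annulus is covered by the 5-fold enlarged caps.
    have hcover : closedBall (0 : EuclideanSpace ℝ (Fin n)) (1 + ε) \ ball 0 1 ⊆
        ⋃ y ∈ s, closedBall y (5 * ε) := by
      rintro z ⟨hz1, hz2⟩
      have hz_ge : 1 ≤ ‖z‖ := by
        by_contra h
        exact hz2 (by simpa [mem_ball, dist_zero_right] using lt_of_not_ge h)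
      have hz_le : ‖z‖ ≤ 1 + ε := by simpa [mem_closedBall, dist_zero_right] using hz1
      have hz0 : (0:ℝ) < ‖z‖ := by linarith
      set p := ‖z‖⁻¹ • z with hp_def
      have hp : ‖p‖ = 1 := by
        rw [hp_def, norm_smul, norm_inv, norm_norm, inv_mul_cancel₀ hz0.ne']
      have hinv_le_one : ‖z‖⁻¹ ≤ 1 := by
        rw [inv_le_one_iff₀]; right; exact hz_ge
      have hdzp : dist z p ≤ ε := by
        have hzp : z - p = (1 - ‖z‖⁻¹) • z := by
          rw [hp_def, sub_smul, one_smul]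
        have hkey : (1 - ‖z‖⁻¹) * ‖z‖ = ‖z‖ - 1 := by field_simp
        rw [dist_eq_norm, hzp, norm_smul, Real.norm_eq_abs,
          abs_of_nonneg (by linarith), hkey]
        linarith
      obtain ⟨b, hb_u, hb⟩ := hcov p (by simpa [mem_sphere_zero_iff_norm] using hp)
      have hpb : dist p b ≤ 4 * ε := by
        have := hb (mem_closedBall_self hε.le)
        simpa [mem_closedBall] using this
      have hzb : dist z b ≤ 5 * ε := by
        calc dist z b ≤ dist z p + dist p b := dist_triangle _ _ _
          _ ≤ ε + 4 * ε := add_le_add hdzp hpb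
          _ = 5 * ε := by ring
      have hb_s : b ∈ s := by rw [hs_def, Set.Finite.mem_toFinset]; exact hb_u
      exact Set.mem_biUnion hb_s (mem_closedBall.2 hzb)
    -- Volume computations.
    set V1 : ℝ≥0∞ := volume (ball (0 : EuclideanSpace ℝ (Fin n)) 1) with hV1_def
    have hV1pos : V1 ≠ 0 := (measure_ball_pos _ _ one_pos).ne'
    have hV1top : V1 ≠ ⊤ := measure_ball_lt_top.ne
    have hrank : Module.finrank ℝ (EuclideanSpace ℝ (Fin n)) = n := finrank_euclideanSpace_fin
    have hBig : volume (closedBall (0 : EuclideanSpace ℝ (Fin n)) (1 + ε)) =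
        ENNReal.ofReal ((1 + ε) ^ n) * V1 := by
      rw [Measure.addHaar_closedBall _ _ (by positivity), hrank]
    have hann : volume (closedBall (0 : EuclideanSpace ℝ (Fin n)) (1 + ε) \ ball 0 1) =
        ENNReal.ofReal ((1 + ε) ^ n) * V1 - V1 := by
      rw [measure_diff (ball_subset_closedBall.trans
          (closedBall_subset_closedBall (by linarith)))
          measurableSet_ball.nullMeasurableSet hV1top, hBig]
    have hlow : ENNReal.ofReal ε * V1 ≤
        volume (closedBall (0 : EuclideanSpace ℝ (Fin n)) (1 + ε) \ ball 0 1) := by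
      rw [hann]
      apply ENNReal.le_sub_of_add_le_right hV1top
      have h1 : ENNReal.ofReal ε * V1 + V1 = ENNReal.ofReal (1 + ε) * V1 := by
        rw [ENNReal.ofReal_add (by norm_num) hε.le, ENNReal.ofReal_one, add_mul, one_mul,
          add_comm]
      rw [h1]
      exact mul_le_mul_left
        (ENNReal.ofReal_le_ofReal (le_self_pow₀ (by linarith) (by omega))) V1
    have hup : volume (closedBall (0 : EuclideanSpace ℝ (Fin n)) (1 + ε) \ ball 0 1) ≤
        (s.card : ℝ≥0∞) * ENNReal.ofReal ((5 * ε) ^ n) * V1 := by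
      calc volume (closedBall (0 : EuclideanSpace ℝ (Fin n)) (1 + ε) \ ball 0 1)
          ≤ volume (⋃ y ∈ s, closedBall y (5 * ε)) := measure_mono hcover
        _ ≤ ∑ y ∈ s, volume (closedBall y (5 * ε)) := measure_biUnion_finset_le _ _
        _ = (s.card : ℝ≥0∞) * ENNReal.ofReal ((5 * ε) ^ n) * V1 := by
            have : ∀ y ∈ s, volume (closedBall y (5 * ε)) =
                ENNReal.ofReal ((5 * ε) ^ n) * V1 := by
              intro y _
              rw [Measure.addHaar_closedBall _ _ (by positivity), hrank]
            rw [Finset.sum_congr rfl this, Finset.sum_const, nsmul_eq_mul, mul_assoc]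
    have hcard : ENNReal.ofReal ε ≤ (s.card : ℝ≥0∞) * ENNReal.ofReal ((5 * ε) ^ n) := by
      have := hlow.trans hup
      exact (ENNReal.mul_le_mul_iff_left hV1pos hV1top).1 this
    have hcardR : ε ≤ (s.card : ℝ) * (5 * ε) ^ n := by
      rw [← ENNReal.ofReal_natCast, ← ENNReal.ofReal_mul (Nat.cast_nonneg _)] at hcard
      exact (ENNReal.ofReal_le_ofReal_iff (by positivity)).1 hcard
    have h5 : (0:ℝ) < (5 * ε) ^ n := by positivity
    have hdiv : ε / (5 * ε) ^ n ≤ (s.card : ℝ) := by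
      rw [div_le_iff₀ h5]; linarith
    -- From the disjointness bound: σ(cap) ≤ 1 / card.
    have hle_inv : σ (closedBall a ε) ≤ ((s.card : ℝ≥0∞))⁻¹ := by
      rw [ENNReal.le_inv_iff_mul_le, mul_comm]
      exact key s hs_sub
    have hofReal_le : ENNReal.ofReal (ε / (5 * ε) ^ n) ≤ (s.card : ℝ≥0∞) := by
      rw [← ENNReal.ofReal_natCast]
      exact ENNReal.ofReal_le_ofReal hdiv
    calc σ (closedBall a ε) ≤ ((s.card : ℝ≥0∞))⁻¹ := hle_inv
      _ ≤ (ENNReal.ofReal (ε / (5 * ε) ^ n))⁻¹ := ENNReal.inv_le_inv.2 hofReal_le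
      _ = ENNReal.ofReal ((ε / (5 * ε) ^ n)⁻¹) :=
          (ENNReal.ofReal_inv_of_pos (by positivity)).symm
      _ = ENNReal.ofReal ((5 * ε) ^ n / ε) := by rw [inv_div]
  · -- The infinite case: infinitely many disjoint caps force σ(cap) = 0.
    have hzero : σ (closedBall a ε) = 0 := by
      by_contra h0
      obtain ⟨N, hN⟩ := ENNReal.exists_nat_gt (ENNReal.inv_ne_top.2 h0)
      obtain ⟨t, ht_sub, ht_card⟩ := Set.Infinite.exists_subset_card_eq hfin N
      have h1 : (1:ℝ≥0∞) < (N : ℝ≥0∞) * σ (closedBall a ε) := by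
        have := ENNReal.mul_lt_mul_left h0 hσ_top hN
        rwa [ENNReal.inv_mul_cancel h0 hσ_top] at this
      have h2 := key t ht_sub
      rw [ht_card] at h2
      exact absurd h2 (not_le.2 h1)
    rw [hzero]
    exact zero_le

/-- The kernel `‖a − y‖^{−n} σ(dy)` on the unit sphere integrates `min(1, ‖a−y‖²)`,
i.e. it is a Levy measure on the sphere. -/
theorem stmt_15 (n : ℕ) (hn : 2 ≤ n)
    (σ : Measure (EuclideanSpace ℝ (Fin n))) [IsProbabilityMeasure σ]
    (hsupp : ∀ᵐ y ∂σ, ‖y‖ = 1)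
    (hinv : ∀ R : EuclideanSpace ℝ (Fin n) ≃ₗᵢ[ℝ] EuclideanSpace ℝ (Fin n),
      Measure.map (⇑R) σ = σ)
    (a : EuclideanSpace ℝ (Fin n)) (ha : ‖a‖ = 1) :
    ∫⁻ y, ENNReal.ofReal (min 1 (‖a - y‖ ^ 2) * (‖a - y‖ ^ n)⁻¹) ∂σ < ⊤ := by
  classical
  set F : EuclideanSpace ℝ (Fin n) → ℝ≥0∞ :=
    fun y => ENNReal.ofReal (min 1 (‖a - y‖ ^ 2) * (‖a - y‖ ^ n)⁻¹) with hF
  set B : ℕ → Set (EuclideanSpace ℝ (Fin n)) :=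
    fun k => (fun y => ‖a - y‖) ⁻¹' Set.Ioc ((1/2 : ℝ) ^ k) (2 * (1/2 : ℝ) ^ k) with hB
  have hBmeas : ∀ k, MeasurableSet (B k) := fun k =>
    ((continuous_const.sub continuous_id).norm).measurable measurableSet_Ioc
  set S : Set (EuclideanSpace ℝ (Fin n)) := {a} ∪ ⋃ k, B k with hS
  have hae : ∀ᵐ y ∂σ, y ∈ S := by
    filter_upwards [hsupp] with y hy
    rcases eq_or_ne y a with rfl | hne
    · exact Or.inl rfl
    · have hr0 : 0 < ‖a - y‖ := by
        rw [norm_pos_iff]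
        exact sub_ne_zero_of_ne (Ne.symm hne)
      have hr2 : ‖a - y‖ ≤ 2 := by
        calc ‖a - y‖ ≤ ‖a‖ + ‖y‖ := norm_sub_le _ _
          _ = 2 := by rw [ha, hy]; norm_num
      have hP : ∃ k, (1/2 : ℝ) ^ k < ‖a - y‖ :=
        exists_pow_lt_of_lt_one hr0 (by norm_num)
      refine Or.inr (mem_iUnion.2 ⟨Nat.find hP, Nat.find_spec hP, ?_⟩)
      rcases Nat.eq_zero_or_pos (Nat.find hP) with h0 | hpos
      · rw [h0]; simpa using hr2
      · obtain ⟨j, hj⟩ := Nat.exists_eq_succ_of_ne_zero hpos.ne'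
        have := Nat.find_min hP (by omega : j < Nat.find hP)
        push_neg at this
        calc ‖a - y‖ ≤ (1/2 : ℝ) ^ j := this
          _ = 2 * (1/2 : ℝ) ^ (Nat.find hP) := by rw [hj, pow_succ]; ring
  have hrestrict : σ.restrict S = σ := Measure.restrict_eq_self_of_ae_mem hae
  -- the integral over the singleton {a} vanishes
  have hsing : ∫⁻ y in ({a} : Set (EuclideanSpace ℝ (Fin n))), F y ∂σ = 0 := by
    rw [lintegral_singleton]
    have hFa : F a = 0 := by
      have h1 : min 1 (‖a - a‖ ^ 2) * (‖a - a‖ ^ n)⁻¹ = 0 := by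
        rw [sub_self, norm_zero]
        norm_num
      rw [hF]
      simp only [h1, ENNReal.ofReal_zero]
    rw [hFa, zero_mul]
  -- bound for each dyadic piece
  have hterm : ∀ k : ℕ, ∫⁻ y in B k, F y ∂σ ≤
      ENNReal.ofReal (2 * 10 ^ n) * (ENNReal.ofReal (1/2)) ^ k := by
    intro k
    set q : ℝ := (1/2 : ℝ) ^ k with hq
    have hq0 : (0:ℝ) < q := by positivity
    have hbound : ∀ y ∈ B k, F y ≤ ENNReal.ofReal ((2 * q) ^ 2 * (q ^ n)⁻¹) := by
      rintro y ⟨h1, h2⟩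
      apply ENNReal.ofReal_le_ofReal
      have hr0 : 0 < ‖a - y‖ := hq0.trans h1
      have e1 : min 1 (‖a - y‖ ^ 2) ≤ (2 * q) ^ 2 :=
        le_trans (min_le_right _ _) (pow_le_pow_left₀ hr0.le h2 2)
      have e2 : (‖a - y‖ ^ n)⁻¹ ≤ (q ^ n)⁻¹ :=
        inv_anti₀ (by positivity) (pow_le_pow_left₀ hq0.le h1.le n)
      exact mul_le_mul e1 e2 (by positivity) (by positivity)
    have hsubset : B k ⊆ closedBall a (2 * q) := by
      rintro y ⟨h1, h2⟩
      rw [mem_closedBall, dist_comm, dist_eq_norm]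
      exact h2
    calc ∫⁻ y in B k, F y ∂σ
        ≤ ∫⁻ _ in B k, ENNReal.ofReal ((2 * q) ^ 2 * (q ^ n)⁻¹) ∂σ :=
          setLIntegral_mono' (hBmeas k) hbound
      _ = ENNReal.ofReal ((2 * q) ^ 2 * (q ^ n)⁻¹) * σ (B k) := setLIntegral_const _ _
      _ ≤ ENNReal.ofReal ((2 * q) ^ 2 * (q ^ n)⁻¹) *
            ENNReal.ofReal ((5 * (2 * q)) ^ n / (2 * q)) := by
          apply mul_le_mul_right
          exact le_trans (measure_mono hsubset)
            (sphere_cap_bound hn σ hinv ha (by positivity))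
      _ = ENNReal.ofReal ((2 * q) ^ 2 * (q ^ n)⁻¹ * ((5 * (2 * q)) ^ n / (2 * q))) :=
          (ENNReal.ofReal_mul (by positivity)).symm
      _ = ENNReal.ofReal (2 * 10 ^ n * q) := by
          congr 1
          have hqn : (q : ℝ) ^ n ≠ 0 := by positivity
          field_simp
          ring
      _ = ENNReal.ofReal (2 * 10 ^ n) * (ENNReal.ofReal (1/2)) ^ k := by
          rw [ENNReal.ofReal_mul (by positivity), hq, ENNReal.ofReal_pow (by norm_num)]
  calc ∫⁻ y, F y ∂σ = ∫⁻ y in S, F y ∂σ := by rw [hrestrict]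
    _ ≤ (∫⁻ y in ({a} : Set (EuclideanSpace ℝ (Fin n))), F y ∂σ) +
          ∫⁻ y in ⋃ k, B k, F y ∂σ := lintegral_union_le _ _ _
    _ = ∫⁻ y in ⋃ k, B k, F y ∂σ := by rw [hsing, zero_add]
    _ ≤ ∑' k, ∫⁻ y in B k, F y ∂σ := lintegral_iUnion_le _ _
    _ ≤ ∑' k, ENNReal.ofReal (2 * 10 ^ n) * (ENNReal.ofReal (1/2)) ^ k :=
        ENNReal.tsum_le_tsum hterm
    _ = ENNReal.ofReal (2 * 10 ^ n) * ∑' k, (ENNReal.ofReal (1/2)) ^ k :=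
        ENNReal.tsum_mul_left
    _ < ⊤ := by
        have hhalf : ENNReal.ofReal (1/2 : ℝ) = 2⁻¹ := by
          rw [show (1/2 : ℝ) = 2⁻¹ by norm_num, ENNReal.ofReal_inv_of_pos two_pos,
            ENNReal.ofReal_ofNat]
        rw [hhalf, ENNReal.tsum_geometric]
        have : ((1 : ℝ≥0∞) - 2⁻¹)⁻¹ = 2 := by
          rw [ENNReal.one_sub_inv_two, inv_inv]
        rw [this]
        exact ENNReal.mul_lt_top ENNReal.ofReal_lt_top (by norm_num)
end
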